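/- arXiv:1709.02785 — 8 statements merged into one kernel-verified Lean document; each statement's English description precedes it below -/
import Mathlib

section
/- For every matrix ρ ∈ M_d(ℂ), one has the teleportation identity ρ ⊗ Φ = (1/d²) Σ_{j,k,j',k'=0}^{d-1} |φ_{j,k}⟩⟨φ_{j',k'}| ⊗ (T_{j,k}^* ρ T_{j',k'}), an equality of matrices in M_d(ℂ) ⊗ M_{d²}(ℂ) (Kronecker products), where |φ_{j,k}⟩⟨φ_{j',k'}| ∈ M_{d²}(ℂ) is the rank-one operator sending x to ⟨φ_{j',k'}, x⟩·φ_{j,k}, and on the left side Φ occupies the last two tensor factors. -/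
open Matrix Complex Kronecker

noncomputable section

/-- ω = exp(2πi/d). -/
def pauliOmega (d : ℕ) : ℂ := Complex.exp (2 * Real.pi * Complex.I / d)

/-- The generalized Pauli matrix X, with X e_j = ω^j e_j. -/
def pauliX (d : ℕ) : Matrix (Fin d) (Fin d) ℂ :=
  Matrix.diagonal fun j => pauliOmega d ^ (j : ℕ)

/-- The generalized Pauli matrix Z, with Z e_j = e_{j+1 (mod d)}. -/
def pauliZ (d : ℕ) [NeZero d] : Matrix (Fin d) (Fin d) ℂ :=
  Matrix.of fun a b => if a = b + 1 then 1 else 0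

/-- T_{j,k} = X^j Z^k. -/
def pauliT (d : ℕ) [NeZero d] (j k : ℕ) : Matrix (Fin d) (Fin d) ℂ :=
  pauliX d ^ j * pauliZ d ^ k

/-- The coordinates of the maximally entangled vector φ_{j,k} = (T_{j,k} ⊗ I)φ. -/
def phiFun (d : ℕ) [NeZero d] (j k : Fin d) : Fin d × Fin d → ℂ :=
  fun p => if p.1 = p.2 + k then (Real.sqrt d : ℂ)⁻¹ * pauliOmega d ^ ((j : ℕ) * (p.1 : ℕ)) else 0

/-- The density matrix Φ = |φ⟩⟨φ| = (1/d) Σ_{j,k} e_{jk} ⊗ e_{jk} of the maximally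
entangled state, as a matrix in M_d(ℂ) ⊗ M_d(ℂ) via the Kronecker product. -/
def maxEntangled (d : ℕ) : Matrix (Fin d × Fin d) (Fin d × Fin d) ℂ :=
  (d : ℂ)⁻¹ • ∑ j : Fin d, ∑ k : Fin d,
    (Matrix.single j k (1 : ℂ)) ⊗ₖ (Matrix.single j k (1 : ℂ))

/-- The rank-one operator |φ_{j,k}⟩⟨φ_{j',k'}| ∈ M_{d²}(ℂ), sending x to ⟨φ_{j',k'}, x⟩·φ_{j,k}. -/
def phiOuter (d : ℕ) [NeZero d] (j k j' k' : Fin d) :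
    Matrix (Fin d × Fin d) (Fin d × Fin d) ℂ :=
  Matrix.vecMulVec (phiFun d j k) (fun q => star (phiFun d j' k' q))

lemma omega_ne_zero (d : ℕ) : pauliOmega d ≠ 0 := Complex.exp_ne_zero _
lemma omega_prim (d : ℕ) [NeZero d] : IsPrimitiveRoot (pauliOmega d) d := by
  simpa [pauliOmega] using Complex.isPrimitiveRoot_exp d (NeZero.ne d)
lemma star_omega (d : ℕ) : star (pauliOmega d) = (pauliOmega d)⁻¹ := by
  rw [pauliOmega, ← Complex.exp_neg, Complex.star_def, ← Complex.exp_conj]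
  congr 1
  rw [map_div₀, _root_.map_mul, _root_.map_mul, Complex.conj_I, map_ofNat,
    Complex.conj_ofReal, map_natCast]
  ring
lemma sum_omega (d : ℕ) [NeZero d] (a s : Fin d) :
    ∑ j : Fin d, pauliOmega d ^ ((j : ℕ) * (a : ℕ)) * star (pauliOmega d ^ ((j : ℕ) * (s : ℕ)))
      = if a = s then (d : ℂ) else 0 := by
  set ω := pauliOmega d with hω
  have hω0 : ω ≠ 0 := omega_ne_zero d
  have hprim := omega_prim d
  have h1 : ω ^ d = 1 := hprim.pow_eq_one
  have key : ∀ j : Fin d, ω ^ ((j:ℕ)*(a:ℕ)) * star (ω ^ ((j:ℕ)*(s:ℕ)))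
      = (ω ^ (a:ℕ) * (ω ^ (s:ℕ))⁻¹) ^ (j:ℕ) := by
    intro j
    simp only [hω, star_pow, star_omega, inv_pow, mul_pow, ← pow_mul]
    rw [Nat.mul_comm (j:ℕ) (a:ℕ), Nat.mul_comm (j:ℕ) (s:ℕ)]
  set ζ := ω ^ (a:ℕ) * (ω ^ (s:ℕ))⁻¹ with hζ
  have hζd : ζ ^ d = 1 := by
    rw [hζ, mul_pow, ← pow_mul, Nat.mul_comm, pow_mul, h1, one_pow, one_mul, inv_pow,
      ← pow_mul, Nat.mul_comm, pow_mul, h1, one_pow, inv_one]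
  have hζ1 : ζ = 1 ↔ a = s := by
    constructor
    · intro h
      have hps : ω ^ (a:ℕ) = ω ^ (s:ℕ) := by
        rwa [hζ, mul_inv_eq_one₀ (pow_ne_zero _ hω0)] at h
      exact Fin.ext (hprim.pow_inj a.isLt s.isLt hps)
    · rintro rfl; exact mul_inv_cancel₀ (pow_ne_zero _ hω0)
  rw [Finset.sum_congr rfl (fun j _ => key j)]
  by_cases h : a = s
  · simp [hζ1.2 h, h]
  · have hz : ζ ≠ 1 := fun hh => h (hζ1.1 hh)
    rw [Fin.sum_univ_eq_sum_range (fun i => ζ ^ i), geom_sum_eq hz, hζd]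
    simp [h]
lemma sum_omega' (d : ℕ) [NeZero d] (a s : Fin d) :
    ∑ j : Fin d, star (pauliOmega d ^ ((j : ℕ) * (a : ℕ))) * pauliOmega d ^ ((j : ℕ) * (s : ℕ))
      = if a = s then (d : ℂ) else 0 := by
  have := congrArg star (sum_omega d a s)
  simpa [star_sum, star_mul', apply_ite] using this
lemma pauliZ_apply (d : ℕ) [NeZero d] (a b : Fin d) :
    pauliZ d a b = if a = b + 1 then 1 else 0 := rfl
open Fin.NatCast in
lemma pauliZ_pow_apply (d : ℕ) [NeZero d] (k : ℕ) (a b : Fin d) :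
    (pauliZ d ^ k) a b = if a = b + (k : Fin d) then 1 else 0 := by
  induction k generalizing a b with
  | zero => simp [Matrix.one_apply]
  | succ k ih =>
    rw [pow_succ, Matrix.mul_apply]
    have key : ∀ c : Fin d, (pauliZ d ^ k) a c * pauliZ d c b
        = if c = b + 1 then (if a = (b + 1) + (k : Fin d) then 1 else 0) else 0 := by
      intro c
      rw [ih, pauliZ_apply]
      by_cases h : c = b + 1
      · subst h; simp
      · simp [h]
    rw [Finset.sum_congr rfl fun c _ => key c, Finset.sum_ite_eq' Finset.univ (b + 1)]
    simp only [Finset.mem_univ, if_true, Nat.cast_add, Nat.cast_one]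
    congr 1
    rw [eq_iff_iff]
    constructor <;> intro h <;> rw [h] <;> abel
lemma pauliX_pow (d : ℕ) (j : ℕ) :
    pauliX d ^ j = Matrix.diagonal fun s : Fin d => pauliOmega d ^ ((s : ℕ) * j) := by
  ext a b
  unfold pauliX
  rw [Matrix.diagonal_pow]
  simp [Matrix.diagonal_apply, pow_mul]
open Fin.NatCast in
lemma pauliT_apply (d : ℕ) [NeZero d] (j k : ℕ) (a b : Fin d) :
    pauliT d j k a b = if a = b + (k : Fin d) then pauliOmega d ^ ((j : ℕ) * (a : ℕ)) else 0 := by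
  rw [pauliT, pauliX_pow, Matrix.diagonal_mul, pauliZ_pow_apply]
  rw [mul_ite, mul_one, mul_zero, Nat.mul_comm]
lemma maxEntangled_apply (d : ℕ) (b c b' c' : Fin d) :
    maxEntangled d (b, c) (b', c') =
      (d : ℂ)⁻¹ * ((if b = c then 1 else 0) * (if b' = c' then 1 else 0)) := by
  simp [maxEntangled, Matrix.sum_apply, Matrix.single, Matrix.kroneckerMap_apply,
    ite_and, mul_ite, ite_mul, Finset.sum_ite_eq, Finset.sum_ite_eq']
  split_ifs with h1 h2 h3 h4 h5 <;> simp_all [eq_comm]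
lemma sandwich (d : ℕ) [NeZero d] (ρ : Matrix (Fin d) (Fin d) ℂ) (j k j' k' : Fin d)
    (c c' : Fin d) :
    ((pauliT d (j : ℕ) (k : ℕ))ᴴ * ρ * pauliT d (j' : ℕ) (k' : ℕ)) c c' =
      star (pauliOmega d ^ ((j : ℕ) * ((c + k : Fin d) : ℕ))) * ρ (c + k) (c' + k')
        * pauliOmega d ^ ((j' : ℕ) * ((c' + k' : Fin d) : ℕ)) := by
  have hT : ∀ (j k : Fin d) (s c : Fin d), pauliT d (j : ℕ) (k : ℕ) s c
      = if s = c + k then pauliOmega d ^ ((j : ℕ) * (s : ℕ)) else 0 := by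
    intro j k s c; rw [pauliT_apply, Fin.cast_val_eq_self]
  rw [Matrix.mul_apply]
  have key : ∀ t : Fin d, ((pauliT d ↑j ↑k)ᴴ * ρ) c t * pauliT d ↑j' ↑k' t c'
      = if t = c' + k' then ((pauliT d ↑j ↑k)ᴴ * ρ) c t * pauliOmega d ^ ((j' : ℕ) * (t : ℕ))
        else 0 := by
    intro t; rw [hT]; split_ifs <;> simp
  rw [Finset.sum_congr rfl fun t _ => key t, Finset.sum_ite_eq' Finset.univ (c' + k')]
  simp only [Finset.mem_univ, if_true]
  congr 1
  rw [Matrix.mul_apply]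
  have key2 : ∀ s : Fin d, (pauliT d ↑j ↑k)ᴴ c s * ρ s (c' + k')
      = if s = c + k then star (pauliOmega d ^ ((j : ℕ) * (s : ℕ))) * ρ s (c' + k') else 0 := by
    intro s; rw [Matrix.conjTranspose_apply, hT]; split_ifs <;> simp
  rw [Finset.sum_congr rfl fun s _ => key2 s, Finset.sum_ite_eq' Finset.univ (c + k)]
  simp

/-- The teleportation identity
ρ ⊗ Φ = (1/d²) Σ_{j,k,j',k'} |φ_{j,k}⟩⟨φ_{j',k'}| ⊗ (T_{j,k}^* ρ T_{j',k'}). -/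
theorem statement3 (d : ℕ) (hd : 2 ≤ d) [NeZero d] (ρ : Matrix (Fin d) (Fin d) ℂ) :
    ρ ⊗ₖ maxEntangled d =
      ((d : ℂ) ^ 2)⁻¹ • ∑ j : Fin d, ∑ k : Fin d, ∑ j' : Fin d, ∑ k' : Fin d,
        Matrix.reindex (Equiv.prodAssoc (Fin d) (Fin d) (Fin d))
          (Equiv.prodAssoc (Fin d) (Fin d) (Fin d))
          (phiOuter d j k j' k' ⊗ₖ
            ((pauliT d (j : ℕ) (k : ℕ))ᴴ * ρ * pauliT d (j' : ℕ) (k' : ℕ))) := by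
  have hd0 : (d : ℂ) ≠ 0 := Nat.cast_ne_zero.mpr (NeZero.ne d)
  ext ⟨a, b, c⟩ ⟨a', b', c'⟩
  rw [Matrix.kroneckerMap_apply, maxEntangled_apply]
  simp only [Matrix.smul_apply, Matrix.sum_apply, Matrix.reindex_apply, Matrix.submatrix_apply,
    Equiv.prodAssoc_symm_apply, Matrix.kroneckerMap_apply, phiOuter, Matrix.vecMulVec_apply,
    sandwich, phiFun, smul_eq_mul]
  -- float the ites out and collapse the k and k' sums
  have hcond : ∀ (u v k : Fin d), (u = v + k) ↔ (k = u - v) := by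
    intro u v k
    constructor
    · rintro rfl; rw [add_sub_cancel_left]
    · rintro rfl; rw [add_comm, sub_add_cancel]
  simp only [apply_ite (star : ℂ → ℂ), star_zero, ite_mul, mul_ite, zero_mul, mul_zero,
    Finset.sum_ite_irrel, Finset.sum_const_zero, hcond, Finset.sum_ite_eq',
    Finset.mem_univ, if_true]
  set s1 := c + (a - b) with hs1
  set s2 := c' + (a' - b') with hs2
  have factor : ∀ x x2 : Fin d,
      ((Real.sqrt d : ℝ) : ℂ)⁻¹ * pauliOmega d ^ ((x : ℕ) * (a : ℕ))
          * star (((Real.sqrt d : ℝ) : ℂ)⁻¹ * pauliOmega d ^ ((x2 : ℕ) * (a' : ℕ)))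
          * (star (pauliOmega d ^ ((x : ℕ) * (s1 : ℕ))) * ρ s1 s2
            * pauliOmega d ^ ((x2 : ℕ) * (s2 : ℕ)))
        = ((Real.sqrt d : ℝ) : ℂ)⁻¹ * star (((Real.sqrt d : ℝ) : ℂ)⁻¹) * ρ s1 s2
            * (pauliOmega d ^ ((x : ℕ) * (a : ℕ)) * star (pauliOmega d ^ ((x : ℕ) * (s1 : ℕ))))
            * (star (pauliOmega d ^ ((x2 : ℕ) * (a' : ℕ)))
              * pauliOmega d ^ ((x2 : ℕ) * (s2 : ℕ))) := by
    intro x x2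
    rw [star_mul']
    ring
  rw [Finset.sum_congr rfl fun x _ => Finset.sum_congr rfl fun x2 _ => factor x x2]
  simp only [← Finset.mul_sum, ← Finset.sum_mul]
  rw [sum_omega d a s1, sum_omega' d a' s2]
  have hsq : ((Real.sqrt d : ℝ) : ℂ)⁻¹ * star (((Real.sqrt d : ℝ) : ℂ)⁻¹) = (d : ℂ)⁻¹ := by
    rw [Complex.star_def, ← Complex.ofReal_inv, Complex.conj_ofReal,
      ← Complex.ofReal_mul, ← mul_inv, Real.mul_self_sqrt (by positivity)]
    push_cast
    ring
  rw [hsq]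
  have h1 : (a = s1) ↔ (b = c) := by
    rw [hs1]
    constructor
    · intro h
      have := congrArg (fun x => x - (a - b)) h
      simp only [sub_sub_cancel, add_sub_cancel_right] at this
      exact this
    · rintro rfl
      rw [add_comm, sub_add_cancel]
  have h2 : (a' = s2) ↔ (b' = c') := by
    rw [hs2]
    constructor
    · intro h
      have := congrArg (fun x => x - (a' - b')) h
      simp only [sub_sub_cancel, add_sub_cancel_right] at this
      exact this
    · rintro rfl
      rw [add_comm, sub_add_cancel]
  by_cases hbc : b = c <;> by_cases hbc' : b' = c' <;>
    simp only [h1, h2, hbc, hbc', if_true, if_false, mul_zero, zero_mul, mul_one, one_mul]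
  · have e1 : s1 = a := by rw [hs1, ← hbc, add_comm, sub_add_cancel]
    have e2 : s2 = a' := by rw [hs2, ← hbc', add_comm, sub_add_cancel]
    rw [e1, e2]
    field_simp
end
end

section
/- Let V ∈ M_{d²}(ℂ) be the matrix determined by V e_{(j,k)} = ω^{-jk} φ_{j,k} for 0 ≤ j,k ≤ d−1, where (e_{(j,k)}) is the standard basis of ℂ^d ⊗ ℂ^d. Then V is unitary and satisfies V^*(X ⊗ I_d)V = Z ⊗ X and V^*(Z ⊗ I_d)V = I_d ⊗ Z (Kronecker products). -/
open Matrix Complex Kronecker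

noncomputable section

/-- The matrix V ∈ M_{d²}(ℂ) with V e_{(j,k)} = ω^{-jk} φ_{j,k}. -/
def teleportV (d : ℕ) [NeZero d] : Matrix (Fin d × Fin d) (Fin d × Fin d) ℂ :=
  Matrix.of fun p q =>
    pauliOmega d ^ (-((q.1 : ℤ) * (q.2 : ℤ))) * phiFun d q.1 q.2 p

section Aux

set_option linter.unusedSectionVars false

variable {d : ℕ} [NeZero d]

lemma pauliOmega_prim : IsPrimitiveRoot (pauliOmega d) d :=
  Complex.isPrimitiveRoot_exp d (NeZero.ne d)

lemma pauliOmega_pow_d : pauliOmega d ^ d = 1 := pauliOmega_prim.pow_eq_one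

lemma pauliOmega_ne_zero : pauliOmega d ≠ 0 := pauliOmega_prim.ne_zero (NeZero.ne d)

lemma pauliOmega_pow_congr {m n : ℕ} (h : m ≡ n [MOD d]) :
    pauliOmega d ^ m = pauliOmega d ^ n := by
  have h1 : ∀ m : ℕ, pauliOmega d ^ m = pauliOmega d ^ (m % d) := by
    intro m
    conv_lhs => rw [← Nat.mod_add_div m d]
    rw [pow_add, pow_mul, pauliOmega_pow_d, one_pow, mul_one]
  rw [h1 m, h1 n, h]

lemma conj_pauliOmega : (starRingEnd ℂ) (pauliOmega d) = (pauliOmega d)⁻¹ := by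
  rw [pauliOmega, ← Complex.exp_conj, ← Complex.exp_neg]
  congr 1
  simp only [map_div₀, _root_.map_mul, Complex.conj_I, Complex.conj_natCast, map_ofNat,
    Complex.conj_ofReal]
  ring

lemma teleportV_apply (a b j k : Fin d) :
    teleportV d (a, b) (j, k) =
      if a = b + k then (Real.sqrt d : ℂ)⁻¹ * pauliOmega d ^ ((j : ℕ) * (b : ℕ)) else 0 := by
  set ω := pauliOmega d with hω
  show ω ^ (-((j : ℤ) * (k : ℤ))) * phiFun d j k (a, b) = _
  unfold phiFun
  by_cases h : a = b + k
  · simp only [h, if_pos rfl, ↓reduceIte]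
    have hkey : ω ^ ((j : ℕ) * (((b + k : Fin d)) : ℕ)) =
        ω ^ ((j : ℕ) * (k : ℕ)) * ω ^ ((j : ℕ) * (b : ℕ)) := by
      rw [← pow_add]
      apply pauliOmega_pow_congr
      rw [Fin.val_add]
      have h2 : (j : ℕ) * (((b : ℕ) + (k : ℕ)) % d) ≡ (j : ℕ) * ((b : ℕ) + (k : ℕ)) [MOD d] :=
        (Nat.mod_modEq _ d).mul_left _
      have h3 : (j : ℕ) * ((b : ℕ) + (k : ℕ)) = (j : ℕ) * (k : ℕ) + (j : ℕ) * (b : ℕ) := by ring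
      exact h2.trans (h3 ▸ Nat.ModEq.refl _)
    have hcast : (-((j : ℤ) * (k : ℤ))) = -((((j : ℕ) * (k : ℕ) : ℕ)) : ℤ) := by push_cast; ring
    have hneg : ω ^ (-((j : ℤ) * (k : ℤ))) = (ω ^ ((j : ℕ) * (k : ℕ)))⁻¹ := by
      rw [hcast, _root_.zpow_neg, zpow_natCast]
    rw [hkey, hneg]
    have hne : ω ^ ((j : ℕ) * (k : ℕ)) ≠ 0 := pow_ne_zero _ pauliOmega_ne_zero
    field_simp
  · simp [h]

lemma sum_pow_fin (ζ : ℂ) (hζ : ζ ^ d = 1) :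
    ∑ b : Fin d, ζ ^ (b : ℕ) = if ζ = 1 then (d : ℂ) else 0 := by
  rw [Fin.sum_univ_eq_sum_range]
  split_ifs with h
  · simp [h]
  · rw [geom_sum_eq h, hζ]
    simp

lemma sqrt_inv_sq : ((Real.sqrt d : ℂ))⁻¹ * ((Real.sqrt d : ℂ))⁻¹ = ((d : ℂ))⁻¹ := by
  rw [← mul_inv]
  congr 1
  rw [← Complex.ofReal_mul, Real.mul_self_sqrt (Nat.cast_nonneg d)]
  norm_cast

lemma star_sqrt_inv : star (((Real.sqrt d : ℝ) : ℂ))⁻¹ = (((Real.sqrt d : ℝ) : ℂ))⁻¹ := by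
  rw [← Complex.ofReal_inv]
  exact Complex.conj_ofReal _

lemma VhV : (teleportV d)ᴴ * teleportV d = 1 := by
  ext ⟨j, k⟩ ⟨j', k'⟩
  rw [Matrix.mul_apply, Fintype.sum_prod_type]
  simp only [conjTranspose_apply, teleportV_apply, apply_ite star, star_zero, star_mul',
    ite_mul, zero_mul, mul_ite, mul_zero]
  rw [Finset.sum_comm]
  simp only [Finset.sum_ite_eq', Finset.mem_univ, if_true, add_right_inj]
  by_cases hk : k' = k
  · subst hk
    simp only [eq_self_iff_true, if_true]
    set ω := pauliOmega d with hω
    set ζ : ℂ := (starRingEnd ℂ) ω ^ (j : ℕ) * ω ^ (j' : ℕ) with hζdef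
    have hterm : ∀ x : Fin d,
        star ((Real.sqrt d : ℂ))⁻¹ * star (ω ^ ((j : ℕ) * (x : ℕ))) *
          (((Real.sqrt d : ℂ))⁻¹ * ω ^ ((j' : ℕ) * (x : ℕ))) =
        ((d : ℂ))⁻¹ * ζ ^ (x : ℕ) := by
      intro x
      rw [star_sqrt_inv, star_pow, hζdef, mul_pow, ← pow_mul, ← pow_mul, ← sqrt_inv_sq (d := d)]
      show _ * (starRingEnd ℂ) ω ^ _ * _ = _
      ring
    rw [Finset.sum_congr rfl fun x _ => hterm x, ← Finset.mul_sum]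
    have hζd : ζ ^ d = 1 := by
      rw [hζdef, mul_pow, ← pow_mul, ← pow_mul, mul_comm (j : ℕ) d, mul_comm (j' : ℕ) d,
        pow_mul, pow_mul, ← map_pow, pauliOmega_pow_d]
      simp
    rw [sum_pow_fin ζ hζd]
    have hζ1 : (ζ = 1) ↔ (j = j') := by
      rw [hζdef, conj_pauliOmega, inv_pow, inv_mul_eq_one₀ (pow_ne_zero _ pauliOmega_ne_zero)]
      constructor
      · intro h
        exact Fin.ext (pauliOmega_prim.pow_inj j.isLt j'.isLt h)
      · intro h; rw [h]
    by_cases hj : j = j'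
    · rw [if_pos (hζ1.mpr hj), Matrix.one_apply, if_pos (by rw [hj])]
      have hd0 : (d : ℂ) ≠ 0 := Nat.cast_ne_zero.mpr (NeZero.ne d)
      field_simp
    · rw [if_neg (fun h => hj (hζ1.mp h)), mul_zero, Matrix.one_apply,
        if_neg (by simp [Prod.ext_iff, hj])]
  · simp only [if_neg hk, Finset.sum_const_zero, Matrix.one_apply,
      if_neg (show ¬((j, k) = (j', k')) by simp [Prod.ext_iff]; intro _ h; exact hk h.symm)]

lemma XV : (pauliX d ⊗ₖ (1 : Matrix (Fin d) (Fin d) ℂ)) * teleportV d =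
    teleportV d * (pauliZ d ⊗ₖ pauliX d) := by
  ext ⟨a, b⟩ ⟨j, k⟩
  have hL : ((pauliX d ⊗ₖ (1 : Matrix (Fin d) (Fin d) ℂ)) * teleportV d) (a, b) (j, k) =
      pauliOmega d ^ (a : ℕ) * teleportV d (a, b) (j, k) := by
    rw [Matrix.mul_apply, Finset.sum_eq_single (a, b)]
    · rw [kroneckerMap_apply]
      simp [pauliX]
    · rintro ⟨x, y⟩ - hne
      have hxy : a ≠ x ∨ b ≠ y := by
        by_contra hc
        push_neg at hc
        exact hne (by rw [hc.1, hc.2])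
      rcases hxy with h' | h'
      · simp [kroneckerMap_apply, pauliX, Matrix.diagonal_apply, h']
      · simp [kroneckerMap_apply, Matrix.one_apply, h']
    · simp
  have hR : (teleportV d * (pauliZ d ⊗ₖ pauliX d)) (a, b) (j, k) =
      teleportV d (a, b) (j + 1, k) * pauliOmega d ^ (k : ℕ) := by
    rw [Matrix.mul_apply, Finset.sum_eq_single ((j + 1 : Fin d), k)]
    · rw [kroneckerMap_apply]
      simp [pauliZ, pauliX]
    · rintro ⟨x, y⟩ - hne
      have hxy : x ≠ j + 1 ∨ y ≠ k := by
        by_contra hc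
        push_neg at hc
        exact hne (by rw [hc.1, hc.2])
      rcases hxy with h' | h'
      · simp [kroneckerMap_apply, pauliZ, h']
      · simp [kroneckerMap_apply, pauliX, Matrix.diagonal_apply, h']
    · simp
  rw [hL, hR, teleportV_apply, teleportV_apply]
  by_cases h : a = b + k
  · simp only [if_pos h]
    set ω := pauliOmega d with hω
    rw [← mul_assoc, mul_comm (ω ^ (a : ℕ)) ((Real.sqrt d : ℂ))⁻¹, mul_assoc, ← pow_add,
      mul_assoc, ← pow_add]
    congr 1
    apply pauliOmega_pow_congr
    have ha : (a : ℕ) ≡ (b : ℕ) + (k : ℕ) [MOD d] := by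
      rw [h, Fin.val_add]; exact Nat.mod_modEq _ d
    have hj1 : ((j + 1 : Fin d) : ℕ) ≡ (j : ℕ) + 1 [MOD d] := by
      rw [Fin.val_add]
      refine (Nat.mod_modEq _ d).trans ?_
      exact Nat.ModEq.add_left _ (by rw [Fin.val_one']; exact Nat.mod_modEq 1 d)
    have h1 : (a : ℕ) + (j : ℕ) * (b : ℕ) ≡ ((b : ℕ) + (k : ℕ)) + (j : ℕ) * (b : ℕ) [MOD d] :=
      ha.add_right _
    have h2 : ((j + 1 : Fin d) : ℕ) * (b : ℕ) + (k : ℕ) ≡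
        ((j : ℕ) + 1) * (b : ℕ) + (k : ℕ) [MOD d] :=
      (hj1.mul_right _).add_right _
    have h3 : ((j : ℕ) + 1) * (b : ℕ) + (k : ℕ) = ((b : ℕ) + (k : ℕ)) + (j : ℕ) * (b : ℕ) := by
      ring
    exact h1.trans (h3 ▸ h2).symm
  · simp [h]

lemma ZV : (pauliZ d ⊗ₖ (1 : Matrix (Fin d) (Fin d) ℂ)) * teleportV d =
    teleportV d * ((1 : Matrix (Fin d) (Fin d) ℂ) ⊗ₖ pauliZ d) := by
  ext ⟨a, b⟩ ⟨j, k⟩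
  have hL : ((pauliZ d ⊗ₖ (1 : Matrix (Fin d) (Fin d) ℂ)) * teleportV d) (a, b) (j, k) =
      teleportV d (a - 1, b) (j, k) := by
    rw [Matrix.mul_apply, Finset.sum_eq_single ((a - 1 : Fin d), b)]
    · rw [kroneckerMap_apply]
      simp [pauliZ, sub_add_cancel]
    · rintro ⟨x, y⟩ - hne
      have hxy : x ≠ a - 1 ∨ b ≠ y := by
        by_contra hc
        push_neg at hc
        exact hne (by rw [hc.1, hc.2])
      rcases hxy with h' | h'
      · have hax : ¬(a = x + 1) := by
          intro hax
          exact h' (by rw [hax]; exact (add_sub_cancel_right x 1).symm)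
        simp [kroneckerMap_apply, pauliZ, hax]
      · simp [kroneckerMap_apply, Matrix.one_apply, h']
    · simp
  have hR : (teleportV d * ((1 : Matrix (Fin d) (Fin d) ℂ) ⊗ₖ pauliZ d)) (a, b) (j, k) =
      teleportV d (a, b) (j, k + 1) := by
    rw [Matrix.mul_apply, Finset.sum_eq_single (j, (k + 1 : Fin d))]
    · rw [kroneckerMap_apply]
      simp [pauliZ, Matrix.one_apply]
    · rintro ⟨x, y⟩ - hne
      have hxy : x ≠ j ∨ y ≠ k + 1 := by
        by_contra hc
        push_neg at hc
        exact hne (by rw [hc.1, hc.2])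
      rcases hxy with h' | h'
      · simp [kroneckerMap_apply, Matrix.one_apply, h']
      · simp [kroneckerMap_apply, pauliZ, h']
    · simp
  rw [hL, hR, teleportV_apply, teleportV_apply]
  refine if_congr ?_ rfl rfl
  rw [sub_eq_iff_eq_add, add_assoc]

end Aux

/-- V is unitary and conjugates X ⊗ I to Z ⊗ X and Z ⊗ I to I ⊗ Z. -/
theorem statement5 (d : ℕ) (hd : 2 ≤ d) [NeZero d] :
    teleportV d ∈ Matrix.unitaryGroup (Fin d × Fin d) ℂ ∧
    (teleportV d)ᴴ * (pauliX d ⊗ₖ (1 : Matrix (Fin d) (Fin d) ℂ)) * teleportV d =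
      pauliZ d ⊗ₖ pauliX d ∧
    (teleportV d)ᴴ * (pauliZ d ⊗ₖ (1 : Matrix (Fin d) (Fin d) ℂ)) * teleportV d =
      (1 : Matrix (Fin d) (Fin d) ℂ) ⊗ₖ pauliZ d := by
  refine ⟨Matrix.mem_unitaryGroup_iff'.mpr VhV, ?_, ?_⟩
  · rw [Matrix.mul_assoc, XV, ← Matrix.mul_assoc, VhV, Matrix.one_mul]
  · rw [Matrix.mul_assoc, ZV, ← Matrix.mul_assoc, VhV, Matrix.one_mul]
end
end

section
/- Let H = ℓ²(ℤ × ℤ, ℂ) with standard orthonormal basis (e_{(m,n)})_{(m,n) ∈ ℤ×ℤ}. For j, k ∈ {0,1} let W_{j,k} be the operator on H determined on basis vectors by W_{j,k} e_{(m,n)} = (−1)^{j·χ(m+1) + k·χ(n+1)} e_{(m+1,n+1)}, where χ(t) = 1 if t ≥ 0 and χ(t) = 0 if t < 0. Let h_0 = Σ_{m<0} 2^{m/2} e_{(m,m)} (a norm-convergent sum) and h_1 = e_{(0,0)}. Then each W_{j,k} is a well-defined unitary operator, h_0 and h_1 are orthonormal unit vectors, and for all j, k ∈ {0,1}: ⟨h_0,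 W_{j,k} h_0⟩ = 1/√2 and ⟨h_1, W_{j,k} h_0⟩ = (−1)^{j−k}/√2. -/
open scoped InnerProductSpace ENNReal

noncomputable section

namespace Statement10Aux

abbrev E2 : Type := lp (fun _ : ℤ × ℤ => ℂ) 2

def sgn (j k : Fin 2) (p : ℤ × ℤ) : ℂ :=
  (-1) ^ ((j : ℕ) * (if 0 ≤ p.1 + 1 then 1 else 0) + (k : ℕ) * (if 0 ≤ p.2 + 1 then 1 else 0))

lemma sgn_cases (j k : Fin 2) (p : ℤ × ℤ) : sgn j k p = 1 ∨ sgn j k p = -1 :=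
  neg_one_pow_eq_or ℂ _

lemma sgn_mul_self (j k : Fin 2) (p : ℤ × ℤ) : sgn j k p * sgn j k p = 1 := by
  rcases sgn_cases j k p with h | h <;> rw [h] <;> ring

lemma conj_sgn (j k : Fin 2) (p : ℤ × ℤ) :
    (starRingEnd ℂ) (sgn j k p) = sgn j k p := by
  rcases sgn_cases j k p with h | h <;> rw [h] <;> simp

def vfam (j k : Fin 2) (p : ℤ × ℤ) : E2 :=
  sgn j k p • lp.single 2 (p.1 + 1, p.2 + 1) (1 : ℂ)

lemma inner_single_single (p q : ℤ × ℤ) :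
    ⟪(lp.single 2 p (1 : ℂ) : E2), lp.single 2 q (1 : ℂ)⟫_ℂ = if p = q then 1 else 0 := by
  classical
  rw [lp.inner_single_left, RCLike.inner_apply, map_one, mul_one, lp.single_apply]
  by_cases h : p = q <;> simp [h]

lemma orth (j k : Fin 2) : Orthonormal ℂ (vfam j k) := by
  rw [orthonormal_iff_ite]
  intro p q
  rw [vfam, vfam, inner_smul_left, inner_smul_right, inner_single_single, conj_sgn]
  by_cases h : p = q
  · subst h
    simp [sgn_mul_self]
  · have h2 : ((p.1 + 1, p.2 + 1) : ℤ × ℤ) ≠ (q.1 + 1, q.2 + 1) := by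
      rw [Prod.ext_iff] at h
      intro hcon
      rw [Prod.ext_iff] at hcon
      simp only [] at hcon
      omega
    simp [h, h2]

lemma dense_v (j k : Fin 2) :
    ⊤ ≤ (Submodule.span ℂ (Set.range (vfam j k))).topologicalClosure := by
  intro f _
  have hf := lp.hasSum_single (E := fun _ : ℤ × ℤ => ℂ) (p := 2) ENNReal.ofNat_ne_top f
  have hmem : ∀ p : ℤ × ℤ, (lp.single 2 p (f p) : E2) ∈
      Submodule.span ℂ (Set.range (vfam j k)) := by
    intro p
    set q : ℤ × ℤ := (p.1 - 1, p.2 - 1) with hq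
    have hv : vfam j k q = sgn j k q • lp.single 2 p (1 : ℂ) := by
      rw [vfam]
      congr 2
      · rw [Prod.ext_iff]; constructor <;> simp [hq]
    have key : (lp.single 2 p (f p) : E2) = (f p * sgn j k q) • vfam j k q := by
      rw [hv, smul_smul, mul_assoc, sgn_mul_self, mul_one, ← lp.single_smul, smul_eq_mul,
        mul_one]
    rw [key]
    exact Submodule.smul_mem _ _ (Submodule.subset_span ⟨q, rfl⟩)
  exact mem_closure_of_tendsto hf
    (Filter.Eventually.of_forall fun s => Submodule.sum_mem _ fun p _ => hmem p)

def W (j k : Fin 2) : E2 ≃ₗᵢ[ℂ] E2 :=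
  (HilbertBasis.mk (orth j k) (dense_v j k)).repr.symm

lemma W_single (j k : Fin 2) (p : ℤ × ℤ) :
    W j k (lp.single 2 p (1 : ℂ)) = vfam j k p := by
  classical
  have h1 : (HilbertBasis.mk (orth j k) (dense_v j k)).repr
      ((HilbertBasis.mk (orth j k) (dense_v j k)) p) = lp.single 2 p (1 : ℂ) :=
    HilbertBasis.repr_self _ p
  have h2 := congrArg (HilbertBasis.mk (orth j k) (dense_v j k)).repr.symm h1
  rw [LinearIsometryEquiv.symm_apply_apply] at h2
  rw [W, ← h2, HilbertBasis.coe_mk]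


/-! ### h0 -/

def negE : ℕ ≃ {m : ℤ // m < 0} where
  toFun n := ⟨-(n + 1 : ℕ), by omega⟩
  invFun m := (-(m : ℤ) - 1).toNat
  left_inv n := by simp
  right_inv m := by
    ext
    simp only []
    omega

lemma hasSum_zpow_neg {r : ℝ} (h1 : 1 < r) :
    HasSum (fun m : {m : ℤ // m < 0} => r ^ (m : ℤ)) (r - 1)⁻¹ := by
  rw [← Equiv.hasSum_iff negE]
  have h0 : (0 : ℝ) < r := lt_trans one_pos h1
  have hr : r⁻¹ < 1 := inv_lt_one_of_one_lt₀ h1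
  have hgeo := (hasSum_geometric_of_lt_one (inv_nonneg.2 h0.le) hr).mul_left r⁻¹
  have hval : r⁻¹ * (1 - r⁻¹)⁻¹ = (r - 1)⁻¹ := by
    rw [← mul_inv]
    congr 1
    field_simp
  rw [hval] at hgeo
  convert hgeo using 2 with n
  show r ^ ((negE n : ℤ)) = r⁻¹ * r⁻¹ ^ n
  have h2 : ((negE n : ℤ)) = -(n + 1 : ℕ) := rfl
  rw [h2, zpow_neg, zpow_natCast, ← inv_pow, pow_succ']
  rfl

def cc (m : ℤ) : ℂ := ((Real.sqrt 2 ^ m : ℝ) : ℂ)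

def tfam (m : {m : ℤ // m < 0}) : E2 :=
  cc m • lp.single 2 ((m : ℤ), (m : ℤ)) (1 : ℂ)

lemma norm_single_one (q : ℤ × ℤ) : ‖(lp.single 2 q (1 : ℂ) : E2)‖ = 1 := by
  classical
  have := lp.norm_single (p := 2) (E := fun _ : ℤ × ℤ => ℂ) (by norm_num)
    q (1 : ℂ)
  simpa using this

lemma sqrt2_pos : (0 : ℝ) < Real.sqrt 2 := Real.sqrt_pos.2 (by norm_num)

lemma one_lt_sqrt2 : (1 : ℝ) < Real.sqrt 2 := by
  nlinarith [Real.sq_sqrt (by norm_num : (2:ℝ) ≥ 0), sqrt2_pos]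

lemma summable_tfam : Summable tfam := by
  apply Summable.of_norm
  have h := (hasSum_zpow_neg one_lt_sqrt2).summable
  convert h using 2 with m
  rw [tfam, norm_smul, norm_single_one, mul_one, cc, Complex.norm_real, Real.norm_eq_abs,
    abs_of_nonneg (zpow_nonneg sqrt2_pos.le _)]

def h0 : E2 := ∑' m, tfam m

lemma hasSum_h0 : HasSum tfam h0 := summable_tfam.hasSum

lemma h0_apply (q : ℤ × ℤ) :
    (h0 : ∀ _ : ℤ × ℤ, ℂ) q = if q.2 = q.1 ∧ q.1 < 0 then cc q.1 else 0 := by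
  classical
  have H := (innerSL ℂ (lp.single 2 q (1 : ℂ) : E2)).hasSum hasSum_h0
  have hval : innerSL ℂ (lp.single 2 q (1 : ℂ) : E2) h0 = (h0 : ∀ _ : ℤ × ℤ, ℂ) q := by
    rw [innerSL_apply_apply, lp.inner_single_left, RCLike.inner_apply, map_one, mul_one]
  rw [hval] at H
  have hterm : ∀ m : {m : ℤ // m < 0},
      innerSL ℂ (lp.single 2 q (1 : ℂ) : E2) (tfam m)
        = cc m * (if q = ((m : ℤ), (m : ℤ)) then 1 else 0) := by
    intro m
    rw [innerSL_apply_apply, tfam, inner_smul_right, inner_single_single]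
  by_cases h : q.2 = q.1 ∧ q.1 < 0
  · rw [if_pos h]
    have hq : q = (q.1, q.1) := by rw [Prod.ext_iff]; exact ⟨rfl, h.1⟩
    refine H.unique ?_
    have hite := hasSum_ite_eq (⟨q.1, h.2⟩ : {m : ℤ // m < 0}) (cc q.1)
    convert hite with m
    · rfl
    rw [hterm m]
    by_cases hm : m = ⟨q.1, h.2⟩
    · subst hm
      rw [if_pos hq, mul_one, if_pos rfl]
    · rw [if_neg, mul_zero, if_neg hm]
      intro hcon
      exact hm (Subtype.ext (congrArg Prod.fst hcon).symm)
  · rw [if_neg h]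
    refine H.unique ?_
    convert hasSum_zero with m
    rw [hterm m, if_neg, mul_zero]
    rintro rfl
    exact h ⟨rfl, m.2⟩


lemma cc_mul_cc (m : ℤ) : cc m * cc m = (((2:ℝ) ^ m : ℝ) : ℂ) := by
  rw [cc, ← Complex.ofReal_mul, ← mul_zpow, Real.mul_self_sqrt (by norm_num)]

lemma hasSum_two_zpow :
    HasSum (fun m : {m : ℤ // m < 0} => (((2:ℝ) ^ (m:ℤ) : ℝ) : ℂ)) 1 := by
  have h := hasSum_zpow_neg (r := 2) (by norm_num)
  have h2 := Complex.ofRealCLM.hasSum h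
  have h3 : Complex.ofRealCLM ((2 - 1 : ℝ))⁻¹ = 1 := by norm_num
  rw [h3] at h2
  exact h2

lemma inner_h0_h0 : ⟪h0, h0⟫_ℂ = 1 := by
  classical
  have H := (innerSL ℂ h0).hasSum hasSum_h0
  have Hfun : ∀ m : {m : ℤ // m < 0},
      innerSL ℂ h0 (tfam m) = (((2:ℝ) ^ (m:ℤ) : ℝ) : ℂ) := by
    intro m
    rw [innerSL_apply_apply, tfam, inner_smul_right, lp.inner_single_right, RCLike.inner_apply,
      one_mul, h0_apply, if_pos ⟨rfl, m.2⟩]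
    rw [show ((((m:ℤ), (m:ℤ)) : ℤ × ℤ).1) = (m:ℤ) from rfl]
    rw [cc, Complex.conj_ofReal, ← cc, cc_mul_cc]
  rw [funext Hfun] at H
  have := H.unique hasSum_two_zpow
  rw [← this, innerSL_apply_apply]

lemma norm_h0 : ‖h0‖ = 1 := by
  have h := inner_h0_h0
  rw [inner_self_eq_norm_sq_to_K] at h
  have h2 : ‖h0‖ ^ 2 = 1 := by
    have h3 : ((‖h0‖ ^ 2 : ℝ) : ℂ) = ((1 : ℝ) : ℂ) := by push_cast; exact h
    exact_mod_cast h3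
  nlinarith [norm_nonneg h0]

lemma inner_h0_h1 :
    ⟪h0, (lp.single 2 ((0:ℤ), (0:ℤ)) (1:ℂ) : E2)⟫_ℂ = 0 := by
  classical
  rw [lp.inner_single_right, RCLike.inner_apply, one_mul]
  have h := h0_apply ((0:ℤ), (0:ℤ))
  rw [if_neg (by norm_num)] at h
  rw [h, map_zero]

lemma hasSum_W (j k : Fin 2) :
    HasSum (fun m : {m : ℤ // m < 0} =>
      cc m • (sgn j k ((m:ℤ), (m:ℤ)) •
        (lp.single 2 ((m:ℤ) + 1, (m:ℤ) + 1) (1:ℂ) : E2))) (W j k h0) := by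
  have H := ((W j k).toContinuousLinearEquiv.toContinuousLinearMap).hasSum hasSum_h0
  convert H using 2 with m
  show cc m • (sgn j k ((m:ℤ), (m:ℤ)) • (lp.single 2 ((m:ℤ) + 1, (m:ℤ) + 1) (1:ℂ) : E2))
      = (W j k).toContinuousLinearEquiv.toContinuousLinearMap (tfam m)
  have : (W j k).toContinuousLinearEquiv.toContinuousLinearMap (tfam m) = W j k (tfam m) := rfl
  rw [this, tfam, map_smul, W_single, vfam]
  rfl

lemma sqrt2_mul (m : ℤ) :
    Real.sqrt 2 ^ m * Real.sqrt 2 ^ (m + 1) = Real.sqrt 2 * 2 ^ m := by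
  rw [zpow_add_one₀ sqrt2_pos.ne']
  calc Real.sqrt 2 ^ m * (Real.sqrt 2 ^ m * Real.sqrt 2)
      = Real.sqrt 2 ^ m * Real.sqrt 2 ^ m * Real.sqrt 2 := by ring
    _ = (Real.sqrt 2 * Real.sqrt 2) ^ m * Real.sqrt 2 := by rw [mul_zpow]
    _ = Real.sqrt 2 * 2 ^ m := by rw [Real.mul_self_sqrt (by norm_num)]; ring

lemma sqrt2_half : Real.sqrt 2 - Real.sqrt 2 * 2⁻¹ = (Real.sqrt 2)⁻¹ := by
  have h : Real.sqrt 2 * Real.sqrt 2 = 2 := Real.mul_self_sqrt (by norm_num)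
  field_simp
  nlinarith [h]

lemma hasSum_aux2 :
    HasSum (fun m : {m : ℤ // m < 0} =>
      if (m:ℤ) + 1 < 0 then ((Real.sqrt 2 * 2 ^ ((m:ℤ)) : ℝ) : ℂ) else 0)
      (((Real.sqrt 2 : ℝ) : ℂ)⁻¹) := by
  classical
  have h1 : HasSum (fun m : {m : ℤ // m < 0} => Real.sqrt 2 * 2 ^ ((m:ℤ)))
      (Real.sqrt 2) := by
    have := (hasSum_zpow_neg (r := 2) (by norm_num)).mul_left (Real.sqrt 2)
    norm_num at this
    exact this
  have h2 : HasSum (fun m : {m : ℤ // m < 0} =>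
      if m = (⟨-1, by norm_num⟩ : {m : ℤ // m < 0}) then Real.sqrt 2 * 2⁻¹ else 0)
      (Real.sqrt 2 * 2⁻¹) := hasSum_ite_eq _ _
  have h3 := h1.sub h2
  have hfe : (fun m : {m : ℤ // m < 0} => Real.sqrt 2 * 2 ^ ((m:ℤ)) -
      (if m = (⟨-1, by norm_num⟩ : {m : ℤ // m < 0}) then Real.sqrt 2 * 2⁻¹ else 0))
      = fun m : {m : ℤ // m < 0} =>
        if (m:ℤ) + 1 < 0 then (Real.sqrt 2 * 2 ^ ((m:ℤ)) : ℝ) else 0 := by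
    funext m
    by_cases hm : m = (⟨-1, by norm_num⟩ : {m : ℤ // m < 0})
    · subst hm
      norm_num
    · have hm' : ((m:ℤ)) ≠ -1 := fun hc => hm (Subtype.ext hc)
      have hlt : (m:ℤ) + 1 < 0 := by have := m.2; omega
      rw [if_neg hm, if_pos hlt, sub_zero]
  rw [hfe] at h3
  rw [sqrt2_half] at h3
  have h4 := Complex.ofRealCLM.hasSum h3
  have h5 : Complex.ofRealCLM ((Real.sqrt 2)⁻¹ : ℝ) = ((Real.sqrt 2 : ℝ) : ℂ)⁻¹ := by
    simp [Complex.ofReal_inv]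
  rw [h5] at h4
  convert h4 using 2 with m
  by_cases hlt : (m:ℤ) + 1 < 0 <;> simp [hlt]

lemma inner_h0_W (j k : Fin 2) :
    ⟪h0, W j k h0⟫_ℂ = ((Real.sqrt 2 : ℝ) : ℂ)⁻¹ := by
  classical
  have H := (innerSL ℂ h0).hasSum (hasSum_W j k)
  have Hfun : ∀ m : {m : ℤ // m < 0},
      innerSL ℂ h0 (cc m • (sgn j k ((m:ℤ), (m:ℤ)) •
        (lp.single 2 ((m:ℤ) + 1, (m:ℤ) + 1) (1:ℂ) : E2)))
      = (if (m:ℤ) + 1 < 0 then ((Real.sqrt 2 * 2 ^ ((m:ℤ)) : ℝ) : ℂ) else 0) := by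
    intro m
    rw [innerSL_apply_apply, inner_smul_right, inner_smul_right, lp.inner_single_right,
      RCLike.inner_apply, one_mul, h0_apply]
    by_cases hlt : (m:ℤ) + 1 < 0
    · rw [if_pos ⟨rfl, hlt⟩, if_pos hlt]
      have hsgn : sgn j k ((m:ℤ), (m:ℤ)) = 1 := by
        rw [sgn]
        rw [show (((m:ℤ), (m:ℤ)) : ℤ × ℤ).1 = (m:ℤ) from rfl,
          show (((m:ℤ), (m:ℤ)) : ℤ × ℤ).2 = (m:ℤ) from rfl]
        rw [if_neg (by omega)]
        norm_num
      rw [hsgn, one_mul]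
      rw [show ((((m:ℤ) + 1, (m:ℤ) + 1) : ℤ × ℤ).1) = (m:ℤ) + 1 from rfl]
      rw [cc, cc, Complex.conj_ofReal, ← Complex.ofReal_mul, sqrt2_mul]
    · rw [if_neg (fun hc => hlt hc.2), if_neg hlt]
      simp
  rw [funext Hfun] at H
  have := H.unique hasSum_aux2
  rw [← this, innerSL_apply_apply]

lemma inner_h1_W (j k : Fin 2) :
    ⟪(lp.single 2 ((0:ℤ), (0:ℤ)) (1:ℂ) : E2), W j k h0⟫_ℂ
      = cc (-1) * sgn j k (-1, -1) := by
  classical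
  have H := (innerSL ℂ (lp.single 2 ((0:ℤ), (0:ℤ)) (1:ℂ) : E2)).hasSum (hasSum_W j k)
  have Hfun : ∀ m : {m : ℤ // m < 0},
      innerSL ℂ (lp.single 2 ((0:ℤ), (0:ℤ)) (1:ℂ) : E2) (cc m • (sgn j k ((m:ℤ), (m:ℤ)) •
        (lp.single 2 ((m:ℤ) + 1, (m:ℤ) + 1) (1:ℂ) : E2)))
      = (if m = (⟨-1, by norm_num⟩ : {m : ℤ // m < 0})
          then cc (-1) * sgn j k (-1, -1) else 0) := by
    intro m
    rw [innerSL_apply_apply, inner_smul_right, inner_smul_right, inner_single_single]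
    by_cases hm : m = (⟨-1, by norm_num⟩ : {m : ℤ // m < 0})
    · subst hm
      rw [if_pos rfl, if_pos (by norm_num), mul_one]
    · have hm' : ((m:ℤ)) ≠ -1 := fun hc => hm (Subtype.ext hc)
      rw [if_neg, if_neg hm]
      · ring
      · intro hc
        rw [Prod.ext_iff] at hc
        simp only [] at hc
        omega
  rw [funext Hfun] at H
  have := H.unique (hasSum_ite_eq _ _)
  rw [← this, innerSL_apply_apply]

lemma final2 (j k : Fin 2) :
    cc (-1) * sgn j k (-1, -1)
      = (-1 : ℂ) ^ ((j : ℤ) - (k : ℤ)) * ((Real.sqrt 2 : ℝ) : ℂ)⁻¹ := by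
  have hcc : cc (-1) = ((Real.sqrt 2 : ℝ) : ℂ)⁻¹ := by
    rw [cc, zpow_neg_one, Complex.ofReal_inv]
  rw [hcc, sgn]
  fin_cases j <;> fin_cases k <;> norm_num

end Statement10Aux

/-- In ℓ²(ℤ×ℤ) there exist unitaries W_{j,k} (j,k ∈ {0,1}) acting on the standard
basis by W_{j,k} e_{(m,n)} = (−1)^{j·χ(m+1)+k·χ(n+1)} e_{(m+1,n+1)} (χ the indicator
of being ≥ 0), and orthonormal vectors h₀ = Σ_{m<0} 2^{m/2} e_{(m,m)}, h₁ = e_{(0,0)}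
with ⟨h₀, W_{j,k} h₀⟩ = 1/√2 and ⟨h₁, W_{j,k} h₀⟩ = (−1)^{j−k}/√2. -/
theorem statement10 :
    ∃ W : Fin 2 → Fin 2 →
        (lp (fun _ : ℤ × ℤ => ℂ) 2 ≃ₗᵢ[ℂ] lp (fun _ : ℤ × ℤ => ℂ) 2),
      (∀ (j k : Fin 2) (m n : ℤ),
        W j k (lp.single 2 (m, n) (1 : ℂ)) =
          ((-1 : ℂ) ^ ((j : ℕ) * (if 0 ≤ m + 1 then 1 else 0)
              + (k : ℕ) * (if 0 ≤ n + 1 then 1 else 0))) •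
            lp.single 2 (m + 1, n + 1) (1 : ℂ)) ∧
      ∃ h0 : lp (fun _ : ℤ × ℤ => ℂ) 2,
        HasSum (fun m : {m : ℤ // m < 0} =>
          ((Real.sqrt 2 ^ (m : ℤ) : ℝ) : ℂ) • lp.single 2 ((m : ℤ), (m : ℤ)) (1 : ℂ)) h0 ∧
        ‖h0‖ = 1 ∧
        ‖(lp.single 2 ((0 : ℤ), (0 : ℤ)) (1 : ℂ) : lp (fun _ : ℤ × ℤ => ℂ) 2)‖ = 1 ∧
        ⟪h0, (lp.single 2 ((0 : ℤ), (0 : ℤ)) (1 : ℂ) : lp (fun _ : ℤ × ℤ => ℂ) 2)⟫_ℂ = 0 ∧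
        ∀ j k : Fin 2,
          ⟪h0, W j k h0⟫_ℂ = (Real.sqrt 2 : ℂ)⁻¹ ∧
          ⟪(lp.single 2 ((0 : ℤ), (0 : ℤ)) (1 : ℂ) : lp (fun _ : ℤ × ℤ => ℂ) 2),
              W j k h0⟫_ℂ =
            (-1 : ℂ) ^ ((j : ℤ) - (k : ℤ)) * (Real.sqrt 2 : ℂ)⁻¹ := by
  refine ⟨Statement10Aux.W, ?_, Statement10Aux.h0, ?_, Statement10Aux.norm_h0,
    Statement10Aux.norm_single_one _, Statement10Aux.inner_h0_h1, fun j k =>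
      ⟨Statement10Aux.inner_h0_W j k, ?_⟩⟩
  · intro j k m n
    rw [Statement10Aux.W_single]
    simp [Statement10Aux.vfam, Statement10Aux.sgn]
  · exact Statement10Aux.hasSum_h0
  · rw [Statement10Aux.inner_h1_W, Statement10Aux.final2]
end
end

section
/- For every n ≥ 1, there do not exist unitary matrices u_0, u_1, v_0, v_1 ∈ M_n(ℂ) and matrices H_0, H_1 ∈ M_n(ℂ) with tr(H_0^* H_0) = tr(H_1^* H_1) = 1 and tr(H_0^* H_1) = 0, such that for all j, k ∈ {0,1}: tr(H_0^* (u_j H_0 v_k^T)) = 1/√2 and tr(H_1^* (u_j H_0 v_k^T)) = (−1)^{j−k}/√2. -/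
open Matrix

set_option linter.unusedSectionVars false

section Aux

variable {m : Type*} [Fintype m] [DecidableEq m]

private lemma aux_eq_zero_of_trace {A : Matrix m m ℂ} (h : (Aᴴ * A).trace = 0) :
    A = 0 := by
  have key : (Aᴴ * A).trace = ((∑ j : m, ∑ i : m, Complex.normSq (A i j) : ℝ) : ℂ) := by
    push_cast
    simp only [Matrix.trace, Matrix.diag, Matrix.mul_apply, Matrix.conjTranspose_apply]
    refine Finset.sum_congr rfl fun j _ => Finset.sum_congr rfl fun i _ => ?_
    rw [Complex.normSq_eq_conj_mul_self]
    rfl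
  rw [key] at h
  have h2 : (∑ j : m, ∑ i : m, Complex.normSq (A i j) : ℝ) = 0 := by exact_mod_cast h
  ext i j
  have hnn : ∀ j ∈ Finset.univ, (0:ℝ) ≤ ∑ i : m, Complex.normSq (A i j) :=
    fun j _ => Finset.sum_nonneg fun i _ => Complex.normSq_nonneg _
  have h3 := (Finset.sum_eq_zero_iff_of_nonneg hnn).mp h2 j (Finset.mem_univ j)
  have h4 := (Finset.sum_eq_zero_iff_of_nonneg
    (fun i _ => Complex.normSq_nonneg (A i j))).mp h3 i (Finset.mem_univ i)
  simpa using Complex.normSq_eq_zero.mp h4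

private lemma aux_cancel {U : Matrix m m ℂ} (hU : Uᴴ * U = 1) (M N : Matrix m m ℂ) :
    (U * M)ᴴ * (U * N) = Mᴴ * N := by
  rw [conjTranspose_mul, Matrix.mul_assoc, ← Matrix.mul_assoc Uᴴ U N, hU, Matrix.one_mul]

private lemma aux_s_mul_s : (Real.sqrt 2 : ℂ)⁻¹ * (Real.sqrt 2 : ℂ)⁻¹ = 2⁻¹ := by
  rw [← mul_inv, ← Complex.ofReal_mul, Real.mul_self_sqrt (by norm_num : (0:ℝ) ≤ 2)]
  norm_num

private lemma aux_star_s : star ((Real.sqrt 2 : ℂ)⁻¹) = (Real.sqrt 2 : ℂ)⁻¹ := by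
  simp [Complex.star_def, map_inv₀, Complex.conj_ofReal]

private lemma aux_exact {U W G H : Matrix m m ℂ}
    (hU : Uᴴ * U = 1) (hW : W * Wᴴ = 1) {ε : ℂ} (hε : ε = 1 ∨ ε = -1)
    (hG : (Gᴴ * G).trace = 1) (hH : (Hᴴ * H).trace = 1) (hGH : (Gᴴ * H).trace = 0)
    (h1 : (Gᴴ * (U * G * W)).trace = (Real.sqrt 2 : ℂ)⁻¹)
    (h2 : (Hᴴ * (U * G * W)).trace = ε * (Real.sqrt 2 : ℂ)⁻¹) :
    U * G * W = (Real.sqrt 2 : ℂ)⁻¹ • (G + ε • H) := by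
  set s : ℂ := (Real.sqrt 2 : ℂ)⁻¹ with hs
  have hss : s * s = 2⁻¹ := aux_s_mul_s
  have hstars : star s = s := aux_star_s
  have hεs : star ε = ε := by rcases hε with h | h <;> simp [h]
  have hε2 : ε * ε = 1 := by rcases hε with h | h <;> rw [h] <;> ring
  set X : Matrix m m ℂ := U * G * W with hX
  set c : Matrix m m ℂ := s • (G + ε • H) with hc
  have hHG : (Hᴴ * G).trace = 0 := by
    have e : Hᴴ * G = (Gᴴ * H)ᴴ := by simp [conjTranspose_mul]
    rw [e, trace_conjTranspose, hGH, star_zero]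
  have tXX : (Xᴴ * X).trace = 1 := by
    have e : Xᴴ * X = Wᴴ * ((Gᴴ * G) * W) := by
      rw [hX, Matrix.mul_assoc U G W, aux_cancel hU, conjTranspose_mul,
        Matrix.mul_assoc, Matrix.mul_assoc]
    rw [e, trace_mul_comm, Matrix.mul_assoc (Gᴴ * G) W Wᴴ, hW, Matrix.mul_one, hG]
  have tcX : (cᴴ * X).trace = 1 := by
    rw [hc]
    simp only [conjTranspose_smul, conjTranspose_add, Matrix.add_mul, Matrix.smul_mul,
      trace_smul, trace_add]
    rw [h1, h2, hstars, hεs, smul_eq_mul, smul_eq_mul]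
    rw [show s + ε * (ε * s) = 2 * s by rw [← mul_assoc, hε2]; ring]
    rw [show s * (2 * s) = 2 * (s * s) by ring, hss]
    norm_num
  have tXc : (Xᴴ * c).trace = 1 := by
    have e : Xᴴ * c = (cᴴ * X)ᴴ := by simp [conjTranspose_mul]
    rw [e, trace_conjTranspose, tcX, star_one]
  have tcc : (cᴴ * c).trace = 1 := by
    rw [hc]
    simp only [conjTranspose_smul, conjTranspose_add, Matrix.add_mul, Matrix.mul_add,
      Matrix.smul_mul, Matrix.mul_smul, trace_smul, trace_add]
    rw [hG, hH, hGH, hHG, hstars, hεs]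
    simp only [smul_eq_mul]
    rw [show s * (s * (1 + ε * 0) + ε * (s * (0 + ε * 1))) = (ε * ε) * (s * s) + (s * s) by
      ring, hε2, hss]
    norm_num
  have tz : ((X - c)ᴴ * (X - c)).trace = 0 := by
    rw [conjTranspose_sub, Matrix.sub_mul, Matrix.mul_sub, Matrix.mul_sub,
      trace_sub, trace_sub, trace_sub, tXX, tcX, tXc, tcc]
    ring
  have := aux_eq_zero_of_trace tz
  rw [sub_eq_zero] at this
  exact this

end Aux

/-- The correlation ⟨h₀,(u_j⊗v_k)h₀⟩ = 1/√2, ⟨h₁,(u_j⊗v_k)h₀⟩ = (−1)^{j−k}/√2 with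
orthonormal h₀, h₁ cannot be realized on a finite-dimensional Hilbert space.  Here
ℂ^n ⊗ ℂ^n is identified with M_n(ℂ) via vectorization, (u ⊗ v)A = u A vᵀ, and the
inner product is the Frobenius inner product ⟨A, B⟩ = tr(AᴴB). -/
theorem statement11 (n : ℕ) (hn : 1 ≤ n) :
    ¬ ∃ (u v : Fin 2 → Matrix (Fin n) (Fin n) ℂ) (H0 H1 : Matrix (Fin n) (Fin n) ℂ),
      (∀ j, u j ∈ Matrix.unitaryGroup (Fin n) ℂ) ∧
      (∀ k, v k ∈ Matrix.unitaryGroup (Fin n) ℂ) ∧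
      (H0ᴴ * H0).trace = 1 ∧ (H1ᴴ * H1).trace = 1 ∧ (H0ᴴ * H1).trace = 0 ∧
      ∀ j k : Fin 2,
        (H0ᴴ * (u j * H0 * (v k)ᵀ)).trace = (Real.sqrt 2 : ℂ)⁻¹ ∧
        (H1ᴴ * (u j * H0 * (v k)ᵀ)).trace =
          (-1 : ℂ) ^ ((j : ℤ) - (k : ℤ)) * (Real.sqrt 2 : ℂ)⁻¹ := by
  rintro ⟨u, v, G, H, hu, hv, hGG, hHH, hGH, hcorr⟩
  set s : ℂ := (Real.sqrt 2 : ℂ)⁻¹ with hsdef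
  have hu' : ∀ j, (u j)ᴴ * (u j) = 1 := fun j => by
    simpa [Matrix.star_eq_conjTranspose] using (Matrix.mem_unitaryGroup_iff').mp (hu j)
  have hvv : ∀ k, (v k)ᴴ * (v k) = 1 := fun k => by
    simpa [Matrix.star_eq_conjTranspose] using (Matrix.mem_unitaryGroup_iff').mp (hv k)
  have hvv' : ∀ k, (v k) * (v k)ᴴ = 1 := fun k => by
    simpa [Matrix.star_eq_conjTranspose] using (Matrix.mem_unitaryGroup_iff).mp (hv k)
  set P : Matrix (Fin n) (Fin n) ℂ := (v 0)ᵀ with hPdef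
  set Q : Matrix (Fin n) (Fin n) ℂ := (v 1)ᵀ with hQdef
  have hctt : ∀ A : Matrix (Fin n) (Fin n) ℂ, (Aᵀ)ᴴ = (Aᴴ)ᵀ := fun A => by
    ext i j
    simp [Matrix.conjTranspose_apply, Matrix.transpose_apply]
  have hPP : P * Pᴴ = 1 := by
    rw [hPdef, hctt, ← transpose_mul, hvv 0, transpose_one]
  have hPP' : Pᴴ * P = 1 := by
    rw [hPdef, hctt, ← transpose_mul, hvv' 0, transpose_one]
  have hQQ : Q * Qᴴ = 1 := by
    rw [hQdef, hctt, ← transpose_mul, hvv 1, transpose_one]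
  have hQQ' : Qᴴ * Q = 1 := by
    rw [hQdef, hctt, ← transpose_mul, hvv' 1, transpose_one]
  -- the four exact equations
  have e00 : u 0 * G * P = s • (G + (1:ℂ) • H) := by
    refine aux_exact (hu' 0) hPP (Or.inl rfl) hGG hHH hGH (hcorr 0 0).1 ?_
    rw [(hcorr 0 0).2]
    norm_num
    exact hsdef
  have e01 : u 0 * G * Q = s • (G + (-1:ℂ) • H) := by
    refine aux_exact (hu' 0) hQQ (Or.inr rfl) hGG hHH hGH (hcorr 0 1).1 ?_
    rw [(hcorr 0 1).2]
    norm_num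
    exact hsdef
  have e10 : u 1 * G * P = s • (G + (-1:ℂ) • H) := by
    refine aux_exact (hu' 1) hPP (Or.inr rfl) hGG hHH hGH (hcorr 1 0).1 ?_
    rw [(hcorr 1 0).2]
    norm_num
    exact hsdef
  have e11 : u 1 * G * Q = s • (G + (1:ℂ) • H) := by
    refine aux_exact (hu' 1) hQQ (Or.inl rfl) hGG hHH hGH (hcorr 1 1).1 ?_
    rw [(hcorr 1 1).2]
    norm_num
    exact hsdef
  obtain ⟨σ, hσdef⟩ : ∃ M : Matrix (Fin n) (Fin n) ℂ, M = Gᴴ * G := ⟨_, rfl⟩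
  have hGGσ : σ.trace = 1 := by rw [hσdef]; exact hGG
  -- Gram relations
  have eA : u 0 * (G * P) = u 1 * (G * Q) := by
    rw [← Matrix.mul_assoc, ← Matrix.mul_assoc]; exact e00.trans e11.symm
  have eB : u 0 * (G * Q) = u 1 * (G * P) := by
    rw [← Matrix.mul_assoc, ← Matrix.mul_assoc]; exact e01.trans e10.symm
  have g1 : Pᴴ * σ * P = Qᴴ * σ * Q := by
    have h : (u 0 * (G * P))ᴴ * (u 0 * (G * P)) = (u 1 * (G * Q))ᴴ * (u 1 * (G * Q)) := by
      rw [eA]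
    rw [aux_cancel (hu' 0), aux_cancel (hu' 1)] at h
    calc Pᴴ * σ * P = (G * P)ᴴ * (G * P) := by
          rw [hσdef, conjTranspose_mul]; noncomm_ring
    _ = (G * Q)ᴴ * (G * Q) := h
    _ = Qᴴ * σ * Q := by rw [hσdef, conjTranspose_mul]; noncomm_ring
  have g2 : Pᴴ * σ * Q = Qᴴ * σ * P := by
    have h : (u 0 * (G * P))ᴴ * (u 0 * (G * Q)) = (u 1 * (G * Q))ᴴ * (u 1 * (G * P)) := by
      rw [eA, eB]
    rw [aux_cancel (hu' 0), aux_cancel (hu' 1)] at h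
    calc Pᴴ * σ * Q = (G * P)ᴴ * (G * Q) := by
          rw [hσdef, conjTranspose_mul]; noncomm_ring
    _ = (G * Q)ᴴ * (G * P) := h
    _ = Qᴴ * σ * P := by rw [hσdef, conjTranspose_mul]; noncomm_ring
  have eS : u 0 * (G * (P + Q)) = (2 * s) • G := by
    calc u 0 * (G * (P + Q)) = u 0 * G * P + u 0 * G * Q := by noncomm_ring
    _ = s • (G + (1:ℂ) • H) + s • (G + (-1:ℂ) • H) := by rw [e00, e01]
    _ = (2 * s) • G := by module
  have g3 : (P + Q)ᴴ * σ * (P + Q) = (2:ℂ) • σ := by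
    have h : (u 0 * (G * (P + Q)))ᴴ * (u 0 * (G * (P + Q)))
        = ((2 * s) • G)ᴴ * ((2 * s) • G) := by rw [eS]
    rw [aux_cancel (hu' 0)] at h
    have h2 : ((2 * s) • G)ᴴ * ((2 * s) • G) = (2:ℂ) • σ := by
      rw [conjTranspose_smul, Matrix.smul_mul, Matrix.mul_smul, smul_smul, hσdef]
      congr 1
      have h4 : star (2 * s) * (2 * s) = 4 * (s * s) := by
        rw [star_mul', hsdef, aux_star_s, show star (2:ℂ) = 2 by norm_num]
        ring
      rw [h4, hsdef, aux_s_mul_s]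
      norm_num
    rw [h2] at h
    calc (P + Q)ᴴ * σ * (P + Q) = (G * (P + Q))ᴴ * (G * (P + Q)) := by
          rw [hσdef, conjTranspose_mul]; noncomm_ring
    _ = (2:ℂ) • σ := h
  have hsum : Pᴴ * σ * P + Pᴴ * σ * Q = σ := by
    have expand : (P + Q)ᴴ * σ * (P + Q)
        = Pᴴ * σ * P + Pᴴ * σ * Q + (Qᴴ * σ * P + Qᴴ * σ * Q) := by
      rw [conjTranspose_add]; noncomm_ring
    rw [expand, ← g1, ← g2] at g3
    have h2 : (2:ℂ) • (Pᴴ * σ * P + Pᴴ * σ * Q) = (2:ℂ) • σ := by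
      rw [← g3]; module
    exact smul_right_injective _ (two_ne_zero) h2
  obtain ⟨Y, hYdef⟩ : ∃ M : Matrix (Fin n) (Fin n) ℂ, M = Q * Pᴴ := ⟨_, rfl⟩
  have r3 : P * σ * Pᴴ = σ + σ * Y := by
    calc P * σ * Pᴴ = P * (Pᴴ * σ * P + Pᴴ * σ * Q) * Pᴴ := by rw [hsum]
    _ = (P * Pᴴ) * σ * (P * Pᴴ) + (P * Pᴴ) * σ * (Q * Pᴴ) := by noncomm_ring
    _ = σ + σ * Y := by
          rw [hPP, hYdef, Matrix.one_mul, Matrix.mul_one]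
  have r1 : Y * σ = σ * Y := by
    have h : Y * σ * (P * Qᴴ) = σ := by
      calc Y * σ * (P * Qᴴ) = Q * (Pᴴ * σ * P) * Qᴴ := by rw [hYdef]; noncomm_ring
      _ = Q * (Qᴴ * σ * Q) * Qᴴ := by rw [g1]
      _ = (Q * Qᴴ) * σ * (Q * Qᴴ) := by noncomm_ring
      _ = σ := by rw [hQQ, Matrix.one_mul, Matrix.mul_one]
    calc Y * σ = Y * σ * (P * Qᴴ) * (Q * Pᴴ) := by
          rw [Matrix.mul_assoc (Y * σ), show (P * Qᴴ) * (Q * Pᴴ) = P * (Qᴴ * Q) * Pᴴ by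
            noncomm_ring, hQQ', Matrix.mul_one, hPP, Matrix.mul_one]
    _ = σ * (Q * Pᴴ) := by rw [h]
    _ = σ * Y := by rw [hYdef]
  have r2a : σ * Y = σ * (P * Qᴴ) := by
    rw [← r1]
    calc Y * σ = (Q * Pᴴ) * σ * ((Q * (Qᴴ * Q) * (Pᴴ * P) * Qᴴ)) := by
          rw [hQQ', hPP', Matrix.mul_one, Matrix.mul_one, hQQ, Matrix.mul_one, hYdef]
    _ = Q * (Pᴴ * σ * Q) * (Qᴴ * (Q * (Pᴴ * (P * Qᴴ)))) := by noncomm_ring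
    _ = Q * (Qᴴ * σ * P) * (Qᴴ * (Q * (Pᴴ * (P * Qᴴ)))) := by rw [g2]
    _ = (Q * Qᴴ) * σ * (P * ((Qᴴ * Q) * ((Pᴴ * P) * Qᴴ))) := by noncomm_ring
    _ = σ * (P * Qᴴ) := by
          rw [hQQ, hQQ', hPP', Matrix.one_mul, Matrix.one_mul, Matrix.one_mul]
  have r2 : σ * (Y * Y) = σ := by
    calc σ * (Y * Y) = (σ * Y) * Y := by rw [Matrix.mul_assoc]
    _ = (σ * (P * Qᴴ)) * Y := by rw [r2a]
    _ = σ * (P * ((Qᴴ * Q) * Pᴴ)) := by rw [hYdef]; noncomm_ring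
    _ = σ := by rw [hQQ', Matrix.one_mul, hPP, Matrix.mul_one]
  -- the doubling identity
  obtain ⟨w, hwdef⟩ : ∃ M : Matrix (Fin n) (Fin n) ℂ, M = σ + σ * Y := ⟨_, rfl⟩
  have wsq : w * w = (2:ℂ) • (σ * w) := by
    have e1 : (σ * Y) * σ = σ * (σ * Y) := by
      rw [Matrix.mul_assoc, r1, ← Matrix.mul_assoc, Matrix.mul_assoc]
    have e2 : (σ * Y) * (σ * Y) = σ * σ := by
      calc (σ * Y) * (σ * Y) = σ * ((Y * σ) * Y) := by noncomm_ring
      _ = σ * ((σ * Y) * Y) := by rw [r1]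
      _ = σ * (σ * (Y * Y)) := by rw [Matrix.mul_assoc]
      _ = σ * σ := by rw [r2]
    calc w * w = σ * σ + (σ * Y) * σ + (σ * (σ * Y) + (σ * Y) * (σ * Y)) := by
          rw [hwdef]; noncomm_ring
    _ = σ * σ + σ * (σ * Y) + (σ * (σ * Y) + σ * σ) := by rw [e1, e2]
    _ = (2:ℂ) • (σ * w) := by rw [hwdef, Matrix.mul_add, ← Matrix.mul_assoc]; module
  -- eigenvalue halving
  have step : ∀ (x : Fin n → ℂ) (lam : ℂ), lam ≠ 0 → x ≠ 0 → σ *ᵥ x = lam • x →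
      (P *ᵥ x ≠ 0 ∧ σ *ᵥ (P *ᵥ x) = (lam / 2) • (P *ᵥ x)) := by
    intro x lam hlam hx hev
    have hz0 : P *ᵥ x ≠ 0 := by
      intro hcon
      apply hx
      have hback : Pᴴ *ᵥ (P *ᵥ x) = x := by rw [mulVec_mulVec, hPP', one_mulVec]
      rw [hcon, Matrix.mulVec_zero] at hback
      exact hback.symm
    have hwz : w *ᵥ (P *ᵥ x) = lam • (P *ᵥ x) := by
      rw [hwdef, ← r3]
      rw [mulVec_mulVec, show P * σ * Pᴴ * P = P * σ * (Pᴴ * P) by noncomm_ring, hPP',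
        Matrix.mul_one, ← mulVec_mulVec, hev, mulVec_smul]
    have hdouble : (2 * lam) • (σ *ᵥ (P *ᵥ x)) = (lam * lam) • (P *ᵥ x) := by
      have lhs : w *ᵥ (w *ᵥ (P *ᵥ x)) = (lam * lam) • (P *ᵥ x) := by
        rw [hwz, mulVec_smul, hwz, smul_smul]
      have rhs : w *ᵥ (w *ᵥ (P *ᵥ x)) = (2 * lam) • (σ *ᵥ (P *ᵥ x)) := by
        rw [mulVec_mulVec, wsq, smul_mulVec, ← mulVec_mulVec, hwz, mulVec_smul,
          smul_smul]
      rw [← lhs, rhs]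
    have h2lam : (2 * lam) ≠ 0 := by
      intro hcon
      exact hlam (by simpa using (mul_eq_zero.mp hcon).resolve_left two_ne_zero)
    refine ⟨hz0, ?_⟩
    have h5 := congrArg (fun y => (2 * lam)⁻¹ • y) hdouble
    simp only [smul_smul, inv_mul_cancel₀ h2lam, one_smul] at h5
    rw [h5]
    congr 1
    field_simp
  -- initial nonzero eigenvalue
  have hherm : σ.IsHermitian := hσdef ▸ isHermitian_conjTranspose_mul_self G
  have hex : ∃ i, hherm.eigenvalues i ≠ 0 := by
    by_contra hcon
    push_neg at hcon
    have hzero : σ = 0 := by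
      rw [hherm.spectral_theorem]
      have hd : Matrix.diagonal (RCLike.ofReal ∘ hherm.eigenvalues)
          = (0 : Matrix (Fin n) (Fin n) ℂ) := by
        rw [show RCLike.ofReal ∘ hherm.eigenvalues = fun _ : Fin n => (0:ℂ) by
          funext i; simp [hcon i]]
        exact Matrix.diagonal_zero
      rw [hd, map_zero]
    rw [hzero, Matrix.trace_zero] at hGGσ
    exact one_ne_zero hGGσ.symm
  obtain ⟨i0, hi0⟩ := hex
  have hlam0 : ((hherm.eigenvalues i0 : ℝ) : ℂ) ≠ 0 := Complex.ofReal_ne_zero.mpr hi0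
  have hx0 : (⇑(hherm.eigenvectorBasis i0) : Fin n → ℂ) ≠ 0 := by
    intro hcon
    apply hherm.eigenvectorBasis.orthonormal.ne_zero i0
    ext t
    exact congrFun hcon t
  have hev0 : σ *ᵥ ⇑(hherm.eigenvectorBasis i0)
      = ((hherm.eigenvalues i0 : ℝ) : ℂ) • ⇑(hherm.eigenvectorBasis i0) := by
    rw [hherm.mulVec_eigenvectorBasis i0]
    funext t
    simp [Complex.real_smul]
  set lam0 : ℂ := ((hherm.eigenvalues i0 : ℝ) : ℂ) with hlam0def
  -- iterate
  have iter : ∀ k : ℕ, ∃ y : Fin n → ℂ, y ≠ 0 ∧ σ *ᵥ y = (lam0 / 2 ^ k) • y := by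
    intro k
    induction k with
    | zero => exact ⟨_, hx0, by simpa using hev0⟩
    | succ k ih =>
      obtain ⟨y, hy0, hyev⟩ := ih
      have hlk : lam0 / 2 ^ k ≠ 0 := div_ne_zero hlam0 (pow_ne_zero _ two_ne_zero)
      obtain ⟨hz0, hzev⟩ := step y (lam0 / 2 ^ k) hlk hy0 hyev
      refine ⟨P *ᵥ y, hz0, ?_⟩
      rw [hzev]
      congr 1
      rw [div_div, pow_succ]
  -- too many distinct eigenvalues
  classical
  choose yv hyv0 hyvev using iter
  have μinj : Function.Injective (fun i : Fin (n + 1) => lam0 / 2 ^ (i : ℕ)) := by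
    intro i j hij
    simp only at hij
    have h2 : (2:ℂ) ^ (j:ℕ) = 2 ^ (i:ℕ) := by
      rw [div_eq_div_iff (pow_ne_zero _ two_ne_zero) (pow_ne_zero _ two_ne_zero)] at hij
      exact mul_left_cancel₀ hlam0 hij
    have h3 : ((2 ^ (j:ℕ) : ℕ) : ℂ) = ((2 ^ (i:ℕ) : ℕ) : ℂ) := by push_cast; exact h2
    have h4 := Nat.cast_injective h3
    exact (Fin.ext (Nat.pow_right_injective (le_refl 2) h4)).symm
  have hlin : LinearIndependent ℂ (fun i : Fin (n + 1) => yv (i : ℕ)) := by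
    apply Module.End.eigenvectors_linearIndependent' (Matrix.mulVecLin σ)
      (fun i : Fin (n + 1) => lam0 / 2 ^ (i : ℕ)) μinj
    intro i
    refine ⟨Module.End.mem_eigenspace_iff.mpr ?_, hyv0 (i : ℕ)⟩
    simpa [Matrix.mulVecLin_apply] using hyvev (i : ℕ)
  have hcard := hlin.fintype_card_le_finrank
  rw [Module.finrank_fin_fun, Fintype.card_fin] at hcard
  omega
end

section
/- There do not exist unitaries a_{j,l} on H_A and b_{k,l} on H_B (j, k, l ∈ {0,1}), bounded operators W_{j,k,l} on K representing a_{j,l} ⊗ b_{k,l}, and orthonormal vectors h_0, h_1 ∈ K such that for all j, k ∈ {0,1}: ⟨h_0, W_{j,k,0} h_0⟩ = 1/√2, ⟨h_1, W_{j,k,0} h_0⟩ = (−1)^{j−k}/√2, ⟨h_1, W_{j,k,1} h_1⟩ = 1/√2, and ⟨h_0, W_{j,k,1} h_1⟩ = (−1)^{j−k}/√2. -/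
open scoped InnerProductSpace

private lemma sq_le_cancel' {c b : ℝ} (hc : 0 ≤ c) (hb : 0 ≤ b) (h : c * c ≤ b * c) : c ≤ b := by
  rcases eq_or_lt_of_le hc with h0 | h0
  · simpa [← h0] using hb
  · exact le_of_mul_le_mul_right (by linarith [h]) h0

private lemma span_closure_ortho' {E : Type*} [NormedAddCommGroup E] [InnerProductSpace ℂ E]
    {s u : Set E} (h : ∀ a ∈ s, ∀ b ∈ u, ⟪a, b⟫_ℂ = 0) :
    ∀ v ∈ (Submodule.span ℂ s).topologicalClosure,
      ∀ w ∈ (Submodule.span ℂ u).topologicalClosure, ⟪v, w⟫_ℂ = 0 := by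
  have step1 : ∀ b ∈ u, ∀ v ∈ (Submodule.span ℂ s).topologicalClosure, ⟪b, v⟫_ℂ = 0 := by
    intro b hb
    have hle : (Submodule.span ℂ s).topologicalClosure ≤ (innerSL ℂ b).ker := by
      apply Submodule.topologicalClosure_minimal
      · rw [Submodule.span_le]
        intro a ha
        simp only [SetLike.mem_coe, LinearMap.mem_ker, ContinuousLinearMap.coe_coe, innerSL_apply_apply]
        exact inner_eq_zero_symm.mp (h a ha b hb)
      · exact ContinuousLinearMap.isClosed_ker (innerSL ℂ b)
    intro v hv
    simpa using hle hv
  intro v hv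
  have hle : (Submodule.span ℂ u).topologicalClosure ≤ (innerSL ℂ v).ker := by
    apply Submodule.topologicalClosure_minimal
    · rw [Submodule.span_le]
      intro b hb
      simp only [SetLike.mem_coe, LinearMap.mem_ker, ContinuousLinearMap.coe_coe, innerSL_apply_apply]
      exact inner_eq_zero_symm.mp (step1 b hb v hv)
    · exact ContinuousLinearMap.isClosed_ker (innerSL ℂ v)
  intro w hw
  simpa using hle hw

private lemma inner_proj_eq' {E : Type*} [NormedAddCommGroup E] [InnerProductSpace ℂ E]
    (V : Submodule ℂ E) [Submodule.HasOrthogonalProjection V] (x v : E) (hv : v ∈ V) :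
    ⟪x, v⟫_ℂ = ⟪(Submodule.orthogonalProjectionOnto V x : E), v⟫_ℂ := by
  have h := V.starProjection_inner_eq_zero x v hv
  rw [inner_sub_left, Submodule.starProjection_apply] at h
  linear_combination h

private lemma proj_pythag' {E : Type*} [NormedAddCommGroup E] [InnerProductSpace ℂ E]
    (V W : Submodule ℂ E) [Submodule.HasOrthogonalProjection V] [Submodule.HasOrthogonalProjection W]
    (hVW : ∀ v ∈ V, ∀ w ∈ W, ⟪v, w⟫_ℂ = 0) (x : E) :
    ‖(Submodule.orthogonalProjectionOnto V x : E)‖ ^ 2 + ‖(Submodule.orthogonalProjectionOnto W x : E)‖ ^ 2 ≤ ‖x‖ ^ 2 := by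
  set v := (Submodule.orthogonalProjectionOnto V x : E) with hvdef
  set w := (Submodule.orthogonalProjectionOnto W x : E) with hwdef
  have hvV : v ∈ V := (Submodule.orthogonalProjectionOnto V x).2
  have hwW : w ∈ W := (Submodule.orthogonalProjectionOnto W x).2
  have hvw : ⟪v, w⟫_ℂ = 0 := hVW v hvV w hwW
  have hxv : ⟪x, v⟫_ℂ = (‖v‖ : ℂ) ^ 2 := by
    rw [inner_proj_eq' V x v hvV, ← hvdef, inner_self_eq_norm_sq_to_K]; rfl
  have hxw : ⟪x, w⟫_ℂ = (‖w‖ : ℂ) ^ 2 := by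
    rw [inner_proj_eq' W x w hwW, ← hwdef, inner_self_eq_norm_sq_to_K]; rfl
  have hsum : ⟪x, v + w⟫_ℂ = (‖v‖ : ℂ) ^ 2 + (‖w‖ : ℂ) ^ 2 := by
    rw [inner_add_right, hxv, hxw]
  have hnvw : ‖v + w‖ ^ 2 = ‖v‖ ^ 2 + ‖w‖ ^ 2 := by
    have := @norm_add_sq ℂ _ _ _ _ v w
    rw [hvw] at this
    simpa using this
  have habs : ‖v‖ ^ 2 + ‖w‖ ^ 2 ≤ ‖x‖ * ‖v + w‖ := by
    have h1 : ‖⟪x, v + w⟫_ℂ‖ ≤ ‖x‖ * ‖v + w‖ := norm_inner_le_norm x (v + w)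
    have h2 : ‖⟪x, v + w⟫_ℂ‖ = ‖v‖ ^ 2 + ‖w‖ ^ 2 := by
      rw [hsum]
      rw [show ((‖v‖ : ℂ) ^ 2 + (‖w‖ : ℂ) ^ 2) = (((‖v‖ ^ 2 + ‖w‖ ^ 2 : ℝ)) : ℂ) by push_cast; ring]
      rw [Complex.norm_real, Real.norm_eq_abs, abs_of_nonneg (by positivity)]
    linarith [h1, h2.le, h2.ge]
  have hle : ‖v + w‖ ≤ ‖x‖ := by
    apply sq_le_cancel' (norm_nonneg _) (norm_nonneg _)
    calc ‖v + w‖ * ‖v + w‖ = ‖v‖ ^ 2 + ‖w‖ ^ 2 := by rw [← hnvw]; ring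
    _ ≤ ‖x‖ * ‖v + w‖ := habs
  calc ‖v‖ ^ 2 + ‖w‖ ^ 2 = ‖v + w‖ ^ 2 := hnvw.symm
  _ ≤ ‖x‖ ^ 2 := by nlinarith [norm_nonneg (v + w), norm_nonneg x]

private lemma maxLemma' {HA HB : Type*}
    [NormedAddCommGroup HA] [InnerProductSpace ℂ HA] [CompleteSpace HA]
    [NormedAddCommGroup HB] [InnerProductSpace ℂ HB] [CompleteSpace HB]
    (f0 f1 : HA → HB → ℂ) (ξ0 ξ1 : HB → HA) (η0 η1 : HA → HB) (N0 N1 : ℝ)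
    (hN0 : 0 ≤ N0) (hN1 : 0 ≤ N1)
    (hxi0 : ∀ x y, ⟪x, ξ0 y⟫_ℂ = f0 x y) (hxi1 : ∀ x y, ⟪x, ξ1 y⟫_ℂ = f1 x y)
    (heta0 : ∀ x y, ⟪y, η0 x⟫_ℂ = f0 x y) (heta1 : ∀ x y, ⟪y, η1 x⟫_ℂ = f1 x y)
    (hO1 : ∀ y y', ⟪ξ0 y, ξ1 y'⟫_ℂ = 0) (hO2 : ∀ x x', ⟪η0 x, η1 x'⟫_ℂ = 0)
    (hb0 : ∀ x y, ‖f0 x y‖ ≤ N0 * (‖x‖ * ‖y‖)) (hb1 : ∀ x y, ‖f1 x y‖ ≤ N1 * (‖x‖ * ‖y‖)) :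
    ∀ x y, ‖f0 x y + f1 x y‖ ≤ max N0 N1 * (‖x‖ * ‖y‖) := by
  have sqabsA : ∀ (v : HA), ‖v‖ * ‖v‖ = ‖((‖v‖ : ℂ) ^ 2)‖ := by
    intro v
    rw [norm_pow, Complex.norm_real, norm_norm]; ring
  have sqabsB : ∀ (v : HB), ‖v‖ * ‖v‖ = ‖((‖v‖ : ℂ) ^ 2)‖ := by
    intro v
    rw [norm_pow, Complex.norm_real, norm_norm]; ring
  have hetab0 : ∀ x, ‖η0 x‖ ≤ N0 * ‖x‖ := by
    intro x
    apply sq_le_cancel' (norm_nonneg _) (by positivity)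
    have h2 : (‖η0 x‖ : ℂ) ^ 2 = f0 x (η0 x) := by
      rw [← heta0 x (η0 x), inner_self_eq_norm_sq_to_K]; rfl
    calc ‖η0 x‖ * ‖η0 x‖ = ‖f0 x (η0 x)‖ := by rw [← h2]; exact sqabsB _
      _ ≤ N0 * (‖x‖ * ‖η0 x‖) := hb0 x (η0 x)
      _ = N0 * ‖x‖ * ‖η0 x‖ := by ring
  have hetab1 : ∀ x, ‖η1 x‖ ≤ N1 * ‖x‖ := by
    intro x
    apply sq_le_cancel' (norm_nonneg _) (by positivity)
    have h2 : (‖η1 x‖ : ℂ) ^ 2 = f1 x (η1 x) := by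
      rw [← heta1 x (η1 x), inner_self_eq_norm_sq_to_K]; rfl
    calc ‖η1 x‖ * ‖η1 x‖ = ‖f1 x (η1 x)‖ := by rw [← h2]; exact sqabsB _
      _ ≤ N1 * (‖x‖ * ‖η1 x‖) := hb1 x (η1 x)
      _ = N1 * ‖x‖ * ‖η1 x‖ := by ring
  set V0 := (Submodule.span ℂ (Set.range ξ0)).topologicalClosure with hV0def
  set V1 := (Submodule.span ℂ (Set.range ξ1)).topologicalClosure with hV1def
  set W0 := (Submodule.span ℂ (Set.range η0)).topologicalClosure with hW0def
  set W1 := (Submodule.span ℂ (Set.range η1)).topologicalClosure with hW1def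
  haveI : CompleteSpace V0 := (Submodule.isClosed_topologicalClosure _).completeSpace_coe
  haveI : CompleteSpace V1 := (Submodule.isClosed_topologicalClosure _).completeSpace_coe
  haveI : CompleteSpace W0 := (Submodule.isClosed_topologicalClosure _).completeSpace_coe
  haveI : CompleteSpace W1 := (Submodule.isClosed_topologicalClosure _).completeSpace_coe
  have hV : ∀ v ∈ V0, ∀ w ∈ V1, ⟪v, w⟫_ℂ = 0 := by
    apply span_closure_ortho'
    rintro a ⟨y, rfl⟩ b ⟨y', rfl⟩
    exact hO1 y y'
  have hW : ∀ v ∈ W0, ∀ w ∈ W1, ⟪v, w⟫_ℂ = 0 := by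
    apply span_closure_ortho'
    rintro a ⟨x, rfl⟩ b ⟨x', rfl⟩
    exact hO2 x x'
  have memV0 : ∀ y, ξ0 y ∈ V0 :=
    fun y => Submodule.le_topologicalClosure _ (Submodule.subset_span ⟨y, rfl⟩)
  have memV1 : ∀ y, ξ1 y ∈ V1 :=
    fun y => Submodule.le_topologicalClosure _ (Submodule.subset_span ⟨y, rfl⟩)
  have memW0 : ∀ x, η0 x ∈ W0 :=
    fun x => Submodule.le_topologicalClosure _ (Submodule.subset_span ⟨x, rfl⟩)
  have memW1 : ∀ x, η1 x ∈ W1 :=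
    fun x => Submodule.le_topologicalClosure _ (Submodule.subset_span ⟨x, rfl⟩)
  have key0 : ∀ x y, ‖f0 x y‖ ≤
      N0 * (‖(Submodule.orthogonalProjectionOnto V0 x : HA)‖ * ‖(Submodule.orthogonalProjectionOnto W0 y : HB)‖) := by
    intro x y
    have hxib : ‖ξ0 y‖ ≤ N0 * ‖(Submodule.orthogonalProjectionOnto W0 y : HB)‖ := by
      apply sq_le_cancel' (norm_nonneg _) (by positivity)
      have e1 : (‖ξ0 y‖ : ℂ) ^ 2 = f0 (ξ0 y) y := by
        rw [← hxi0 (ξ0 y) y, inner_self_eq_norm_sq_to_K]; rfl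
      have e2 : f0 (ξ0 y) y = ⟪(Submodule.orthogonalProjectionOnto W0 y : HB), η0 (ξ0 y)⟫_ℂ := by
        rw [← heta0 (ξ0 y) y]
        exact inner_proj_eq' W0 y _ (memW0 _)
      calc ‖ξ0 y‖ * ‖ξ0 y‖ = ‖f0 (ξ0 y) y‖ := by rw [← e1]; exact sqabsA _
        _ = ‖⟪(Submodule.orthogonalProjectionOnto W0 y : HB), η0 (ξ0 y)⟫_ℂ‖ := by rw [e2]
        _ ≤ ‖(Submodule.orthogonalProjectionOnto W0 y : HB)‖ * ‖η0 (ξ0 y)‖ := norm_inner_le_norm _ _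
        _ ≤ ‖(Submodule.orthogonalProjectionOnto W0 y : HB)‖ * (N0 * ‖ξ0 y‖) :=
            mul_le_mul_of_nonneg_left (hetab0 _) (norm_nonneg _)
        _ = N0 * ‖(Submodule.orthogonalProjectionOnto W0 y : HB)‖ * ‖ξ0 y‖ := by ring
    calc ‖f0 x y‖ = ‖⟪x, ξ0 y⟫_ℂ‖ := by rw [hxi0]
      _ = ‖⟪(Submodule.orthogonalProjectionOnto V0 x : HA), ξ0 y⟫_ℂ‖ := by
          rw [inner_proj_eq' V0 x _ (memV0 y)]
      _ ≤ ‖(Submodule.orthogonalProjectionOnto V0 x : HA)‖ * ‖ξ0 y‖ := norm_inner_le_norm _ _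
      _ ≤ ‖(Submodule.orthogonalProjectionOnto V0 x : HA)‖ * (N0 * ‖(Submodule.orthogonalProjectionOnto W0 y : HB)‖) :=
          mul_le_mul_of_nonneg_left hxib (norm_nonneg _)
      _ = N0 * (‖(Submodule.orthogonalProjectionOnto V0 x : HA)‖ * ‖(Submodule.orthogonalProjectionOnto W0 y : HB)‖) := by
          ring
  have key1 : ∀ x y, ‖f1 x y‖ ≤
      N1 * (‖(Submodule.orthogonalProjectionOnto V1 x : HA)‖ * ‖(Submodule.orthogonalProjectionOnto W1 y : HB)‖) := by
    intro x y
    have hxib : ‖ξ1 y‖ ≤ N1 * ‖(Submodule.orthogonalProjectionOnto W1 y : HB)‖ := by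
      apply sq_le_cancel' (norm_nonneg _) (by positivity)
      have e1 : (‖ξ1 y‖ : ℂ) ^ 2 = f1 (ξ1 y) y := by
        rw [← hxi1 (ξ1 y) y, inner_self_eq_norm_sq_to_K]; rfl
      have e2 : f1 (ξ1 y) y = ⟪(Submodule.orthogonalProjectionOnto W1 y : HB), η1 (ξ1 y)⟫_ℂ := by
        rw [← heta1 (ξ1 y) y]
        exact inner_proj_eq' W1 y _ (memW1 _)
      calc ‖ξ1 y‖ * ‖ξ1 y‖ = ‖f1 (ξ1 y) y‖ := by rw [← e1]; exact sqabsA _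
        _ = ‖⟪(Submodule.orthogonalProjectionOnto W1 y : HB), η1 (ξ1 y)⟫_ℂ‖ := by rw [e2]
        _ ≤ ‖(Submodule.orthogonalProjectionOnto W1 y : HB)‖ * ‖η1 (ξ1 y)‖ := norm_inner_le_norm _ _
        _ ≤ ‖(Submodule.orthogonalProjectionOnto W1 y : HB)‖ * (N1 * ‖ξ1 y‖) :=
            mul_le_mul_of_nonneg_left (hetab1 _) (norm_nonneg _)
        _ = N1 * ‖(Submodule.orthogonalProjectionOnto W1 y : HB)‖ * ‖ξ1 y‖ := by ring
    calc ‖f1 x y‖ = ‖⟪x, ξ1 y⟫_ℂ‖ := by rw [hxi1]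
      _ = ‖⟪(Submodule.orthogonalProjectionOnto V1 x : HA), ξ1 y⟫_ℂ‖ := by
          rw [inner_proj_eq' V1 x _ (memV1 y)]
      _ ≤ ‖(Submodule.orthogonalProjectionOnto V1 x : HA)‖ * ‖ξ1 y‖ := norm_inner_le_norm _ _
      _ ≤ ‖(Submodule.orthogonalProjectionOnto V1 x : HA)‖ * (N1 * ‖(Submodule.orthogonalProjectionOnto W1 y : HB)‖) :=
          mul_le_mul_of_nonneg_left hxib (norm_nonneg _)
      _ = N1 * (‖(Submodule.orthogonalProjectionOnto V1 x : HA)‖ * ‖(Submodule.orthogonalProjectionOnto W1 y : HB)‖) := by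
          ring
  intro x y
  set a0 := ‖(Submodule.orthogonalProjectionOnto V0 x : HA)‖ with ha0
  set a1 := ‖(Submodule.orthogonalProjectionOnto V1 x : HA)‖ with ha1
  set b0 := ‖(Submodule.orthogonalProjectionOnto W0 y : HB)‖ with hb0'
  set b1 := ‖(Submodule.orthogonalProjectionOnto W1 y : HB)‖ with hb1'
  have ha0n : 0 ≤ a0 := norm_nonneg _
  have ha1n : 0 ≤ a1 := norm_nonneg _
  have hb0n : 0 ≤ b0 := norm_nonneg _
  have hb1n : 0 ≤ b1 := norm_nonneg _
  have pa : a0 ^ 2 + a1 ^ 2 ≤ ‖x‖ ^ 2 := proj_pythag' V0 V1 hV x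
  have pb : b0 ^ 2 + b1 ^ 2 ≤ ‖y‖ ^ 2 := proj_pythag' W0 W1 hW y
  have hcs : a0 * b0 + a1 * b1 ≤ ‖x‖ * ‖y‖ := by
    have h1 : (a0 * b0 + a1 * b1) ^ 2 ≤ (‖x‖ * ‖y‖) ^ 2 := by
      have h2 : (a0 * b0 + a1 * b1) ^ 2 ≤ (a0 ^ 2 + a1 ^ 2) * (b0 ^ 2 + b1 ^ 2) := by
        nlinarith [sq_nonneg (a0 * b1 - a1 * b0)]
      have h3 : (a0 ^ 2 + a1 ^ 2) * (b0 ^ 2 + b1 ^ 2) ≤ ‖x‖ ^ 2 * ‖y‖ ^ 2 := by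
        have := mul_le_mul pa pb (by positivity) (by positivity)
        linarith
      calc (a0 * b0 + a1 * b1) ^ 2 ≤ (a0 ^ 2 + a1 ^ 2) * (b0 ^ 2 + b1 ^ 2) := h2
        _ ≤ ‖x‖ ^ 2 * ‖y‖ ^ 2 := h3
        _ = (‖x‖ * ‖y‖) ^ 2 := by ring
    exact le_of_pow_le_pow_left₀ (by norm_num) (by positivity) h1
  calc ‖f0 x y + f1 x y‖ ≤ ‖f0 x y‖ + ‖f1 x y‖ := norm_add_le _ _
    _ ≤ N0 * (a0 * b0) + N1 * (a1 * b1) := add_le_add (key0 x y) (key1 x y)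
    _ ≤ max N0 N1 * (a0 * b0) + max N0 N1 * (a1 * b1) := by
        apply add_le_add
        · exact mul_le_mul_of_nonneg_right (le_max_left _ _) (by positivity)
        · exact mul_le_mul_of_nonneg_right (le_max_right _ _) (by positivity)
    _ = max N0 N1 * (a0 * b0 + a1 * b1) := by ring
    _ ≤ max N0 N1 * (‖x‖ * ‖y‖) := mul_le_mul_of_nonneg_left hcs (le_max_of_le_left hN0)

private lemma riesz_pair' {HA HB K : Type*}
    [NormedAddCommGroup HA] [InnerProductSpace ℂ HA] [CompleteSpace HA]
    [NormedAddCommGroup HB] [InnerProductSpace ℂ HB] [CompleteSpace HB]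
    [NormedAddCommGroup K] [InnerProductSpace ℂ K]
    (t : HA →ₗ[ℂ] HB →ₗ[ℂ] K) (hnt : ∀ x y, ‖t x y‖ = ‖x‖ * ‖y‖) (u : K) :
    ∃ (ξ : HB → HA) (η : HA → HB),
      (∀ x y, ⟪x, ξ y⟫_ℂ = ⟪t x y, u⟫_ℂ) ∧ (∀ x y, ⟪y, η x⟫_ℂ = ⟪t x y, u⟫_ℂ) := by
  have hbA : ∀ (y : HB) (x : HA), ‖⟪u, t x y⟫_ℂ‖ ≤ ‖u‖ * ‖y‖ * ‖x‖ := by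
    intro y x
    calc ‖⟪u, t x y⟫_ℂ‖ ≤ ‖u‖ * ‖t x y‖ := norm_inner_le_norm _ _
      _ = ‖u‖ * ‖y‖ * ‖x‖ := by rw [hnt]; ring
  have hbB : ∀ (x : HA) (y : HB), ‖⟪u, t x y⟫_ℂ‖ ≤ ‖u‖ * ‖x‖ * ‖y‖ := by
    intro x y
    calc ‖⟪u, t x y⟫_ℂ‖ ≤ ‖u‖ * ‖t x y‖ := norm_inner_le_norm _ _
      _ = ‖u‖ * ‖x‖ * ‖y‖ := by rw [hnt]; ring
  refine ⟨fun y => (InnerProductSpace.toDual ℂ HA).symm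
      (LinearMap.mkContinuous
        { toFun := fun x => ⟪u, t x y⟫_ℂ
          map_add' := by intro a b; simp [inner_add_right]
          map_smul' := by intro c a; simp [inner_smul_right] }
        (‖u‖ * ‖y‖) (hbA y)),
    fun x => (InnerProductSpace.toDual ℂ HB).symm
      (LinearMap.mkContinuous
        { toFun := fun y => ⟪u, t x y⟫_ℂ
          map_add' := by intro a b; simp [inner_add_right]
          map_smul' := by intro c a; simp [inner_smul_right] }
        (‖u‖ * ‖x‖) (hbB x)), ?_, ?_⟩
  · intro x y
    rw [← inner_conj_symm]
    rw [InnerProductSpace.toDual_symm_apply]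
    simp only [LinearMap.mkContinuous_apply, LinearMap.coe_mk, AddHom.coe_mk]
    exact inner_conj_symm _ _
  · intro x y
    rw [← inner_conj_symm]
    rw [InnerProductSpace.toDual_symm_apply]
    simp only [LinearMap.mkContinuous_apply, LinearMap.coe_mk, AddHom.coe_mk]
    exact inner_conj_symm _ _

private lemma wIso' {HA HB K : Type*}
    [NormedAddCommGroup HA] [InnerProductSpace ℂ HA]
    [NormedAddCommGroup HB] [InnerProductSpace ℂ HB]
    [NormedAddCommGroup K] [InnerProductSpace ℂ K]
    (t : HA →ₗ[ℂ] HB →ₗ[ℂ] K)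
    (ht : ∀ (x x' : HA) (y y' : HB), ⟪t x y, t x' y'⟫_ℂ = ⟪x, x'⟫_ℂ * ⟪y, y'⟫_ℂ)
    (hspan : (Submodule.span ℂ
        (Set.range fun p : HA × HB => t p.1 p.2)).topologicalClosure = ⊤)
    (A : HA ≃ₗᵢ[ℂ] HA) (B : HB ≃ₗᵢ[ℂ] HB) (W : K →L[ℂ] K)
    (hrep : ∀ x y, W (t x y) = t (A x) (B y)) :
    ∀ u v : K, ⟪W u, W v⟫_ℂ = ⟪u, v⟫_ℂ := by
  set S := Submodule.span ℂ (Set.range fun p : HA × HB => t p.1 p.2) with hS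
  have hcl : closure (S : Set K) = Set.univ := by
    have := congrArg (fun (M : Submodule ℂ K) => (M : Set K)) hspan
    simpa [Submodule.topologicalClosure_coe] using this
  have base : ∀ (x : HA) (y : HB) (x' : HA) (y' : HB),
      ⟪W (t x y), W (t x' y')⟫_ℂ = ⟪t x y, t x' y'⟫_ℂ := by
    intro x y x' y'
    rw [hrep, hrep, ht, ht, LinearIsometryEquiv.inner_map_map, LinearIsometryEquiv.inner_map_map]
  have stage1 : ∀ v ∈ S, ∀ (x : HA) (y : HB), ⟪W (t x y), W v⟫_ℂ = ⟪t x y, v⟫_ℂ := by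
    intro v hv
    induction hv using Submodule.span_induction with
    | mem v hv =>
        obtain ⟨⟨x', y'⟩, rfl⟩ := hv
        intro x y
        exact base x y x' y'
    | zero => intro x y; simp
    | add v w _ _ ihv ihw => intro x y; simp [inner_add_right, map_add, ihv x y, ihw x y]
    | smul c v _ ihv => intro x y; simp [inner_smul_right, map_smul, ihv x y]
  have stage2 : ∀ v ∈ S, ∀ w ∈ S, ⟪W w, W v⟫_ℂ = ⟪w, v⟫_ℂ := by
    intro v hv w hw
    induction hw using Submodule.span_induction with
    | mem w hw =>
        obtain ⟨⟨x, y⟩, rfl⟩ := hw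
        exact stage1 v hv x y
    | zero => simp
    | add p q _ _ ihp ihq => simp [inner_add_left, map_add, ihp, ihq]
    | smul c p _ ihp => simp [inner_smul_left, map_smul, ihp]
  have stage3 : ∀ (w : K), ∀ v ∈ S, ⟪W w, W v⟫_ℂ = ⟪w, v⟫_ℂ := by
    intro w v hv
    have hC : IsClosed {u : K | ⟪W u, W v⟫_ℂ = ⟪u, v⟫_ℂ} := by
      apply isClosed_eq
      · exact Continuous.inner (W.continuous) continuous_const
      · exact Continuous.inner continuous_id continuous_const
    have hsub : (S : Set K) ⊆ {u : K | ⟪W u, W v⟫_ℂ = ⟪u, v⟫_ℂ} := fun u hu => stage2 v hv u hu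
    have : closure (S : Set K) ⊆ {u : K | ⟪W u, W v⟫_ℂ = ⟪u, v⟫_ℂ} :=
      closure_minimal hsub hC
    exact this (by rw [hcl]; trivial)
  intro u v
  have hC : IsClosed {w : K | ⟪W u, W w⟫_ℂ = ⟪u, w⟫_ℂ} := by
    apply isClosed_eq
    · exact Continuous.inner continuous_const (W.continuous)
    · exact Continuous.inner continuous_const continuous_id
  have hsub : (S : Set K) ⊆ {w : K | ⟪W u, W w⟫_ℂ = ⟪u, w⟫_ℂ} := fun w hw => stage3 u w hw
  have : closure (S : Set K) ⊆ _ := closure_minimal hsub hC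
  exact this (by rw [hcl]; trivial)

private lemma pin' {K : Type*} [NormedAddCommGroup K] [InnerProductSpace ℂ K]
    (Wv u0 u1 : K) (ε : ℂ) (hε : ε = 1 ∨ ε = -1)
    (hu0 : ‖u0‖ = 1) (hu1 : ‖u1‖ = 1) (hu01 : ⟪u0, u1⟫_ℂ = 0)
    (hWW : ⟪Wv, Wv⟫_ℂ = 1)
    (hc0 : ⟪u0, Wv⟫_ℂ = (Real.sqrt 2 : ℂ)⁻¹)
    (hc1 : ⟪u1, Wv⟫_ℂ = ε * (Real.sqrt 2 : ℂ)⁻¹) :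
    Wv = (Real.sqrt 2 : ℂ)⁻¹ • (u0 + ε • u1) := by
  set c : ℂ := (Real.sqrt 2 : ℂ)⁻¹ with hc
  have hs2 : ((Real.sqrt 2 : ℝ) : ℂ) * ((Real.sqrt 2 : ℝ) : ℂ) = 2 := by
    rw [← Complex.ofReal_mul, Real.mul_self_sqrt (by norm_num : (0:ℝ) ≤ 2)]
    norm_num
  have h2c : 2 * (c * c) = 1 := by
    rw [hc, ← mul_inv, hs2]
    norm_num
  have hcc : (starRingEnd ℂ) c = c := by
    rw [hc, map_inv₀, Complex.conj_ofReal]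
  have hεc : (starRingEnd ℂ) ε = ε := by
    rcases hε with h | h <;> simp [h]
  have hε2 : ε * ε = 1 := by
    rcases hε with h | h <;> simp [h]
  have hi2 : ⟪u0, u0⟫_ℂ = 1 := by rw [inner_self_eq_norm_sq_to_K, hu0]; norm_num
  have hi3 : ⟪u1, u1⟫_ℂ = 1 := by rw [inner_self_eq_norm_sq_to_K, hu1]; norm_num
  have hi5 : ⟪u1, u0⟫_ℂ = 0 := by rw [← inner_conj_symm, hu01, map_zero]
  have hi6 : ⟪Wv, u0⟫_ℂ = c := by rw [← inner_conj_symm, hc0, hcc]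
  have hi7 : ⟪Wv, u1⟫_ℂ = ε * c := by
    rw [← inner_conj_symm, hc1, map_mul, hcc, hεc]
  have hdd : ⟪Wv - c • (u0 + ε • u1), Wv - c • (u0 + ε • u1)⟫_ℂ = 0 := by
    simp only [inner_sub_left, inner_sub_right, inner_add_left, inner_add_right,
      inner_smul_left, inner_smul_right, hWW, hi2, hi3, hu01, hi5, hi6, hi7, hc0, hc1,
      hcc, hεc]
    ring_nf
    linear_combination (-(c * c)) * hε2 - h2c
  have h0 := inner_self_eq_zero.mp hdd
  exact sub_eq_zero.mp h0

noncomputable def NNval {HA HB K : Type*}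
    [NormedAddCommGroup HA] [InnerProductSpace ℂ HA]
    [NormedAddCommGroup HB] [InnerProductSpace ℂ HB]
    [NormedAddCommGroup K] [InnerProductSpace ℂ K]
    (t : HA →ₗ[ℂ] HB →ₗ[ℂ] K) (u : K) : ℝ :=
  sSup ((fun p : HA × HB => ‖(⟪t p.1 p.2, u⟫_ℂ)‖) '' {p : HA × HB | ‖p.1‖ ≤ 1 ∧ ‖p.2‖ ≤ 1})

section NNlemmas

variable {HA HB K : Type*}
    [NormedAddCommGroup HA] [InnerProductSpace ℂ HA]
    [NormedAddCommGroup HB] [InnerProductSpace ℂ HB]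
    [NormedAddCommGroup K] [InnerProductSpace ℂ K]
    (t : HA →ₗ[ℂ] HB →ₗ[ℂ] K)

private lemma NN_bddAbove (hnt : ∀ x y, ‖t x y‖ = ‖x‖ * ‖y‖) (u : K) :
    BddAbove ((fun p : HA × HB => ‖(⟪t p.1 p.2, u⟫_ℂ)‖) ''
      {p : HA × HB | ‖p.1‖ ≤ 1 ∧ ‖p.2‖ ≤ 1}) := by
  refine ⟨‖u‖, ?_⟩
  rintro r ⟨⟨x, y⟩, ⟨hx, hy⟩, rfl⟩
  calc ‖⟪t x y, u⟫_ℂ‖ ≤ ‖t x y‖ * ‖u‖ := norm_inner_le_norm _ _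
    _ = (‖x‖ * ‖y‖) * ‖u‖ := by rw [hnt]
    _ ≤ (1 * 1) * ‖u‖ := by
        apply mul_le_mul_of_nonneg_right _ (norm_nonneg u)
        exact mul_le_mul hx hy (norm_nonneg _) (by norm_num)
    _ = ‖u‖ := by ring

private lemma NN_mem_zero (u : K) :
    (0 : ℝ) ∈ ((fun p : HA × HB => ‖(⟪t p.1 p.2, u⟫_ℂ)‖) ''
      {p : HA × HB | ‖p.1‖ ≤ 1 ∧ ‖p.2‖ ≤ 1}) := by
  refine ⟨((0 : HA), (0 : HB)), ⟨by simp, by simp⟩, ?_⟩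
  simp

private lemma NN_nonneg (hnt : ∀ x y, ‖t x y‖ = ‖x‖ * ‖y‖) (u : K) : 0 ≤ NNval t u :=
  le_csSup (NN_bddAbove t hnt u) (NN_mem_zero t u)

private lemma NN_bound (hnt : ∀ x y, ‖t x y‖ = ‖x‖ * ‖y‖) (u : K) :
    ∀ x y, ‖⟪t x y, u⟫_ℂ‖ ≤ NNval t u * (‖x‖ * ‖y‖) := by
  intro x y
  by_cases hx : x = 0
  · subst hx
    simp [NN_nonneg t hnt u]
  by_cases hy : y = 0
  · subst hy
    simp [NN_nonneg t hnt u]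
  have hxn : (0 : ℝ) < ‖x‖ := norm_pos_iff.mpr hx
  have hyn : (0 : ℝ) < ‖y‖ := norm_pos_iff.mpr hy
  set x' : HA := ((‖x‖ : ℝ) : ℂ)⁻¹ • x with hx'
  set y' : HB := ((‖y‖ : ℝ) : ℂ)⁻¹ • y with hy'
  have hx'n : ‖x'‖ = 1 := by
    rw [hx', norm_smul, norm_inv, Complex.norm_real, norm_norm]
    field_simp
  have hy'n : ‖y'‖ = 1 := by
    rw [hy', norm_smul, norm_inv, Complex.norm_real, norm_norm]
    field_simp
  have hmem : ‖⟪t x' y', u⟫_ℂ‖ ∈ ((fun p : HA × HB => ‖(⟪t p.1 p.2, u⟫_ℂ)‖) ''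
      {p : HA × HB | ‖p.1‖ ≤ 1 ∧ ‖p.2‖ ≤ 1}) :=
    ⟨(x', y'), ⟨le_of_eq hx'n, le_of_eq hy'n⟩, rfl⟩
  have hle : ‖⟪t x' y', u⟫_ℂ‖ ≤ NNval t u := le_csSup (NN_bddAbove t hnt u) hmem
  have hx0 : ((‖x‖ : ℝ) : ℂ) ≠ 0 := by
    simp only [ne_eq, Complex.ofReal_eq_zero]
    exact ne_of_gt hxn
  have hy0 : ((‖y‖ : ℝ) : ℂ) ≠ 0 := by
    simp only [ne_eq, Complex.ofReal_eq_zero]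
    exact ne_of_gt hyn
  have hrw : (⟪t x y, u⟫_ℂ) = (((‖x‖ : ℝ) : ℂ) * ((‖y‖ : ℝ) : ℂ)) * ⟪t x' y', u⟫_ℂ := by
    rw [hx', hy']
    simp only [map_smul, LinearMap.smul_apply, inner_smul_left, map_inv₀, Complex.conj_ofReal]
    field_simp
  calc ‖⟪t x y, u⟫_ℂ‖ = ‖(((‖x‖ : ℝ) : ℂ) * ((‖y‖ : ℝ) : ℂ))‖ * ‖⟪t x' y', u⟫_ℂ‖ := by
        rw [hrw, norm_mul]
    _ = (‖x‖ * ‖y‖) * ‖⟪t x' y', u⟫_ℂ‖ := by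
        rw [norm_mul, Complex.norm_real, Complex.norm_real, norm_norm, norm_norm]
    _ ≤ (‖x‖ * ‖y‖) * NNval t u := by
        apply mul_le_mul_of_nonneg_left hle (by positivity)
    _ = NNval t u * (‖x‖ * ‖y‖) := by ring

private lemma NN_le (u : K) {M : ℝ}
    (h : ∀ x y, ‖x‖ ≤ 1 → ‖y‖ ≤ 1 → ‖⟪t x y, u⟫_ℂ‖ ≤ M) : NNval t u ≤ M := by
  apply csSup_le ⟨0, NN_mem_zero t u⟩
  rintro r ⟨⟨x, y⟩, ⟨hx, hy⟩, rfl⟩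
  exact h x y hx hy

end NNlemmas

private lemma inner_symm_right' {E : Type*} [NormedAddCommGroup E] [InnerProductSpace ℂ E]
    (e : E ≃ₗᵢ[ℂ] E) (x v : E) : ⟪x, e.symm v⟫_ℂ = ⟪e x, v⟫_ℂ := by
  conv_rhs => rw [← e.apply_symm_apply v]
  rw [e.inner_map_map]

private lemma inner_symm_left' {E : Type*} [NormedAddCommGroup E] [InnerProductSpace ℂ E]
    (e : E ≃ₗᵢ[ℂ] E) (x v : E) : ⟪e.symm x, v⟫_ℂ = ⟪x, e v⟫_ℂ := by
  conv_rhs => rw [← e.apply_symm_apply x]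
  rw [e.inner_map_map]

private lemma half' {HA HB K : Type*}
    [NormedAddCommGroup HA] [InnerProductSpace ℂ HA] [CompleteSpace HA]
    [NormedAddCommGroup HB] [InnerProductSpace ℂ HB] [CompleteSpace HB]
    [NormedAddCommGroup K] [InnerProductSpace ℂ K] [CompleteSpace K]
    (t : HA →ₗ[ℂ] HB →ₗ[ℂ] K)
    (ht : ∀ (x x' : HA) (y y' : HB), ⟪t x y, t x' y'⟫_ℂ = ⟪x, x'⟫_ℂ * ⟪y, y'⟫_ℂ)
    (hspan : (Submodule.span ℂ
        (Set.range fun p : HA × HB => t p.1 p.2)).topologicalClosure = ⊤)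
    (A : Fin 2 → (HA ≃ₗᵢ[ℂ] HA)) (B : Fin 2 → (HB ≃ₗᵢ[ℂ] HB))
    (W2 : Fin 2 → Fin 2 → (K →L[ℂ] K)) (u0 u1 : K)
    (hrep : ∀ (j k : Fin 2) (x : HA) (y : HB), W2 j k (t x y) = t (A j x) (B k y))
    (hu0 : ‖u0‖ = 1) (hu1 : ‖u1‖ = 1) (hu01 : ⟪u0, u1⟫_ℂ = 0)
    (hc0 : ∀ j k : Fin 2, ⟪u0, W2 j k u0⟫_ℂ = (Real.sqrt 2 : ℂ)⁻¹)
    (hc1 : ∀ j k : Fin 2,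
      ⟪u1, W2 j k u0⟫_ℂ = (-1 : ℂ) ^ ((j : ℤ) - (k : ℤ)) * (Real.sqrt 2 : ℂ)⁻¹) :
    Real.sqrt 2 * NNval t u0 ≤ max (NNval t u0) (NNval t u1) := by
  have hs2pos : (0 : ℝ) < Real.sqrt 2 := Real.sqrt_pos.mpr (by norm_num)
  have hs2ne : ((Real.sqrt 2 : ℝ) : ℂ) ≠ 0 := by
    simp only [ne_eq, Complex.ofReal_eq_zero]
    exact ne_of_gt hs2pos
  have hnt : ∀ x y, ‖t x y‖ = ‖x‖ * ‖y‖ := by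
    intro x y
    have h' := congrArg (RCLike.re (K := ℂ)) (ht x x y y)
    rw [inner_self_eq_norm_sq] at h'
    rw [inner_self_eq_norm_sq_to_K (𝕜 := ℂ) x, inner_self_eq_norm_sq_to_K (𝕜 := ℂ) y] at h'
    simp only [← RCLike.ofReal_pow, ← RCLike.ofReal_mul, RCLike.ofReal_re] at h'
    have h3 : ‖t x y‖ ^ 2 = (‖x‖ * ‖y‖) ^ 2 := by rw [h']; ring
    calc ‖t x y‖ = Real.sqrt (‖t x y‖ ^ 2) := (Real.sqrt_sq (norm_nonneg _)).symm
      _ = Real.sqrt ((‖x‖ * ‖y‖) ^ 2) := by rw [h3]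
      _ = ‖x‖ * ‖y‖ := Real.sqrt_sq (mul_nonneg (norm_nonneg _) (norm_nonneg _))
  have hiso : ∀ (j k : Fin 2) (u v : K), ⟪W2 j k u, W2 j k v⟫_ℂ = ⟪u, v⟫_ℂ :=
    fun j k => wIso' t ht hspan (A j) (B k) (W2 j k) (hrep j k)
  have hWW : ∀ j k : Fin 2, ⟪W2 j k u0, W2 j k u0⟫_ℂ = 1 := by
    intro j k
    rw [hiso, inner_self_eq_norm_sq_to_K, hu0]
    norm_num
  have hεpm : ∀ j k : Fin 2,
      (-1 : ℂ) ^ ((j : ℤ) - (k : ℤ)) = 1 ∨ (-1 : ℂ) ^ ((j : ℤ) - (k : ℤ)) = -1 := by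
    intro j k
    fin_cases j <;> fin_cases k <;> norm_num
  have himg : ∀ j k : Fin 2, W2 j k u0
      = (Real.sqrt 2 : ℂ)⁻¹ • (u0 + ((-1 : ℂ) ^ ((j : ℤ) - (k : ℤ))) • u1) :=
    fun j k => pin' (W2 j k u0) u0 u1 _ (hεpm j k) hu0 hu1 hu01 (hWW j k) (hc0 j k) (hc1 j k)
  have key : ∀ (j k : Fin 2) (x : HA) (y : HB),
      ⟪t (A j x) (B k y), u0⟫_ℂ + (-1 : ℂ) ^ ((j : ℤ) - (k : ℤ)) * ⟪t (A j x) (B k y), u1⟫_ℂ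
        = ((Real.sqrt 2 : ℝ) : ℂ) * ⟪t x y, u0⟫_ℂ := by
    intro j k x y
    have h1 : u0 + ((-1 : ℂ) ^ ((j : ℤ) - (k : ℤ))) • u1
        = ((Real.sqrt 2 : ℝ) : ℂ) • W2 j k u0 := by
      rw [himg j k, smul_smul, mul_inv_cancel₀ hs2ne, one_smul]
    have hsum : ⟪t (A j x) (B k y), u0 + ((-1 : ℂ) ^ ((j : ℤ) - (k : ℤ))) • u1⟫_ℂ
        = ((Real.sqrt 2 : ℝ) : ℂ) * ⟪t x y, u0⟫_ℂ := by
      rw [h1, inner_smul_right, ← hrep j k x y, hiso j k]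
    rw [inner_add_right, inner_smul_right] at hsum
    exact hsum
  have e00 : ((-1 : ℂ) ^ (((0 : Fin 2) : ℤ) - ((0 : Fin 2) : ℤ))) = 1 := by norm_num
  have e10 : ((-1 : ℂ) ^ (((1 : Fin 2) : ℤ) - ((0 : Fin 2) : ℤ))) = -1 := by norm_num
  have e01 : ((-1 : ℂ) ^ (((0 : Fin 2) : ℤ) - ((1 : Fin 2) : ℤ))) = -1 := by norm_num
  have e11 : ((-1 : ℂ) ^ (((1 : Fin 2) : ℤ) - ((1 : Fin 2) : ℤ))) = 1 := by norm_num
  set κ : HA → HA := fun x => (A 1).symm (A 0 x) with hκdef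
  set μ : HB → HB := fun y => (B 1).symm (B 0 y) with hμdef
  have hκ : ∀ x, A 1 (κ x) = A 0 x := fun x => (A 1).apply_symm_apply _
  have hμ : ∀ y, B 1 (μ y) = B 0 y := fun y => (B 1).apply_symm_apply _
  -- the four basic identities
  have E00 : ∀ x y, ⟪t (A 0 x) (B 0 y), u0⟫_ℂ + ⟪t (A 0 x) (B 0 y), u1⟫_ℂ
      = ((Real.sqrt 2 : ℝ) : ℂ) * ⟪t x y, u0⟫_ℂ := by
    intro x y
    have h := key 0 0 x y
    rw [e00, one_mul] at h
    exact h
  have Eb : ∀ x y, ⟪t (A 0 x) (B 0 y), u0⟫_ℂ - ⟪t (A 0 x) (B 0 y), u1⟫_ℂ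
      = ((Real.sqrt 2 : ℝ) : ℂ) * ⟪t (κ x) y, u0⟫_ℂ := by
    intro x y
    have h := key 1 0 (κ x) y
    rw [hκ x, e10] at h
    linear_combination h
  have Ec : ∀ x y, ⟪t (A 0 x) (B 0 y), u0⟫_ℂ - ⟪t (A 0 x) (B 0 y), u1⟫_ℂ
      = ((Real.sqrt 2 : ℝ) : ℂ) * ⟪t x (μ y), u0⟫_ℂ := by
    intro x y
    have h := key 0 1 x (μ y)
    rw [hμ y, e01] at h
    linear_combination h
  have Ed : ∀ x y, ⟪t (A 0 x) (B 0 y), u0⟫_ℂ + ⟪t (A 0 x) (B 0 y), u1⟫_ℂ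
      = ((Real.sqrt 2 : ℝ) : ℂ) * ⟪t (κ x) (μ y), u0⟫_ℂ := by
    intro x y
    have h := key 1 1 (κ x) (μ y)
    rw [hκ x, hμ y, e11, one_mul] at h
    exact h
  have P1 : ∀ x y, ⟪t (κ x) y, u0⟫_ℂ = ⟪t x (μ y), u0⟫_ℂ := by
    intro x y
    apply mul_left_cancel₀ hs2ne
    linear_combination (Ec x y) - (Eb x y)
  have P2 : ∀ x y, ⟪t (κ x) (μ y), u0⟫_ℂ = ⟪t x y, u0⟫_ℂ := by
    intro x y
    apply mul_left_cancel₀ hs2ne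
    linear_combination (E00 x y) - (Ed x y)
  have PK : ∀ x y, ⟪t (κ (κ x)) y, u0⟫_ℂ = ⟪t x y, u0⟫_ℂ :=
    fun x y => (P1 (κ x) y).trans (P2 x y)
  have PM : ∀ x y, ⟪t x (μ (μ y)), u0⟫_ℂ = ⟪t x y, u0⟫_ℂ :=
    fun x y => (P1 x (μ y)).symm.trans (P2 x y)
  have Sp1 : ∀ x y, ⟪t (A 0 (κ x)) (B 0 y), u0⟫_ℂ = ⟪t (A 0 x) (B 0 y), u0⟫_ℂ := by
    intro x y
    linear_combination (E00 (κ x) y) / 2 + (Eb (κ x) y) / 2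
      + (((Real.sqrt 2 : ℝ) : ℂ) / 2) * (PK x y) - (E00 x y) / 2 - (Eb x y) / 2
  have Sq1 : ∀ x y, ⟪t (A 0 (κ x)) (B 0 y), u1⟫_ℂ = -⟪t (A 0 x) (B 0 y), u1⟫_ℂ := by
    intro x y
    linear_combination (E00 (κ x) y) / 2 - (Eb (κ x) y) / 2
      - (((Real.sqrt 2 : ℝ) : ℂ) / 2) * (PK x y) + (E00 x y) / 2 - (Eb x y) / 2
  have Sp2 : ∀ x y, ⟪t (A 0 x) (B 0 (μ y)), u0⟫_ℂ = ⟪t (A 0 x) (B 0 y), u0⟫_ℂ := by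
    intro x y
    linear_combination (E00 x (μ y)) / 2 + (Ec x (μ y)) / 2
      + (((Real.sqrt 2 : ℝ) : ℂ) / 2) * (PM x y) - (E00 x y) / 2 - (Ec x y) / 2
  have Sq2 : ∀ x y, ⟪t (A 0 x) (B 0 (μ y)), u1⟫_ℂ = -⟪t (A 0 x) (B 0 y), u1⟫_ℂ := by
    intro x y
    linear_combination (E00 x (μ y)) / 2 - (Ec x (μ y)) / 2
      - (((Real.sqrt 2 : ℝ) : ℂ) / 2) * (PM x y) + (E00 x y) / 2 - (Ec x y) / 2
  -- Riesz vectors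
  obtain ⟨ξa, ηa, hξa, hηa⟩ := riesz_pair' t hnt u0
  obtain ⟨ξb, ηb, hξb, hηb⟩ := riesz_pair' t hnt u1
  set ξ0 : HB → HA := fun y => (A 0).symm (ξa (B 0 y)) with hξ0def
  set ξ1 : HB → HA := fun y => (A 0).symm (ξb (B 0 y)) with hξ1def
  set η0 : HA → HB := fun x => (B 0).symm (ηa (A 0 x)) with hη0def
  set η1 : HA → HB := fun x => (B 0).symm (ηb (A 0 x)) with hη1def
  have hxi0 : ∀ x y, ⟪x, ξ0 y⟫_ℂ = ⟪t (A 0 x) (B 0 y), u0⟫_ℂ := by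
    intro x y
    rw [hξ0def]
    rw [inner_symm_right' (A 0)]
    exact hξa (A 0 x) (B 0 y)
  have hxi1 : ∀ x y, ⟪x, ξ1 y⟫_ℂ = ⟪t (A 0 x) (B 0 y), u1⟫_ℂ := by
    intro x y
    rw [hξ1def]
    rw [inner_symm_right' (A 0)]
    exact hξb (A 0 x) (B 0 y)
  have heta0 : ∀ x y, ⟪y, η0 x⟫_ℂ = ⟪t (A 0 x) (B 0 y), u0⟫_ℂ := by
    intro x y
    rw [hη0def]
    rw [inner_symm_right' (B 0)]
    exact hηa (A 0 x) (B 0 y)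
  have heta1 : ∀ x y, ⟪y, η1 x⟫_ℂ = ⟪t (A 0 x) (B 0 y), u1⟫_ℂ := by
    intro x y
    rw [hη1def]
    rw [inner_symm_right' (B 0)]
    exact hηb (A 0 x) (B 0 y)
  -- eigen relations and orthogonality
  set κad : HA → HA := fun v => (A 0).symm (A 1 v) with hκaddef
  set μad : HB → HB := fun v => (B 0).symm (B 1 v) with hμaddef
  have hκpair : ∀ (x v : HA), ⟪x, κad v⟫_ℂ = ⟪κ x, v⟫_ℂ := by
    intro x v
    rw [hκaddef, hκdef]
    rw [inner_symm_right' (A 0), inner_symm_left' (A 1)]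
  have hμpair : ∀ (y v : HB), ⟪y, μad v⟫_ℂ = ⟪μ y, v⟫_ℂ := by
    intro y v
    rw [hμaddef, hμdef]
    rw [inner_symm_right' (B 0), inner_symm_left' (B 1)]
  have hκinner : ∀ (v w : HA), ⟪κad v, κad w⟫_ℂ = ⟪v, w⟫_ℂ := by
    intro v w
    rw [hκaddef]
    rw [LinearIsometryEquiv.inner_map_map ((A 0).symm), LinearIsometryEquiv.inner_map_map (A 1)]
  have hμinner : ∀ (v w : HB), ⟪μad v, μad w⟫_ℂ = ⟪v, w⟫_ℂ := by
    intro v w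
    rw [hμaddef]
    rw [LinearIsometryEquiv.inner_map_map ((B 0).symm), LinearIsometryEquiv.inner_map_map (B 1)]
  have hκeig0 : ∀ y, κad (ξ0 y) = ξ0 y := by
    intro y
    apply ext_inner_left ℂ
    intro x
    rw [hκpair, hxi0 (κ x) y, hxi0 x y]
    exact Sp1 x y
  have hκeig1 : ∀ y, κad (ξ1 y) = -(ξ1 y) := by
    intro y
    apply ext_inner_left ℂ
    intro x
    rw [hκpair, inner_neg_right, hxi1 (κ x) y, hxi1 x y]
    exact Sq1 x y
  have hμeig0 : ∀ x, μad (η0 x) = η0 x := by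
    intro x
    apply ext_inner_left ℂ
    intro y
    rw [hμpair, heta0 x (μ y), heta0 x y]
    exact Sp2 x y
  have hμeig1 : ∀ x, μad (η1 x) = -(η1 x) := by
    intro x
    apply ext_inner_left ℂ
    intro y
    rw [hμpair, inner_neg_right, heta1 x (μ y), heta1 x y]
    exact Sq2 x y
  have hO1 : ∀ y y', ⟪ξ0 y, ξ1 y'⟫_ℂ = 0 := by
    intro y y'
    have h := hκinner (ξ0 y) (ξ1 y')
    rw [hκeig0, hκeig1, inner_neg_right] at h
    have h2 : (2 : ℂ) * ⟪ξ0 y, ξ1 y'⟫_ℂ = 0 := by linear_combination -h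
    simpa using h2
  have hO2 : ∀ x x', ⟪η0 x, η1 x'⟫_ℂ = 0 := by
    intro x x'
    have h := hμinner (η0 x) (η1 x')
    rw [hμeig0, hμeig1, inner_neg_right] at h
    have h2 : (2 : ℂ) * ⟪η0 x, η1 x'⟫_ℂ = 0 := by linear_combination -h
    simpa using h2
  -- bounds
  have hb0 : ∀ x y, ‖⟪t (A 0 x) (B 0 y), u0⟫_ℂ‖ ≤ NNval t u0 * (‖x‖ * ‖y‖) := by
    intro x y
    have h := NN_bound t hnt u0 (A 0 x) (B 0 y)
    rwa [LinearIsometryEquiv.norm_map, LinearIsometryEquiv.norm_map] at h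
  have hb1 : ∀ x y, ‖⟪t (A 0 x) (B 0 y), u1⟫_ℂ‖ ≤ NNval t u1 * (‖x‖ * ‖y‖) := by
    intro x y
    have h := NN_bound t hnt u1 (A 0 x) (B 0 y)
    rwa [LinearIsometryEquiv.norm_map, LinearIsometryEquiv.norm_map] at h
  have hmax := maxLemma' (fun x y => ⟪t (A 0 x) (B 0 y), u0⟫_ℂ)
    (fun x y => ⟪t (A 0 x) (B 0 y), u1⟫_ℂ) ξ0 ξ1 η0 η1 (NNval t u0) (NNval t u1)
    (NN_nonneg t hnt u0) (NN_nonneg t hnt u1) hxi0 hxi1 heta0 heta1 hO1 hO2 hb0 hb1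
  -- conclude
  have final : ∀ x y, ‖x‖ ≤ 1 → ‖y‖ ≤ 1 →
      ‖⟪t x y, u0⟫_ℂ‖ ≤ max (NNval t u0) (NNval t u1) / Real.sqrt 2 := by
    intro x y hx hy
    have h1 := hmax x y
    have h2 : ⟪t (A 0 x) (B 0 y), u0⟫_ℂ + ⟪t (A 0 x) (B 0 y), u1⟫_ℂ
        = ((Real.sqrt 2 : ℝ) : ℂ) * ⟪t x y, u0⟫_ℂ := E00 x y
    rw [h2] at h1
    rw [norm_mul, Complex.norm_real, Real.norm_eq_abs, abs_of_nonneg hs2pos.le] at h1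
    have h3 : max (NNval t u0) (NNval t u1) * (‖x‖ * ‖y‖) ≤ max (NNval t u0) (NNval t u1) := by
      have hm : 0 ≤ max (NNval t u0) (NNval t u1) :=
        le_max_of_le_left (NN_nonneg t hnt u0)
      calc max (NNval t u0) (NNval t u1) * (‖x‖ * ‖y‖)
          ≤ max (NNval t u0) (NNval t u1) * 1 := by
            apply mul_le_mul_of_nonneg_left _ hm
            calc ‖x‖ * ‖y‖ ≤ 1 * 1 := mul_le_mul hx hy (norm_nonneg _) (by norm_num)
              _ = 1 := by norm_num
        _ = max (NNval t u0) (NNval t u1) := by ring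
    rw [le_div_iff₀ hs2pos]
    calc ‖⟪t x y, u0⟫_ℂ‖ * Real.sqrt 2 = Real.sqrt 2 * ‖⟪t x y, u0⟫_ℂ‖ := by ring
      _ ≤ max (NNval t u0) (NNval t u1) * (‖x‖ * ‖y‖) := h1
      _ ≤ max (NNval t u0) (NNval t u1) := h3
  have hNle : NNval t u0 ≤ max (NNval t u0) (NNval t u1) / Real.sqrt 2 := NN_le t u0 final
  calc Real.sqrt 2 * NNval t u0
      ≤ Real.sqrt 2 * (max (NNval t u0) (NNval t u1) / Real.sqrt 2) :=
        mul_le_mul_of_nonneg_left hNle hs2pos.le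
    _ = max (NNval t u0) (NNval t u1) := by field_simp

/-- Theorem 3.2: with K a Hilbert space tensor product of Hilbert spaces H_A and H_B
(witnessed by the bilinear map t with ⟨t(x,y),t(x',y')⟩ = ⟨x,x'⟩⟨y,y'⟩ and total
range), there are no unitaries a_{j,l} on H_A, b_{k,l} on H_B, operators W_{j,k,l}
representing a_{j,l} ⊗ b_{k,l}, and orthonormal h₀, h₁ ∈ K realizing the
correlations ⟨h₀, W_{j,k,0}h₀⟩ = 1/√2, ⟨h₁, W_{j,k,0}h₀⟩ = (−1)^{j−k}/√2,
⟨h₁, W_{j,k,1}h₁⟩ = 1/√2, ⟨h₀, W_{j,k,1}h₁⟩ = (−1)^{j−k}/√2. -/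
theorem statement12 {HA HB K : Type*}
    [NormedAddCommGroup HA] [InnerProductSpace ℂ HA] [CompleteSpace HA]
    [NormedAddCommGroup HB] [InnerProductSpace ℂ HB] [CompleteSpace HB]
    [NormedAddCommGroup K] [InnerProductSpace ℂ K] [CompleteSpace K]
    (t : HA →ₗ[ℂ] HB →ₗ[ℂ] K)
    (ht : ∀ (x x' : HA) (y y' : HB),
      ⟪t x y, t x' y'⟫_ℂ = ⟪x, x'⟫_ℂ * ⟪y, y'⟫_ℂ)
    (hspan : (Submodule.span ℂ
        (Set.range fun p : HA × HB => t p.1 p.2)).topologicalClosure = ⊤) :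
    ¬ ∃ (a : Fin 2 → Fin 2 → (HA ≃ₗᵢ[ℂ] HA)) (b : Fin 2 → Fin 2 → (HB ≃ₗᵢ[ℂ] HB))
        (W : Fin 2 → Fin 2 → Fin 2 → (K →L[ℂ] K)) (h0 h1 : K),
      (∀ (j k l : Fin 2) (x : HA) (y : HB), W j k l (t x y) = t (a j l x) (b k l y)) ∧
      ‖h0‖ = 1 ∧ ‖h1‖ = 1 ∧ ⟪h0, h1⟫_ℂ = 0 ∧
      ∀ j k : Fin 2,
        ⟪h0, W j k 0 h0⟫_ℂ = (Real.sqrt 2 : ℂ)⁻¹ ∧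
        ⟪h1, W j k 0 h0⟫_ℂ = (-1 : ℂ) ^ ((j : ℤ) - (k : ℤ)) * (Real.sqrt 2 : ℂ)⁻¹ ∧
        ⟪h1, W j k 1 h1⟫_ℂ = (Real.sqrt 2 : ℂ)⁻¹ ∧
        ⟪h0, W j k 1 h1⟫_ℂ = (-1 : ℂ) ^ ((j : ℤ) - (k : ℤ)) * (Real.sqrt 2 : ℂ)⁻¹ := by
  rintro ⟨a, b, W, h0, h1, hWrep, hn0, hn1, hor, hcorr⟩
  have hnt : ∀ x y, ‖t x y‖ = ‖x‖ * ‖y‖ := by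
    intro x y
    have h' := congrArg (RCLike.re (K := ℂ)) (ht x x y y)
    rw [inner_self_eq_norm_sq] at h'
    rw [inner_self_eq_norm_sq_to_K (𝕜 := ℂ) x, inner_self_eq_norm_sq_to_K (𝕜 := ℂ) y] at h'
    simp only [← RCLike.ofReal_pow, ← RCLike.ofReal_mul, RCLike.ofReal_re] at h'
    have h3 : ‖t x y‖ ^ 2 = (‖x‖ * ‖y‖) ^ 2 := by rw [h']; ring
    calc ‖t x y‖ = Real.sqrt (‖t x y‖ ^ 2) := (Real.sqrt_sq (norm_nonneg _)).symm
      _ = Real.sqrt ((‖x‖ * ‖y‖) ^ 2) := by rw [h3]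
      _ = ‖x‖ * ‖y‖ := Real.sqrt_sq (mul_nonneg (norm_nonneg _) (norm_nonneg _))
  have hor' : ⟪h1, h0⟫_ℂ = 0 := by rw [← inner_conj_symm, hor, map_zero]
  have H1 := half' t ht hspan (fun j => a j 0) (fun k => b k 0) (fun j k => W j k 0) h0 h1
    (fun j k x y => hWrep j k 0 x y) hn0 hn1 hor
    (fun j k => (hcorr j k).1) (fun j k => (hcorr j k).2.1)
  have H2 := half' t ht hspan (fun j => a j 1) (fun k => b k 1) (fun j k => W j k 1) h1 h0
    (fun j k x y => hWrep j k 1 x y) hn1 hn0 hor'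
    (fun j k => (hcorr j k).2.2.1) (fun j k => (hcorr j k).2.2.2)
  rw [max_comm] at H2
  have hs2 : (1 : ℝ) < Real.sqrt 2 := by
    nlinarith [Real.sq_sqrt (show (0:ℝ) ≤ 2 by norm_num), Real.sqrt_nonneg 2]
  have n0 := NN_nonneg t hnt h0
  have n1 := NN_nonneg t hnt h1
  have hN0 : NNval t h0 = 0 := by
    rcases le_total (NNval t h0) (NNval t h1) with hc | hc
    · rw [max_eq_right hc] at H1 H2
      nlinarith
    · rw [max_eq_left hc] at H1 H2
      nlinarith
  have hzero : ∀ x y, ⟪t x y, h0⟫_ℂ = 0 := by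
    intro x y
    have hb := NN_bound t hnt h0 x y
    rw [hN0, zero_mul] at hb
    exact norm_le_zero_iff.mp hb
  have hker : (Submodule.span ℂ (Set.range fun p : HA × HB => t p.1 p.2)).topologicalClosure
      ≤ (innerSL ℂ h0).ker := by
    apply Submodule.topologicalClosure_minimal
    · rw [Submodule.span_le]
      rintro v ⟨⟨x, y⟩, rfl⟩
      simp only [SetLike.mem_coe, LinearMap.mem_ker, ContinuousLinearMap.coe_coe, innerSL_apply_apply]
      exact inner_eq_zero_symm.mp (hzero x y)
    · exact ContinuousLinearMap.isClosed_ker (innerSL ℂ h0)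
  rw [hspan] at hker
  have hmem : h0 ∈ (innerSL ℂ h0).ker := hker Submodule.mem_top
  have hself : ⟪h0, h0⟫_ℂ = 0 := by simpa using hmem
  have hh0 : h0 = 0 := inner_self_eq_zero.mp hself
  rw [hh0, norm_zero] at hn0
  norm_num at hn0
end

section
/- Let G = (ℤ/2ℤ) ∗ (ℤ/2ℤ) ∗ (ℤ/2ℤ) ∗ (ℤ/2ℤ) be the free product of four cyclic groups of order 2, with σ_0, σ_1, σ_2, σ_3 denoting the images in G of the nontrivial elements of the four factors. Then there is an injective group homomorphism from (ℤ/2ℤ) ∗ (ℤ/2ℤ) ∗ ℤ into G sending the nontrivial elements of the two ℤ/2ℤ factors to σ_0 and σ_1 respectively, and the generator of ℤ to σ_2σ_3. -/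
open Monoid Monoid.CoprodI

namespace Stmt15Aux

abbrev Mf : Fin 4 → Type := fun _ => Multiplicative (ZMod 2)

abbrev GG := Monoid.CoprodI Mf

def σ (i : Fin 4) : GG := Monoid.CoprodI.of (M := Mf) (i := i) (Multiplicative.ofAdd 1)

lemma gen_ne_one : (Multiplicative.ofAdd (1 : ZMod 2)) ≠ 1 := by decide

lemma σ_mul_σ (i : Fin 4) : σ i * σ i = 1 := by
  rw [σ, ← MonoidHom.map_mul]
  have : (Multiplicative.ofAdd (1 : ZMod 2)) * Multiplicative.ofAdd (1 : ZMod 2) = 1 := by decide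
  rw [this, MonoidHom.map_one]

lemma σ_inv (i : Fin 4) : (σ i)⁻¹ = σ i := inv_eq_of_mul_eq_one_left (σ_mul_σ i)

/-- first index of the normal form -/
noncomputable def ix (g : GG) : Option (Fin 4) := (Word.equiv (M := Mf) g).fstIdx

lemma ix_one : ix 1 = none := by
  have h : Word.equiv (M := Mf) (1 : GG) = Word.empty := by
    show (1 : GG) • Word.empty (M := Mf) = _
    rw [one_smul]
  rw [ix, h]; rfl

lemma ix_mul {i : Fin 4} {m : Multiplicative (ZMod 2)} (hm : m ≠ 1) {g : GG}
    (hg : ix g ≠ some i) :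
    ix (Monoid.CoprodI.of (M := Mf) (i := i) m * g) = some i := by
  classical
  have hgw : g = Word.prod (M := Mf) (Word.equiv g) :=
    ((Word.equiv (M := Mf)).symm_apply_apply g).symm
  have h2 : Monoid.CoprodI.of (M := Mf) (i := i) m * g =
      Word.prod (M := Mf) (Word.cons m (Word.equiv g) hg hm) := by
    erw [Word.prod_cons, ← hgw]
  rw [ix, h2]
  have h3 := (Word.equiv (M := Mf)).apply_symm_apply (Word.cons m (Word.equiv g) hg hm)
  rw [show Word.prod (M := Mf) (Word.cons m (Word.equiv g) hg hm)
      = (Word.equiv (M := Mf)).symm (Word.cons m (Word.equiv g) hg hm) from rfl, h3]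
  exact Word.fstIdx_cons _ _ _ _

lemma ix_σ_mul {i : Fin 4} {g : GG} (hg : ix g ≠ some i) : ix (σ i * g) = some i :=
  ix_mul gen_ne_one hg

end Stmt15Aux

namespace Stmt15Aux

lemma L2 : ∀ n : ℕ, ∀ g : GG, ix g ≠ some 3 → ix ((σ 2 * σ 3) ^ (n + 1) * g) = some 2
  | 0, g, hg => by
      have h3 : ix (σ 3 * g) = some 3 := ix_σ_mul hg
      have h2 : ix (σ 2 * (σ 3 * g)) = some 2 := ix_σ_mul (by simp [h3])
      rw [pow_one, mul_assoc]; exact h2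
  | (n + 1), g, hg => by
      have ih := L2 n g hg
      have h3 : ix (σ 3 * ((σ 2 * σ 3) ^ (n + 1) * g)) = some 3 := ix_σ_mul (by simp [ih])
      have h2 : ix (σ 2 * (σ 3 * ((σ 2 * σ 3) ^ (n + 1) * g))) = some 2 :=
        ix_σ_mul (by simp [h3])
      calc ix ((σ 2 * σ 3) ^ (n + 1 + 1) * g)
          = ix (σ 2 * (σ 3 * ((σ 2 * σ 3) ^ (n + 1) * g))) := by
            rw [pow_succ']
            ring_nf
            rw [mul_assoc, mul_assoc]
        _ = some 2 := h2

lemma L3 : ∀ n : ℕ, ∀ g : GG, ix g ≠ some 2 → ix ((σ 3 * σ 2) ^ (n + 1) * g) = some 3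
  | 0, g, hg => by
      have h2 : ix (σ 2 * g) = some 2 := ix_σ_mul hg
      have h3 : ix (σ 3 * (σ 2 * g)) = some 3 := ix_σ_mul (by simp [h2])
      rw [pow_one, mul_assoc]; exact h3
  | (n + 1), g, hg => by
      have ih := L3 n g hg
      have h2 : ix (σ 2 * ((σ 3 * σ 2) ^ (n + 1) * g)) = some 2 := ix_σ_mul (by simp [ih])
      have h3 : ix (σ 3 * (σ 2 * ((σ 3 * σ 2) ^ (n + 1) * g))) = some 3 :=
        ix_σ_mul (by simp [h2])
      calc ix ((σ 3 * σ 2) ^ (n + 1 + 1) * g)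
          = ix (σ 3 * (σ 2 * ((σ 3 * σ 2) ^ (n + 1) * g))) := by
            rw [pow_succ']
            rw [mul_assoc, mul_assoc]
        _ = some 3 := h3

lemma Lz (n : ℤ) (hn : n ≠ 0) (g : GG) (h2 : ix g ≠ some 2) (h3 : ix g ≠ some 3) :
    ix ((σ 2 * σ 3) ^ n * g) = some 2 ∨ ix ((σ 2 * σ 3) ^ n * g) = some 3 := by
  cases n with
  | ofNat k =>
      match k with
      | 0 => exact absurd rfl hn
      | (k + 1) =>
          left
          rw [Int.ofNat_eq_coe, zpow_natCast]
          exact L2 k g h3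
  | negSucc k =>
      right
      rw [zpow_negSucc, ← inv_pow, mul_inv_rev, σ_inv, σ_inv]
      exact L3 k g h2

end Stmt15Aux

namespace Stmt15Aux

def Hfam : Fin 3 → Type
  | 0 => Multiplicative (ZMod 2)
  | 1 => Multiplicative (ZMod 2)
  | 2 => Multiplicative ℤ

instance : ∀ i, Group (Hfam i)
  | 0 => inferInstanceAs (Group (Multiplicative (ZMod 2)))
  | 1 => inferInstanceAs (Group (Multiplicative (ZMod 2)))
  | 2 => inferInstanceAs (Group (Multiplicative ℤ))

def ff : ∀ i : Fin 3, Hfam i →* GG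
  | 0 => Monoid.CoprodI.of (M := Mf) (i := 0)
  | 1 => Monoid.CoprodI.of (M := Mf) (i := 1)
  | 2 => zpowersHom GG (σ 2 * σ 3)

def X : Fin 3 → Set GG
  | 0 => {g | ix g = some 0}
  | 1 => {g | ix g = some 1}
  | 2 => {g | ix g = some 2 ∨ ix g = some 3}

lemma ix_σ (i : Fin 4) : ix (σ i) = some i := by
  rw [show σ i = σ i * 1 by rw [mul_one]]
  exact ix_σ_mul (by rw [ix_one]; simp)

lemma hXnonempty : ∀ i, (X i).Nonempty
  | 0 => ⟨σ 0, ix_σ 0⟩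
  | 1 => ⟨σ 1, ix_σ 1⟩
  | 2 => ⟨σ 2, Or.inl (ix_σ 2)⟩

lemma hXdisj : Pairwise (Function.onFun Disjoint X) := by
  intro i j hij
  rw [Function.onFun, Set.disjoint_left]
  fin_cases i <;> fin_cases j <;> simp_all [X] <;>
    (intro g hg h <;> simp_all)

end Stmt15Aux

namespace Stmt15Aux

open Pointwise in
lemma hpp : Pairwise fun i j => ∀ h : Hfam i, h ≠ 1 → ff i h • X j ⊆ X i := by
  intro i j hij
  intro h hh
  intro x hx
  rw [Set.mem_smul_set] at hx
  obtain ⟨y, hy, rfl⟩ := hx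
  rw [smul_eq_mul]
  fin_cases i <;> fin_cases j
  all_goals try exact absurd rfl hij
  · -- i = 0, j = 1
    exact ix_mul hh (by simp_all [X])
  · exact ix_mul hh (by rcases hy with h | h <;> simp_all [X])
  · exact ix_mul hh (by simp_all [X])
  · exact ix_mul hh (by rcases hy with h | h <;> simp_all [X])
  · -- i = 2, j = 0
    have hn : Multiplicative.toAdd (show Multiplicative ℤ from h) ≠ 0 := by
      intro hc
      apply hh
      show (show Multiplicative ℤ from h) = 1
      rw [← ofAdd_toAdd (show Multiplicative ℤ from h), hc, ofAdd_zero]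
    have hy2 : ix y ≠ some 2 := by simp_all [X]
    have hy3 : ix y ≠ some 3 := by simp_all [X]
    exact Lz _ hn y hy2 hy3
  · have hn : Multiplicative.toAdd (show Multiplicative ℤ from h) ≠ 0 := by
      intro hc
      apply hh
      show (show Multiplicative ℤ from h) = 1
      rw [← ofAdd_toAdd (show Multiplicative ℤ from h), hc, ofAdd_zero]
    have hy2 : ix y ≠ some 2 := by simp_all [X]
    have hy3 : ix y ≠ some 3 := by simp_all [X]
    exact Lz _ hn y hy2 hy3

end Stmt15Aux

namespace Stmt15Aux

lemma lift_ff_injective : Function.Injective (Monoid.CoprodI.lift ff) :=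
  Monoid.CoprodI.lift_injective_of_ping_pong ff
    (Or.inl (by rw [Cardinal.mk_fin]; norm_num)) X hXnonempty hXdisj hpp

abbrev D := Monoid.Coprod (Multiplicative (ZMod 2))
    (Monoid.Coprod (Multiplicative (ZMod 2)) (Multiplicative ℤ))

def e : D →* Monoid.CoprodI Hfam :=
  Monoid.Coprod.lift (Monoid.CoprodI.of (M := Hfam) (i := 0))
    (Monoid.Coprod.lift (Monoid.CoprodI.of (M := Hfam) (i := 1))
      (Monoid.CoprodI.of (M := Hfam) (i := 2)))

def e' : Monoid.CoprodI Hfam →* D :=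
  Monoid.CoprodI.lift (M := Hfam) (N := D) (fun i => match i with
    | 0 => Monoid.Coprod.inl
    | 1 => Monoid.Coprod.inr.comp Monoid.Coprod.inl
    | 2 => Monoid.Coprod.inr.comp Monoid.Coprod.inr)

lemma e_inl (x : Multiplicative (ZMod 2)) :
    e (Monoid.Coprod.inl x) = Monoid.CoprodI.of (M := Hfam) (i := 0) x :=
  Monoid.Coprod.lift_apply_inl _ _ _

lemma e_inr_inl (x : Multiplicative (ZMod 2)) :
    e (Monoid.Coprod.inr (Monoid.Coprod.inl x)) = Monoid.CoprodI.of (M := Hfam) (i := 1) x :=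
  (Monoid.Coprod.lift_apply_inr _ _ _).trans (Monoid.Coprod.lift_apply_inl _ _ _)

lemma e_inr_inr (x : Multiplicative ℤ) :
    e (Monoid.Coprod.inr (Monoid.Coprod.inr x)) = Monoid.CoprodI.of (M := Hfam) (i := 2) x :=
  (Monoid.Coprod.lift_apply_inr _ _ _).trans (Monoid.Coprod.lift_apply_inr _ _ _)

lemma e'_comp_e : e'.comp e = MonoidHom.id D := by
  refine Monoid.Coprod.hom_ext ?_ (Monoid.Coprod.hom_ext ?_ ?_) <;>
    (refine MonoidHom.ext fun x => ?_;
     simp only [MonoidHom.comp_apply, MonoidHom.id_apply, e_inl, e_inr_inl, e_inr_inr];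
     exact Monoid.CoprodI.lift_of (M := Hfam) _ _)

lemma e_injective : Function.Injective e :=
  Function.LeftInverse.injective (g := e')
    (fun x => by rw [← MonoidHom.comp_apply, e'_comp_e, MonoidHom.id_apply])

end Stmt15Aux


/-- There is an injective group homomorphism from ℤ/2 ∗ ℤ/2 ∗ ℤ into the free
product G = ℤ/2 ∗ ℤ/2 ∗ ℤ/2 ∗ ℤ/2 (with σᵢ the images in G of the nontrivial
elements of the four factors), sending the nontrivial elements of the two ℤ/2
factors to σ₀ and σ₁, and the generator of ℤ to σ₂σ₃. -/
theorem statement15 :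
    ∃ f : Monoid.Coprod (Multiplicative (ZMod 2))
        (Monoid.Coprod (Multiplicative (ZMod 2)) (Multiplicative ℤ)) →*
        Monoid.CoprodI (fun _ : Fin 4 => Multiplicative (ZMod 2)),
      Function.Injective f ∧
      f (Monoid.Coprod.inl (Multiplicative.ofAdd (1 : ZMod 2))) =
        Monoid.CoprodI.of (M := fun _ : Fin 4 => Multiplicative (ZMod 2)) (i := 0)
          (Multiplicative.ofAdd (1 : ZMod 2)) ∧
      f (Monoid.Coprod.inr (Monoid.Coprod.inl (Multiplicative.ofAdd (1 : ZMod 2)))) =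
        Monoid.CoprodI.of (M := fun _ : Fin 4 => Multiplicative (ZMod 2)) (i := 1)
          (Multiplicative.ofAdd (1 : ZMod 2)) ∧
      f (Monoid.Coprod.inr (Monoid.Coprod.inr (Multiplicative.ofAdd (1 : ℤ)))) =
        Monoid.CoprodI.of (M := fun _ : Fin 4 => Multiplicative (ZMod 2)) (i := 2)
            (Multiplicative.ofAdd (1 : ZMod 2)) *
          Monoid.CoprodI.of (M := fun _ : Fin 4 => Multiplicative (ZMod 2)) (i := 3)
            (Multiplicative.ofAdd (1 : ZMod 2)) := by
  refine ⟨(Monoid.CoprodI.lift Stmt15Aux.ff).comp Stmt15Aux.e,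
    Stmt15Aux.lift_ff_injective.comp Stmt15Aux.e_injective, ?_, ?_, ?_⟩
  · rw [MonoidHom.comp_apply, Stmt15Aux.e_inl]
    exact Monoid.CoprodI.lift_of _ _
  · rw [MonoidHom.comp_apply, Stmt15Aux.e_inr_inl]
    exact Monoid.CoprodI.lift_of _ _
  · rw [MonoidHom.comp_apply, Stmt15Aux.e_inr_inr]
    refine (Monoid.CoprodI.lift_of _ _).trans ?_
    show (Stmt15Aux.σ 2 * Stmt15Aux.σ 3) ^ (1 : ℤ) = _
    rw [zpow_one]
    rfl
end

section
/- Let G = (ℤ/2ℤ) ∗ (ℤ/2ℤ) ∗ (ℤ/2ℤ) be the free product of three cyclic groups of order 2, with σ_0, σ_1, σ_2 denoting the images in G of the nontrivial elements of the three factors. Then there is an injective group homomorphism from (ℤ/2ℤ) ∗ (ℤ/2ℤ) ∗ ℤ into G sending the nontrivial elements of the two ℤ/2ℤ factors to σ_0 and σ_1 respectively, and the generator of ℤ to σ_2σ_0σ_1σ_2. -/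
open Monoid Monoid.CoprodI Multiplicative

namespace Statement16Aux

abbrev Z2 := Multiplicative (ZMod 2)
abbrev Mfam : Fin 3 → Type := fun _ : Fin 3 => Z2
abbrev G := Monoid.CoprodI Mfam

def σ : Z2 := ofAdd 1

lemma σ_ne_one : σ ≠ 1 := by decide
lemma eq_σ_of_ne_one : ∀ h : Z2, h ≠ 1 → h = σ := by decide

def a : G := of (i := 0) σ
def b : G := of (i := 1) σ
def c : G := of (i := 2) σ
def t : G := c * a * b * c

lemma head_smul {k : Fin 3} {w : Word Mfam} (hw : w.fstIdx ≠ some k) :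
    ((of (i := k) σ : G) • w).fstIdx = some k := by
  rw [← Word.cons_eq_smul (M := Mfam) (i := k) (m := σ) (ls := w) (h1 := hw) (h2 := σ_ne_one)]
  exact Word.fstIdx_cons (M := Mfam) (i := k) σ w hw σ_ne_one

lemma a_smul {w : Word Mfam} (hw : w.fstIdx ≠ some 0) : (a • w).fstIdx = some 0 :=
  head_smul hw
lemma b_smul {w : Word Mfam} (hw : w.fstIdx ≠ some 1) : (b • w).fstIdx = some 1 :=
  head_smul hw
lemma c_smul {w : Word Mfam} (hw : w.fstIdx ≠ some 2) : (c • w).fstIdx = some 2 :=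
  head_smul hw

lemma ab_pow_smul : ∀ (n : ℕ) (w : Word Mfam), w.fstIdx = some 2 →
    (((a * b) ^ (n + 1)) • w).fstIdx = some 0 := by
  intro n
  induction n with
  | zero =>
    intro w hw
    rw [pow_one, mul_smul]
    have h1 : (b • w).fstIdx = some 1 := b_smul (by simp [hw])
    exact a_smul (by simp [h1])
  | succ n ih =>
    intro w hw
    have h0 := ih w hw
    rw [pow_succ', mul_smul, mul_smul]
    have h1 : (b • ((a * b) ^ (n + 1)) • w).fstIdx = some 1 := b_smul (by simp [h0])
    exact a_smul (by simp [h1])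

lemma ba_pow_smul : ∀ (n : ℕ) (w : Word Mfam), w.fstIdx = some 2 →
    (((b * a) ^ (n + 1)) • w).fstIdx = some 1 := by
  intro n
  induction n with
  | zero =>
    intro w hw
    rw [pow_one, mul_smul]
    have h1 : (a • w).fstIdx = some 0 := a_smul (by simp [hw])
    exact b_smul (by simp [h1])
  | succ n ih =>
    intro w hw
    have h0 := ih w hw
    rw [pow_succ', mul_smul, mul_smul]
    have h1 : (a • ((b * a) ^ (n + 1)) • w).fstIdx = some 0 := a_smul (by simp [h0])
    exact b_smul (by simp [h1])

lemma of_sq (k : Fin 3) : (of (i := k) σ : G) * of (i := k) σ = 1 := by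
  rw [← MonoidHom.map_mul]
  have : σ * σ = 1 := by decide
  rw [this, MonoidHom.map_one]

lemma a_inv : a⁻¹ = a := (inv_eq_of_mul_eq_one_right (of_sq 0))
lemma b_inv : b⁻¹ = b := (inv_eq_of_mul_eq_one_right (of_sq 1))
lemma c_inv : c⁻¹ = c := (inv_eq_of_mul_eq_one_right (of_sq 2))

lemma ab_inv : (a * b)⁻¹ = b * a := by rw [mul_inv_rev, a_inv, b_inv]

lemma t_eq : t = c * (a * b) * c⁻¹ := by rw [c_inv, t, mul_assoc c a b]

lemma t_zpow (n : ℤ) : t ^ n = c * (a * b) ^ n * c := by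
  calc t ^ n = ((MulAut.conj c) (a * b)) ^ n := by rw [MulAut.conj_apply, ← t_eq]
  _ = (MulAut.conj c) ((a * b) ^ n) := (map_zpow _ _ _).symm
  _ = c * (a * b) ^ n * c := by rw [MulAut.conj_apply, c_inv]

lemma tn_smul {n : ℤ} (hn : n ≠ 0) {w : Word Mfam} {j : Fin 3} (hj : j ≠ 2)
    (hw : w.fstIdx = some j) : ((t ^ n) • w).fstIdx = some 2 := by
  have hcw : (c • w).fstIdx = some 2 := c_smul (by simp [hw, hj])
  have key : (((a * b) ^ n) • c • w).fstIdx = some 0 ∨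
      (((a * b) ^ n) • c • w).fstIdx = some 1 := by
    rcases hn.lt_or_gt with h | h
    · right
      obtain ⟨m, hm⟩ : ∃ m : ℕ, n = -((m + 1 : ℕ) : ℤ) := ⟨(-n).toNat - 1, by omega⟩
      have hab : (a * b) ^ n = (b * a) ^ (m + 1) := by
        rw [hm, zpow_neg, zpow_natCast, ← inv_pow, ab_inv]
      rw [hab]
      exact ba_pow_smul m _ hcw
    · left
      obtain ⟨m, hm⟩ : ∃ m : ℕ, n = ((m + 1 : ℕ) : ℤ) := ⟨n.toNat - 1, by omega⟩
      rw [hm, zpow_natCast]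
      exact ab_pow_smul m _ hcw
  have hts : (t ^ n) • w = c • ((a * b) ^ n) • c • w := by
    rw [t_zpow, mul_smul, mul_smul]
  rw [hts]
  rcases key with h | h
  · exact c_smul (by simp [h])
  · exact c_smul (by simp [h])


def Hfam : Fin 3 → Type
  | ⟨0, _⟩ => Z2
  | ⟨1, _⟩ => Z2
  | ⟨_ + 2, _⟩ => Multiplicative ℤ

instance instGroupHfam : ∀ i, Group (Hfam i)
  | ⟨0, _⟩ => inferInstanceAs (Group Z2)
  | ⟨1, _⟩ => inferInstanceAs (Group Z2)
  | ⟨_ + 2, _⟩ => inferInstanceAs (Group (Multiplicative ℤ))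

def F : ∀ i : Fin 3, Hfam i →* G
  | ⟨0, _⟩ => of (M := Mfam) (i := 0)
  | ⟨1, _⟩ => of (M := Mfam) (i := 1)
  | ⟨_ + 2, _⟩ => zpowersHom G t

lemma F_zero : F 0 = of (M := Mfam) (i := 0) := rfl
lemma F_one : F 1 = of (M := Mfam) (i := 1) := rfl
lemma F_two : F 2 = zpowersHom G t := rfl

abbrev D := Monoid.Coprod Z2 (Monoid.Coprod Z2 (Multiplicative ℤ))

def e : D →* CoprodI Hfam :=
  Coprod.lift (of (M := Hfam) (i := (0 : Fin 3)))
    (Coprod.lift (of (M := Hfam) (i := (1 : Fin 3))) (of (M := Hfam) (i := (2 : Fin 3))))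

def Ffam : ∀ i : Fin 3, Hfam i →* D
  | ⟨0, _⟩ => Coprod.inl
  | ⟨1, _⟩ => Coprod.inr.comp Coprod.inl
  | ⟨_ + 2, _⟩ => Coprod.inr.comp Coprod.inr

def φ : CoprodI Hfam →* D := CoprodI.lift (M := Hfam) (N := D) Ffam

lemma e_inl (x : Z2) : e (Coprod.inl x) = of (M := Hfam) (i := 0) x :=
  Coprod.lift_apply_inl _ _ x

lemma e_inr_inl (x : Z2) : e (Coprod.inr (Coprod.inl x)) = of (M := Hfam) (i := 1) x := by
  have h1 : e (Coprod.inr (Coprod.inl x)) =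
      Coprod.lift (of (M := Hfam) (i := (1 : Fin 3))) (of (M := Hfam) (i := (2 : Fin 3)))
        (Coprod.inl x) := Coprod.lift_apply_inr _ _ _
  rw [h1]
  exact Coprod.lift_apply_inl _ _ _

lemma e_inr_inr (x : Multiplicative ℤ) :
    e (Coprod.inr (Coprod.inr x)) = of (M := Hfam) (i := 2) x := by
  have h1 : e (Coprod.inr (Coprod.inr x)) =
      Coprod.lift (of (M := Hfam) (i := (1 : Fin 3))) (of (M := Hfam) (i := (2 : Fin 3)))
        (Coprod.inr x) := Coprod.lift_apply_inr _ _ _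
  rw [h1]
  exact Coprod.lift_apply_inr _ _ _

lemma Ffam_zero : Ffam 0 = Coprod.inl := rfl
lemma Ffam_one : Ffam 1 = Coprod.inr.comp Coprod.inl := rfl
lemma Ffam_two : Ffam 2 = Coprod.inr.comp Coprod.inr := rfl

lemma φ_of_zero (x : Z2) : φ (of (M := Hfam) (i := 0) x) = Coprod.inl x := by
  rw [show φ (of (M := Hfam) (i := 0) x) = Ffam 0 x from lift_of (M := Hfam) (N := D) (i := 0) Ffam x, Ffam_zero]
  rfl

lemma φ_of_one (x : Z2) : φ (of (M := Hfam) (i := 1) x) = Coprod.inr (Coprod.inl x) := by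
  rw [show φ (of (M := Hfam) (i := 1) x) = Ffam 1 x from lift_of (M := Hfam) (N := D) (i := 1) Ffam x, Ffam_one]
  rfl

lemma φ_of_two (x : Multiplicative ℤ) :
    φ (of (M := Hfam) (i := 2) x) = Coprod.inr (Coprod.inr x) := by
  rw [show φ (of (M := Hfam) (i := 2) x) = Ffam 2 x from lift_of (M := Hfam) (N := D) (i := 2) Ffam x, Ffam_two]
  rfl

lemma φ_e : ∀ x, φ (e x) = x := by
  have h : φ.comp e = MonoidHom.id D := by
    apply Coprod.hom_ext
    · refine MonoidHom.ext fun x => ?_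
      show φ (e (Coprod.inl x)) = Coprod.inl x
      rw [e_inl, φ_of_zero]
    · apply Coprod.hom_ext
      · refine MonoidHom.ext fun x => ?_
        show φ (e (Coprod.inr (Coprod.inl x))) = Coprod.inr (Coprod.inl x)
        rw [e_inr_inl, φ_of_one]
      · refine MonoidHom.ext fun x => ?_
        show φ (e (Coprod.inr (Coprod.inr x))) = Coprod.inr (Coprod.inr x)
        rw [e_inr_inr, φ_of_two]
  exact fun x => DFunLike.congr_fun h x

lemma e_injective : Function.Injective e :=
  Function.LeftInverse.injective φ_e

def X : Fin 3 → Set (Word Mfam) := fun i => {w | w.fstIdx = some i}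

lemma liftF_injective : Function.Injective (CoprodI.lift F) := by
  apply lift_injective_of_ping_pong F (Or.inl (by simp)) X
  · intro i
    exact ⟨Word.cons σ Word.empty (by simp [Word.fstIdx, Word.empty]) σ_ne_one,
      Word.fstIdx_cons (M := Mfam) σ Word.empty (by simp [Word.fstIdx, Word.empty]) σ_ne_one⟩
  · intro i j hij
    refine Set.disjoint_left.mpr ?_
    intro w hwi hwj
    rw [X, Set.mem_setOf_eq] at hwi hwj
    rw [hwi] at hwj
    exact hij (Option.some_injective _ hwj)
  · intro i j hij h hh x hx
    obtain ⟨w, hw, rfl⟩ := hx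
    rw [X, Set.mem_setOf_eq] at hw ⊢
    obtain ⟨iv, hiv⟩ := i
    interval_cases iv
    · obtain rfl : h = σ := eq_σ_of_ne_one h hh
      exact a_smul (by rw [hw]; exact fun e => hij (Option.some_injective _ e).symm)
    · obtain rfl : h = σ := eq_σ_of_ne_one h hh
      exact b_smul (by rw [hw]; exact fun e => hij (Option.some_injective _ e).symm)
    · show ((zpowersHom G t) h • w).fstIdx = some ⟨2, hiv⟩
      erw [zpowersHom_apply]
      have hn : toAdd (show Multiplicative ℤ from h) ≠ 0 := by
        intro e
        exact hh (congrArg (ofAdd (α := ℤ)) e)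
      exact tn_smul hn (fun e => hij (by subst e; rfl)) hw


lemma liftF_of_zero (x : Z2) :
    CoprodI.lift F (of (M := Hfam) (i := 0) x) = of (M := Mfam) (i := 0) x := by
  rw [show (CoprodI.lift F) (of (M := Hfam) (i := 0) x) = F 0 x from
    lift_of (M := Hfam) (N := G) (i := 0) F x, F_zero]
  rfl

lemma liftF_of_one (x : Z2) :
    CoprodI.lift F (of (M := Hfam) (i := 1) x) = of (M := Mfam) (i := 1) x := by
  rw [show (CoprodI.lift F) (of (M := Hfam) (i := 1) x) = F 1 x from
    lift_of (M := Hfam) (N := G) (i := 1) F x, F_one]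
  rfl

lemma liftF_of_two (x : Multiplicative ℤ) :
    CoprodI.lift F (of (M := Hfam) (i := 2) x) = t ^ toAdd x := by
  rw [show (CoprodI.lift F) (of (M := Hfam) (i := 2) x) = F 2 x from
    lift_of (M := Hfam) (N := G) (i := 2) F x, F_two]
  rfl

end Statement16Aux

open Statement16Aux in
/-- There is an injective group homomorphism from ℤ/2 ∗ ℤ/2 ∗ ℤ into the free
product G = ℤ/2 ∗ ℤ/2 ∗ ℤ/2 (with σᵢ the images in G of the nontrivial elements of
the three factors), sending the nontrivial elements of the two ℤ/2 factors to σ₀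
and σ₁, and the generator of ℤ to σ₂σ₀σ₁σ₂. -/
theorem statement16 :
    ∃ f : Monoid.Coprod (Multiplicative (ZMod 2))
        (Monoid.Coprod (Multiplicative (ZMod 2)) (Multiplicative ℤ)) →*
        Monoid.CoprodI (fun _ : Fin 3 => Multiplicative (ZMod 2)),
      Function.Injective f ∧
      f (Monoid.Coprod.inl (Multiplicative.ofAdd (1 : ZMod 2))) =
        Monoid.CoprodI.of (M := fun _ : Fin 3 => Multiplicative (ZMod 2)) (i := 0)
          (Multiplicative.ofAdd (1 : ZMod 2)) ∧
      f (Monoid.Coprod.inr (Monoid.Coprod.inl (Multiplicative.ofAdd (1 : ZMod 2)))) =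
        Monoid.CoprodI.of (M := fun _ : Fin 3 => Multiplicative (ZMod 2)) (i := 1)
          (Multiplicative.ofAdd (1 : ZMod 2)) ∧
      f (Monoid.Coprod.inr (Monoid.Coprod.inr (Multiplicative.ofAdd (1 : ℤ)))) =
        Monoid.CoprodI.of (M := fun _ : Fin 3 => Multiplicative (ZMod 2)) (i := 2)
            (Multiplicative.ofAdd (1 : ZMod 2)) *
          Monoid.CoprodI.of (M := fun _ : Fin 3 => Multiplicative (ZMod 2)) (i := 0)
            (Multiplicative.ofAdd (1 : ZMod 2)) *
          Monoid.CoprodI.of (M := fun _ : Fin 3 => Multiplicative (ZMod 2)) (i := 1)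
            (Multiplicative.ofAdd (1 : ZMod 2)) *
          Monoid.CoprodI.of (M := fun _ : Fin 3 => Multiplicative (ZMod 2)) (i := 2)
            (Multiplicative.ofAdd (1 : ZMod 2)) := by
  refine ⟨(Monoid.CoprodI.lift F).comp e, ?_, ?_, ?_, ?_⟩
  · exact liftF_injective.comp e_injective
  · show Monoid.CoprodI.lift F (e (Monoid.Coprod.inl (Multiplicative.ofAdd (1 : ZMod 2)))) = _
    rw [e_inl, liftF_of_zero]
  · show Monoid.CoprodI.lift F
      (e (Monoid.Coprod.inr (Monoid.Coprod.inl (Multiplicative.ofAdd (1 : ZMod 2))))) = _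
    rw [e_inr_inl, liftF_of_one]
  · show Monoid.CoprodI.lift F
      (e (Monoid.Coprod.inr (Monoid.Coprod.inr (Multiplicative.ofAdd (1 : ℤ))))) = _
    rw [e_inr_inr, liftF_of_two, toAdd_ofAdd, zpow_one]
    rfl
end

section
/- Let a and b denote the images in (ℤ/3ℤ) ∗ (ℤ/3ℤ) of fixed generators of the two cyclic factors of order 3. Then the group homomorphism from the free group F_3 on three generators to (ℤ/3ℤ) ∗ (ℤ/3ℤ) sending the three generators to aba, bab, and a b² a² b respectively is injective; that is, the elements aba, bab, a b² a² b generate a free subgroup of rank 3. -/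
open Monoid Multiplicative Pointwise

noncomputable section PingPong

abbrev M3 := Multiplicative (ZMod 3)
abbrev Fam : Bool → Type := fun _ => M3
abbrev T3 := Monoid.CoprodI Fam
abbrev Λ3 := (Σ b : Bool, Fam b)

def u1 : M3 := ofAdd 1
def u2 : M3 := ofAdd 2

/-- left multiplication by a single letter on reduced words, at list level -/
def mulL (b : Bool) (m : M3) : List Λ3 → List Λ3
  | [] => [⟨b, m⟩]
  | (⟨b', m'⟩ :: t) =>
    if b' = b then (if m * m' = 1 then t else ⟨b, m * m'⟩ :: t)
    else ⟨b, m⟩ :: ⟨b', m'⟩ :: t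

lemma h11 : u1 * u1 = u2 := by decide
lemma h12 : u1 * u2 = 1 := by decide
lemma h21 : u2 * u1 = 1 := by decide
lemma h22 : u2 * u2 = u1 := by decide
lemma hu1 : u1 ≠ 1 := by decide
lemma hu2 : u2 ≠ 1 := by decide
lemma tri (m : M3) : m = 1 ∨ m = u1 ∨ m = u2 := by revert m; decide

theorem smul_toList (b : Bool) (m : M3) (hm : m ≠ 1) (w : Monoid.CoprodI.Word Fam) :
    ((Monoid.CoprodI.of (M := Fam) (i := b) m) • w).toList = mulL b m w.toList := by
  induction w using Monoid.CoprodI.Word.consRecOn with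
  | empty =>
    rw [Monoid.CoprodI.Word.of_smul_def, Monoid.CoprodI.Word.equivPair_eq_of_fstIdx_ne
      (by simp [Monoid.CoprodI.Word.fstIdx])]
    simp [Monoid.CoprodI.Word.rcons, hm, Monoid.CoprodI.Word.cons, mulL]
  | cons j m' t h1 h2 ih =>
    by_cases hj : j = b
    · subst hj
      have hpair : Monoid.CoprodI.Word.equivPair j (Monoid.CoprodI.Word.cons m' t h1 h2) =
          ⟨m', t, h1⟩ := by
        rw [Monoid.CoprodI.Word.cons_eq_smul, Monoid.CoprodI.Word.equivPair_smul_same,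
          Monoid.CoprodI.Word.equivPair_eq_of_fstIdx_ne h1]
        simp
      rw [Monoid.CoprodI.Word.of_smul_def, hpair]
      by_cases hmm : m * m' = 1
      · simp [Monoid.CoprodI.Word.rcons, hmm, mulL]
      · simp [Monoid.CoprodI.Word.rcons, hmm, mulL, Monoid.CoprodI.Word.cons]
    · rw [Monoid.CoprodI.Word.of_smul_def, Monoid.CoprodI.Word.equivPair_eq_of_fstIdx_ne
        (by simp [Monoid.CoprodI.Word.fstIdx, Monoid.CoprodI.Word.cons, hj])]
      simp [Monoid.CoprodI.Word.rcons, hm, Monoid.CoprodI.Word.cons, mulL, hj]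

-- the six ping-pong list computations

section ListLemmas

variable (L : List Λ3)

lemma keyX0 (hne : ∀ l ∈ L, l.2 ≠ 1)
    (hY : ¬ ∃ t, L = ⟨false, u2⟩ :: t) :
    ∃ t, mulL false u1 (mulL true u1 (mulL false u1 L)) = ⟨false, u1⟩ :: ⟨true, u1⟩ :: t := by
  match L with
  | [] => exact ⟨[⟨false, u1⟩], by simp [mulL]⟩
  | ⟨true, m1⟩ :: t1 => exact ⟨⟨false, u1⟩ :: ⟨true, m1⟩ :: t1, by simp [mulL]⟩
  | ⟨false, m1⟩ :: t1 =>
    rcases tri m1 with rfl | rfl | rfl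
    · exact absurd rfl (hne _ (List.mem_cons_self))
    · exact ⟨⟨false, u2⟩ :: t1, by simp [mulL, h11, hu2]⟩
    · exact absurd ⟨t1, rfl⟩ hY

lemma keyY0 (hne : ∀ l ∈ L, l.2 ≠ 1)
    (hch : L.Chain' fun l l' => l.1 ≠ l'.1)
    (hX : ¬ ∃ t, L = ⟨false, u1⟩ :: ⟨true, u1⟩ :: t) :
    ∃ t, mulL false u2 (mulL true u2 (mulL false u2 L)) = ⟨false, u2⟩ :: t := by
  match L with
  | [] => exact ⟨[⟨true, u2⟩, ⟨false, u2⟩], by simp [mulL]⟩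
  | ⟨true, m1⟩ :: t1 => exact ⟨⟨true, u2⟩ :: ⟨false, u2⟩ :: ⟨true, m1⟩ :: t1, by simp [mulL]⟩
  | ⟨false, m1⟩ :: t1 =>
    rcases tri m1 with rfl | rfl | rfl
    · exact absurd rfl (hne _ (List.mem_cons_self))
    · -- cancellation : result is mulL false u2 (mulL true u2 t1)
      match t1 with
      | [] => exact ⟨[⟨true, u2⟩], by simp [mulL, h21]⟩
      | ⟨false, m2⟩ :: t2 => exact absurd rfl (List.isChain_cons_cons.mp hch).1
      | ⟨true, m2⟩ :: t2 =>
        rcases tri m2 with rfl | rfl | rfl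
        · exact absurd rfl (hne _ (List.mem_cons_of_mem _ (List.mem_cons_self)))
        · exact absurd ⟨t2, rfl⟩ hX
        · exact ⟨⟨true, u1⟩ :: t2, by simp [mulL, h21, h22, hu1]⟩
    · exact ⟨⟨true, u2⟩ :: ⟨false, u1⟩ :: t1, by simp [mulL, h22, hu1]⟩

lemma keyX1 (hne : ∀ l ∈ L, l.2 ≠ 1)
    (hch : L.Chain' fun l l' => l.1 ≠ l'.1)
    (hY : ¬ (L = [⟨true, u2⟩] ∨ ∃ t, L = ⟨true, u2⟩ :: ⟨false, u2⟩ :: t)) :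
    ∃ t, mulL true u1 (mulL false u1 (mulL true u1 L)) = ⟨true, u1⟩ :: t := by
  match L with
  | [] => exact ⟨[⟨false, u1⟩, ⟨true, u1⟩], by simp [mulL]⟩
  | ⟨false, m1⟩ :: t1 => exact ⟨⟨false, u1⟩ :: ⟨true, u1⟩ :: ⟨false, m1⟩ :: t1, by simp [mulL]⟩
  | ⟨true, m1⟩ :: t1 =>
    rcases tri m1 with rfl | rfl | rfl
    · exact absurd rfl (hne _ (List.mem_cons_self))
    · exact ⟨⟨false, u1⟩ :: ⟨true, u2⟩ :: t1, by simp [mulL, h11, hu2]⟩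
    · -- cancellation
      match t1 with
      | [] => exact absurd (Or.inl rfl) hY
      | ⟨true, m2⟩ :: t2 => exact absurd rfl (List.isChain_cons_cons.mp hch).1
      | ⟨false, m2⟩ :: t2 =>
        rcases tri m2 with rfl | rfl | rfl
        · exact absurd rfl (hne _ (List.mem_cons_of_mem _ (List.mem_cons_self)))
        · exact ⟨⟨false, u2⟩ :: t2, by simp [mulL, h12, h11, hu2]⟩
        · exact absurd (Or.inr ⟨t2, rfl⟩) hY

lemma keyY1 (hne : ∀ l ∈ L, l.2 ≠ 1)
    (hX : ¬ ∃ t, L = ⟨true, u1⟩ :: t) :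
    mulL true u2 (mulL false u2 (mulL true u2 L)) = [⟨true, u2⟩] ∨
      ∃ t, mulL true u2 (mulL false u2 (mulL true u2 L)) = ⟨true, u2⟩ :: ⟨false, u2⟩ :: t := by
  match L with
  | [] => exact Or.inr ⟨[⟨true, u2⟩], by simp [mulL]⟩
  | ⟨false, m1⟩ :: t1 =>
    exact Or.inr ⟨⟨true, u2⟩ :: ⟨false, m1⟩ :: t1, by simp [mulL]⟩
  | ⟨true, m1⟩ :: t1 =>
    rcases tri m1 with rfl | rfl | rfl
    · exact absurd rfl (hne _ (List.mem_cons_self))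
    · exact absurd ⟨t1, rfl⟩ hX
    · exact Or.inr ⟨⟨true, u1⟩ :: t1, by simp [mulL, h22, hu1]⟩

lemma keyX2 (hne : ∀ l ∈ L, l.2 ≠ 1)
    (hch : L.Chain' fun l l' => l.1 ≠ l'.1)
    (hY : ¬ ∃ t, L = ⟨true, u2⟩ :: ⟨false, u1⟩ :: t) :
    ∃ t, mulL false u1 (mulL true u2 (mulL false u2 (mulL true u1 L))) =
      ⟨false, u1⟩ :: ⟨true, u2⟩ :: t := by
  match L with
  | [] => exact ⟨[⟨false, u2⟩, ⟨true, u1⟩], by simp [mulL]⟩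
  | ⟨false, m1⟩ :: t1 =>
    exact ⟨⟨false, u2⟩ :: ⟨true, u1⟩ :: ⟨false, m1⟩ :: t1, by simp [mulL]⟩
  | ⟨true, m1⟩ :: t1 =>
    rcases tri m1 with rfl | rfl | rfl
    · exact absurd rfl (hne _ (List.mem_cons_self))
    · exact ⟨⟨false, u2⟩ :: ⟨true, u2⟩ :: t1, by simp [mulL, h11, hu2]⟩
    · -- cancellation
      match t1 with
      | [] => exact ⟨[⟨false, u2⟩], by simp [mulL, h12]⟩
      | ⟨true, m2⟩ :: t2 => exact absurd rfl (List.isChain_cons_cons.mp hch).1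
      | ⟨false, m2⟩ :: t2 =>
        rcases tri m2 with rfl | rfl | rfl
        · exact absurd rfl (hne _ (List.mem_cons_of_mem _ (List.mem_cons_self)))
        · exact absurd ⟨t2, rfl⟩ hY
        · exact ⟨⟨false, u1⟩ :: t2, by simp [mulL, h12, h22, hu1]⟩

lemma keyY2 (hne : ∀ l ∈ L, l.2 ≠ 1)
    (hch : L.Chain' fun l l' => l.1 ≠ l'.1)
    (hX : ¬ ∃ t, L = ⟨false, u1⟩ :: ⟨true, u2⟩ :: t) :
    ∃ t, mulL true u2 (mulL false u1 (mulL true u1 (mulL false u2 L))) =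
      ⟨true, u2⟩ :: ⟨false, u1⟩ :: t := by
  match L with
  | [] => exact ⟨[⟨true, u1⟩, ⟨false, u2⟩], by simp [mulL]⟩
  | ⟨true, m1⟩ :: t1 =>
    exact ⟨⟨true, u1⟩ :: ⟨false, u2⟩ :: ⟨true, m1⟩ :: t1, by simp [mulL]⟩
  | ⟨false, m1⟩ :: t1 =>
    rcases tri m1 with rfl | rfl | rfl
    · exact absurd rfl (hne _ (List.mem_cons_self))
    · -- cancellation
      match t1 with
      | [] => exact ⟨[⟨true, u1⟩], by simp [mulL, h21]⟩
      | ⟨false, m2⟩ :: t2 => exact absurd rfl (List.isChain_cons_cons.mp hch).1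
      | ⟨true, m2⟩ :: t2 =>
        rcases tri m2 with rfl | rfl | rfl
        · exact absurd rfl (hne _ (List.mem_cons_of_mem _ (List.mem_cons_self)))
        · exact ⟨⟨true, u2⟩ :: t2, by simp [mulL, h21, h11, hu2]⟩
        · exact absurd ⟨t2, rfl⟩ hX
    · exact ⟨⟨true, u1⟩ :: ⟨false, u1⟩ :: t1, by simp [mulL, h22, hu1]⟩

end ListLemmas



-- group elements
def gA : T3 := Monoid.CoprodI.of (M := Fam) (i := false) u1
def gA' : T3 := Monoid.CoprodI.of (M := Fam) (i := false) u2
def gB : T3 := Monoid.CoprodI.of (M := Fam) (i := true) u1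
def gB' : T3 := Monoid.CoprodI.of (M := Fam) (i := true) u2

lemma gA_inv : gA⁻¹ = gA' := by
  rw [gA, gA', ← map_inv]; exact congrArg _ (by decide)
lemma gB_inv : gB⁻¹ = gB' := by
  rw [gB, gB', ← map_inv]; exact congrArg _ (by decide)
lemma gA'_inv : gA'⁻¹ = gA := by
  rw [gA, gA', ← map_inv]; exact congrArg _ (by decide)
lemma gB'_inv : gB'⁻¹ = gB := by
  rw [gB, gB', ← map_inv]; exact congrArg _ (by decide)

-- ping-pong sets
def X0 : Set (Monoid.CoprodI.Word Fam) :=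
  {w | ∃ t, w.toList = ⟨false, u1⟩ :: ⟨true, u1⟩ :: t}
def X1 : Set (Monoid.CoprodI.Word Fam) := {w | ∃ t, w.toList = ⟨true, u1⟩ :: t}
def X2 : Set (Monoid.CoprodI.Word Fam) :=
  {w | ∃ t, w.toList = ⟨false, u1⟩ :: ⟨true, u2⟩ :: t}
def Y0 : Set (Monoid.CoprodI.Word Fam) := {w | ∃ t, w.toList = ⟨false, u2⟩ :: t}
def Y1 : Set (Monoid.CoprodI.Word Fam) :=
  {w | w.toList = [⟨true, u2⟩] ∨ ∃ t, w.toList = ⟨true, u2⟩ :: ⟨false, u2⟩ :: t}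
def Y2 : Set (Monoid.CoprodI.Word Fam) :=
  {w | ∃ t, w.toList = ⟨true, u2⟩ :: ⟨false, u1⟩ :: t}

def Xs : Fin 3 → Set (Monoid.CoprodI.Word Fam) := ![X0, X1, X2]
def Ys : Fin 3 → Set (Monoid.CoprodI.Word Fam) := ![Y0, Y1, Y2]

-- disjointness helper
lemma disj_fun {α β : Type*} (f : α → β) {s t : Set α} {x y : β}
    (hs : ∀ w ∈ s, f w = x) (ht : ∀ w ∈ t, f w = y) (hxy : x ≠ y) : Disjoint s t :=
  Set.disjoint_left.mpr fun w hw hw' => hxy ((hs w hw).symm.trans (ht w hw'))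

lemma hdX0 : ∀ w ∈ X0, w.toList.head? = some ⟨false, u1⟩ := by rintro w ⟨t, h⟩; rw [h]; rfl
lemma hdX1 : ∀ w ∈ X1, w.toList.head? = some ⟨true, u1⟩ := by rintro w ⟨t, h⟩; rw [h]; rfl
lemma hdX2 : ∀ w ∈ X2, w.toList.head? = some ⟨false, u1⟩ := by rintro w ⟨t, h⟩; rw [h]; rfl
lemma hdY0 : ∀ w ∈ Y0, w.toList.head? = some ⟨false, u2⟩ := by rintro w ⟨t, h⟩; rw [h]; rfl
lemma hdY1 : ∀ w ∈ Y1, w.toList.head? = some ⟨true, u2⟩ := by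
  rintro w (h | ⟨t, h⟩) <;> rw [h] <;> rfl
lemma hdY2 : ∀ w ∈ Y2, w.toList.head? = some ⟨true, u2⟩ := by rintro w ⟨t, h⟩; rw [h]; rfl

lemma tk2X0 : ∀ w ∈ X0, w.toList.take 2 = [⟨false, u1⟩, ⟨true, u1⟩] := by
  rintro w ⟨t, h⟩; rw [h]; rfl
lemma tk2X2 : ∀ w ∈ X2, w.toList.take 2 = [⟨false, u1⟩, ⟨true, u2⟩] := by
  rintro w ⟨t, h⟩; rw [h]; rfl

lemma hXdisj : Pairwise (Function.onFun Disjoint Xs) := by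
  have d01 : Disjoint X0 X1 := disj_fun (fun w => w.toList.head?) hdX0 hdX1 (by decide)
  have d02 : Disjoint X0 X2 := disj_fun (fun w => w.toList.take 2) tk2X0 tk2X2 (by decide)
  have d12 : Disjoint X1 X2 := disj_fun (fun w => w.toList.head?) hdX1 hdX2 (by decide)
  intro i j hij
  fin_cases i <;> fin_cases j <;>
    simp_all [Xs, Function.onFun, d01, d02, d12, d01.symm, d02.symm, d12.symm]

lemma hYdisj : Pairwise (Function.onFun Disjoint Ys) := by
  have d01 : Disjoint Y0 Y1 := disj_fun (fun w => w.toList.head?) hdY0 hdY1 (by decide)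
  have d02 : Disjoint Y0 Y2 := disj_fun (fun w => w.toList.head?) hdY0 hdY2 (by decide)
  have d12 : Disjoint Y1 Y2 := by
    apply Set.disjoint_left.mpr
    rintro w (h | ⟨t, h⟩) ⟨s, h'⟩ <;> rw [h] at h' <;> simp at h'
    · exact absurd h'.1 (by decide)
  intro i j hij
  fin_cases i <;> fin_cases j <;>
    simp_all [Ys, Function.onFun, d01, d02, d12, d01.symm, d02.symm, d12.symm]

lemma hXYdisj : ∀ i j, Disjoint (Xs i) (Ys j) := by
  have h00 : Disjoint X0 Y0 := disj_fun (fun w => w.toList.head?) hdX0 hdY0 (by decide)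
  have h01 : Disjoint X0 Y1 := disj_fun (fun w => w.toList.head?) hdX0 hdY1 (by decide)
  have h02 : Disjoint X0 Y2 := disj_fun (fun w => w.toList.head?) hdX0 hdY2 (by decide)
  have h10 : Disjoint X1 Y0 := disj_fun (fun w => w.toList.head?) hdX1 hdY0 (by decide)
  have h11' : Disjoint X1 Y1 := disj_fun (fun w => w.toList.head?) hdX1 hdY1 (by decide)
  have h12 : Disjoint X1 Y2 := disj_fun (fun w => w.toList.head?) hdX1 hdY2 (by decide)
  have h20 : Disjoint X2 Y0 := disj_fun (fun w => w.toList.head?) hdX2 hdY0 (by decide)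
  have h21' : Disjoint X2 Y1 := disj_fun (fun w => w.toList.head?) hdX2 hdY1 (by decide)
  have h22' : Disjoint X2 Y2 := disj_fun (fun w => w.toList.head?) hdX2 hdY2 (by decide)
  intro i j
  fin_cases i <;> fin_cases j <;> simp_all [Xs, Ys]

lemma hXnonempty : ∀ i, (Xs i).Nonempty := by
  intro i
  fin_cases i
  · exact ⟨⟨[⟨false, u1⟩, ⟨true, u1⟩], by decide,
      by simp [List.isChain_cons_cons, List.isChain_singleton]⟩, ⟨[], rfl⟩⟩
  · exact ⟨⟨[⟨true, u1⟩], by decide, List.isChain_singleton _⟩, ⟨[], rfl⟩⟩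
  · exact ⟨⟨[⟨false, u1⟩, ⟨true, u2⟩], by decide,
      by simp [List.isChain_cons_cons, List.isChain_singleton]⟩, ⟨[], rfl⟩⟩

-- gens and ping-pong conditions (to be appended after parts 1,2)
def gens : Fin 3 → T3 := fun i =>
  if i = 0 then gA * gB * gA
  else if i = 1 then gB * gA * gB
  else gA * gB' * gA' * gB

lemma hXcond : ∀ i, gens i • (Ys i)ᶜ ⊆ Xs i := by
  intro i
  rintro x ⟨w, hw, rfl⟩
  fin_cases i
  · simp only [Ys, Set.mem_compl_iff, Matrix.cons_val_zero, Y0, Set.mem_setOf_eq] at hw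
    obtain ⟨t, ht⟩ := keyX0 w.toList w.ne_one hw
    show (gens 0) • w ∈ X0
    rw [show gens 0 = gA * gB * gA from rfl, mul_smul, mul_smul]
    exact ⟨t, by
      rw [gA, gB, smul_toList false u1 hu1, smul_toList true u1 hu1,
        smul_toList false u1 hu1]; exact ht⟩
  · simp only [Ys, Set.mem_compl_iff, Matrix.cons_val_one, Matrix.head_cons, Y1,
      Set.mem_setOf_eq] at hw
    obtain ⟨t, ht⟩ := keyX1 w.toList w.ne_one w.chain_ne hw
    show (gens 1) • w ∈ X1
    rw [show gens 1 = gB * gA * gB from rfl, mul_smul, mul_smul]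
    exact ⟨t, by
      rw [gA, gB, smul_toList true u1 hu1, smul_toList false u1 hu1,
        smul_toList true u1 hu1]; exact ht⟩
  · simp only [Ys, Set.mem_compl_iff, Y2, Set.mem_setOf_eq, Matrix.cons_val_two,
      Matrix.tail_cons, Matrix.head_cons] at hw
    obtain ⟨t, ht⟩ := keyX2 w.toList w.ne_one w.chain_ne hw
    show (gens 2) • w ∈ X2
    rw [show gens 2 = gA * gB' * gA' * gB from rfl, mul_smul, mul_smul, mul_smul]
    exact ⟨t, by
      rw [gA, gB, gA', gB', smul_toList false u1 hu1, smul_toList true u2 hu2,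
        smul_toList false u2 hu2, smul_toList true u1 hu1]; exact ht⟩

lemma hYcond : ∀ i, gens⁻¹ i • (Xs i)ᶜ ⊆ Ys i := by
  intro i
  rintro x ⟨w, hw, rfl⟩
  fin_cases i
  · simp only [Xs, Set.mem_compl_iff, Matrix.cons_val_zero, X0, Set.mem_setOf_eq] at hw
    obtain ⟨t, ht⟩ := keyY0 w.toList w.ne_one w.chain_ne hw
    show (gens⁻¹ 0) • w ∈ Y0
    have hinv : gens⁻¹ 0 = gA' * (gB' * gA') := by
      rw [Pi.inv_apply, show gens 0 = gA * gB * gA from rfl, mul_inv_rev, mul_inv_rev,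
        gA_inv, gB_inv]
    rw [hinv, mul_smul, mul_smul]
    exact ⟨t, by
      rw [gA', gB', smul_toList false u2 hu2, smul_toList true u2 hu2,
        smul_toList false u2 hu2]; exact ht⟩
  · simp only [Xs, Set.mem_compl_iff, Matrix.cons_val_one, Matrix.head_cons, X1,
      Set.mem_setOf_eq] at hw
    have h := keyY1 w.toList w.ne_one hw
    show (gens⁻¹ 1) • w ∈ Y1
    have hinv : gens⁻¹ 1 = gB' * (gA' * gB') := by
      rw [Pi.inv_apply, show gens 1 = gB * gA * gB from rfl, mul_inv_rev, mul_inv_rev,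
        gA_inv, gB_inv]
    rw [hinv, mul_smul, mul_smul]
    have hl : ((gB' • (gA' • (gB' • w))).toList) =
        mulL true u2 (mulL false u2 (mulL true u2 w.toList)) := by
      rw [gA', gB', smul_toList true u2 hu2, smul_toList false u2 hu2,
        smul_toList true u2 hu2]
    rcases h with h | ⟨t, ht⟩
    · exact Or.inl (by rw [hl]; exact h)
    · exact Or.inr ⟨t, by rw [hl]; exact ht⟩
  · simp only [Xs, Set.mem_compl_iff, X2, Set.mem_setOf_eq, Matrix.cons_val_two,
      Matrix.tail_cons, Matrix.head_cons] at hw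
    obtain ⟨t, ht⟩ := keyY2 w.toList w.ne_one w.chain_ne hw
    show (gens⁻¹ 2) • w ∈ Y2
    have hinv : gens⁻¹ 2 = gB' * (gA * (gB * gA')) := by
      rw [Pi.inv_apply, show gens 2 = gA * gB' * gA' * gB from rfl, mul_inv_rev, mul_inv_rev,
        mul_inv_rev, gA_inv, gB_inv, gA'_inv, gB'_inv]
    rw [hinv, mul_smul, mul_smul, mul_smul]
    exact ⟨t, by
      rw [gA, gB, gA', gB', smul_toList true u2 hu2, smul_toList false u1 hu1,
        smul_toList true u1 hu1, smul_toList false u2 hu2]; exact ht⟩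

lemma lift_gens_injective : Function.Injective (FreeGroup.lift gens) :=
  FreeGroup.injective_lift_of_ping_pong gens Xs Ys hXnonempty hXdisj hYdisj hXYdisj
    hXcond hYcond

-- transfer to the binary coproduct

def phiH : T3 →* Monoid.Coprod M3 M3 :=
  Monoid.CoprodI.lift (fun b => bif b then Monoid.Coprod.inr else Monoid.Coprod.inl)

def psiH : Monoid.Coprod M3 M3 →* T3 :=
  Monoid.Coprod.lift (Monoid.CoprodI.of (M := Fam) (i := false))
    (Monoid.CoprodI.of (M := Fam) (i := true))

lemma psi_phi : psiH.comp phiH = MonoidHom.id T3 := by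
  apply Monoid.CoprodI.ext_hom
  intro b
  cases b <;> ext m <;>
    simp [phiH, psiH, Monoid.CoprodI.lift_of, Monoid.Coprod.lift_apply_inl,
      Monoid.Coprod.lift_apply_inr]

lemma phi_inj : Function.Injective phiH :=
  Function.LeftInverse.injective (g := psiH) fun x => DFunLike.congr_fun psi_phi x

end PingPong

noncomputable section

/-- a, the image in ℤ/3 ∗ ℤ/3 of a fixed generator of the first factor. -/
def genA : Monoid.Coprod (Multiplicative (ZMod 3)) (Multiplicative (ZMod 3)) :=
  Monoid.Coprod.inl (Multiplicative.ofAdd (1 : ZMod 3))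

/-- b, the image in ℤ/3 ∗ ℤ/3 of a fixed generator of the second factor. -/
def genB : Monoid.Coprod (Multiplicative (ZMod 3)) (Multiplicative (ZMod 3)) :=
  Monoid.Coprod.inr (Multiplicative.ofAdd (1 : ZMod 3))

lemma genA_sq : (Monoid.Coprod.inl (ofAdd (1 : ZMod 3)) :
    Monoid.Coprod M3 M3) ^ 2 = Monoid.Coprod.inl (ofAdd (2 : ZMod 3)) := by
  rw [← map_pow]; exact congrArg _ (by decide)

lemma genB_sq : (Monoid.Coprod.inr (ofAdd (1 : ZMod 3)) :
    Monoid.Coprod M3 M3) ^ 2 = Monoid.Coprod.inr (ofAdd (2 : ZMod 3)) := by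
  rw [← map_pow]; exact congrArg _ (by decide)

/-- The homomorphism F₃ → ℤ/3 ∗ ℤ/3 sending the three free generators to
aba, bab and ab²a²b is injective; i.e. these elements generate a free subgroup
of rank 3. -/
theorem statement17 :
    Function.Injective
      (FreeGroup.lift (fun i : Fin 3 =>
        if i = 0 then genA * genB * genA
        else if i = 1 then genB * genA * genB
        else genA * genB ^ 2 * genA ^ 2 * genB) :
      FreeGroup (Fin 3) →*
        Monoid.Coprod (Multiplicative (ZMod 3)) (Multiplicative (ZMod 3))) := by
  have key : (FreeGroup.lift (fun i : Fin 3 =>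
        if i = 0 then genA * genB * genA
        else if i = 1 then genB * genA * genB
        else genA * genB ^ 2 * genA ^ 2 * genB) :
      FreeGroup (Fin 3) →*
        Monoid.Coprod (Multiplicative (ZMod 3)) (Multiplicative (ZMod 3))) =
      phiH.comp (FreeGroup.lift gens) := by
    apply FreeGroup.ext_hom
    intro i
    fin_cases i <;>
      simp [gens, phiH, genA, genB, genA_sq, genB_sq, gA, gB, gA', gB',
        Monoid.CoprodI.lift_of, u1, u2]
  rw [key, MonoidHom.coe_comp]
  exact phi_inj.comp lift_gens_injective

end
end
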